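/- arXiv:1608.00950 — 9 statements merged into one kernel-verified Lean document; each statement's English description precedes it below -/
import Mathlib

section
/- Let U ⊆ ℂ be open and let K ⊆ U be compact. Then there exist finitely many closed axis-parallel squares Q₁, …, Q_M ⊆ U with pairwise disjoint interiors such that K is contained in the interior of Q₁ ∪ ⋯ ∪ Q_M, and for every holomorphic function f on U the following hold: (a) for every z in the interior of some Q_j, (1/(2πi)) Σ_{i=1}^{M} ∮_{∂Q_i} f(ζ)/(ζ − z) dζ = f(z); (b) for every z ∈ U \ (Q₁ ∪ ⋯ ∪ Q_M), the sum Σ_{i=1}^{M} ∮_{∂Q_i} f(ζ)/(ζ − z) dζ = 0. -/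
open Complex

/-- The closed axis-parallel square `[a, a+s] × [b, b+s]`, viewed as a subset of `ℂ`. -/
def closedSquare (a b s : ℝ) : Set ℂ :=
  {z : ℂ | z.re ∈ Set.Icc a (a + s) ∧ z.im ∈ Set.Icc b (b + s)}

/-- The positively oriented boundary integral of `g` along the boundary of the closed
axis-parallel square `[a, a+s] × [b, b+s]`. -/
noncomputable def squareBoundaryIntegral (a b s : ℝ) (g : ℂ → ℂ) : ℂ :=
  (∫ x in a..(a + s), g (x + b * Complex.I))
    + Complex.I * (∫ y in b..(b + s), g ((a + s) + y * Complex.I))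
    - (∫ x in a..(a + s), g (x + (b + s) * Complex.I))
    - Complex.I * (∫ y in b..(b + s), g (a + y * Complex.I))

lemma closedSquare_eq (a b s : ℝ) :
    closedSquare a b s = Set.Icc a (a + s) ×ℂ Set.Icc b (b + s) := by
  ext z; simp [closedSquare, Complex.mem_reProdIm]

lemma mem_interior_closedSquare {a b s : ℝ} {z : ℂ} :
    z ∈ interior (closedSquare a b s) ↔
      (a < z.re ∧ z.re < a + s) ∧ (b < z.im ∧ z.im < b + s) := by
  rw [closedSquare_eq, Complex.interior_reProdIm, interior_Icc, interior_Icc,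
    Complex.mem_reProdIm]
  simp [Set.mem_Ioo]

lemma sbi_eq_zero {a b s : ℝ} (hs : 0 ≤ s) {g : ℂ → ℂ}
    (hg : DifferentiableOn ℂ g (closedSquare a b s)) :
    squareBoundaryIntegral a b s g = 0 := by
  have ha : a ≤ a + s := by linarith
  have hb : b ≤ b + s := by linarith
  have h := Complex.integral_boundary_rect_eq_zero_of_differentiableOn g
      (⟨a, b⟩ : ℂ) (⟨a + s, b + s⟩ : ℂ) ?_
  · dsimp only at h
    simp only [smul_eq_mul] at h
    unfold squareBoundaryIntegral
    push_cast at h ⊢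
    linear_combination h
  · dsimp only
    rw [Set.uIcc_of_le ha, Set.uIcc_of_le hb, ← closedSquare_eq]
    exact hg

lemma log_neg_of_im_neg {w : ℂ} (h : w.im < 0) :
    Complex.log (-w) = Complex.log w + Real.pi * I := by
  apply Complex.ext
  · simp [Complex.log_re]
  · simp [Complex.log_im, Complex.arg_neg_eq_arg_add_pi_of_im_neg h]

lemma log_neg_of_im_pos {w : ℂ} (h : 0 < w.im) :
    Complex.log (-w) = Complex.log w - Real.pi * I := by
  apply Complex.ext
  · simp [Complex.log_re]
  · simp [Complex.log_im, Complex.arg_neg_eq_arg_sub_pi_of_im_pos h]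

lemma integral_inv_horizontal {u v : ℝ} {c : ℂ} (hc : c.im ≠ 0) :
    ∫ x in u..v, ((x : ℂ) + c)⁻¹ =
      Complex.log ((v : ℂ) + c) - Complex.log ((u : ℂ) + c) := by
  have hne : ∀ x : ℝ, ((x : ℂ) + c) ≠ 0 := by
    intro x h0
    apply hc
    have := congrArg Complex.im h0
    simpa using this
  apply intervalIntegral.integral_eq_sub_of_hasDerivAt
  · intro x _
    have hmem : ((x : ℂ) + c) ∈ Complex.slitPlane := Or.inr (by simpa using hc)
    have h1 : HasDerivAt (fun w : ℂ => Complex.log (w + c)) (((x : ℂ) + c)⁻¹) (x : ℂ) := by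
      simpa [Function.comp_def] using (Complex.hasDerivAt_log hmem).comp (x : ℂ)
        ((hasDerivAt_id ((x : ℂ))).add_const c)
    exact h1.comp_ofReal
  · apply ContinuousOn.intervalIntegrable
    exact ((Complex.continuous_ofReal.add continuous_const).continuousOn).inv₀
      fun x _ => hne x

lemma integral_inv_vertical_pos {u v : ℝ} {c : ℂ} (hc : 0 < c.re) :
    ∫ y in u..v, (c + (y : ℂ) * I)⁻¹ =
      (-I * Complex.log (c + (v : ℂ) * I)) - (-I * Complex.log (c + (u : ℂ) * I)) := by
  have hne : ∀ y : ℝ, (c + (y : ℂ) * I) ≠ 0 := by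
    intro y h0
    have := congrArg Complex.re h0
    simp at this
    linarith
  apply intervalIntegral.integral_eq_sub_of_hasDerivAt
  · intro y _
    have hmem : (c + (y : ℂ) * I) ∈ Complex.slitPlane := Or.inl (by simpa using hc)
    have h1 : HasDerivAt (fun w : ℂ => -I * Complex.log (c + w * I))
        (-I * ((c + (y : ℂ) * I)⁻¹ * (1 * I))) (y : ℂ) :=
      (((Complex.hasDerivAt_log hmem).comp (y : ℂ)
        (((hasDerivAt_id ((y : ℂ))).mul_const I).const_add c))).const_mul (-I)
    have h2 := h1.comp_ofReal
    exact h2.congr_deriv (by linear_combination -(c + (y : ℂ) * I)⁻¹ * Complex.I_mul_I)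
  · apply ContinuousOn.intervalIntegrable
    exact ((continuous_const.add (Complex.continuous_ofReal.mul continuous_const)).continuousOn).inv₀
      fun y _ => hne y

lemma integral_inv_vertical_neg {u v : ℝ} {c : ℂ} (hc : c.re < 0) :
    ∫ y in u..v, (c + (y : ℂ) * I)⁻¹ =
      (-I * Complex.log (-(c + (v : ℂ) * I))) - (-I * Complex.log (-(c + (u : ℂ) * I))) := by
  have hne : ∀ y : ℝ, (c + (y : ℂ) * I) ≠ 0 := by
    intro y h0
    have := congrArg Complex.re h0
    simp at this
    linarith
  apply intervalIntegral.integral_eq_sub_of_hasDerivAt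
  · intro y _
    have hmem : (-(c + (y : ℂ) * I)) ∈ Complex.slitPlane := Or.inl (by simpa using hc)
    have h1 : HasDerivAt (fun w : ℂ => -I * Complex.log (-(c + w * I)))
        (-I * ((-(c + (y : ℂ) * I))⁻¹ * (-(1 * I)))) (y : ℂ) :=
      (((Complex.hasDerivAt_log hmem).comp (y : ℂ)
        ((((hasDerivAt_id ((y : ℂ))).mul_const I).const_add c).neg))).const_mul (-I)
    have h2 := h1.comp_ofReal
    exact h2.congr_deriv (by rw [inv_neg]; linear_combination -(c + (y : ℂ) * I)⁻¹ * Complex.I_mul_I)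
  · apply ContinuousOn.intervalIntegrable
    exact ((continuous_const.add (Complex.continuous_ofReal.mul continuous_const)).continuousOn).inv₀
      fun y _ => hne y

lemma sbi_inv {a b s : ℝ} {z : ℂ} (hz : z ∈ interior (closedSquare a b s)) :
    squareBoundaryIntegral a b s (fun ζ => (ζ - z)⁻¹) = 2 * Real.pi * I := by
  rw [mem_interior_closedSquare] at hz
  obtain ⟨⟨h1, h2⟩, h3, h4⟩ := hz
  unfold squareBoundaryIntegral
  have hB : (∫ x in a..(a + s), ((x : ℂ) + (b : ℂ) * I - z)⁻¹) =
      Complex.log ((a + s : ℝ) + (b : ℂ) * I - z) - Complex.log ((a : ℝ) + (b : ℂ) * I - z) := by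
    have h := integral_inv_horizontal (u := a) (v := a + s) (c := (b : ℂ) * I - z)
      (by simp; linarith)
    simpa only [add_sub_assoc] using h
  have hT : (∫ x in a..(a + s), ((x : ℂ) + ((b : ℝ) + s : ℝ) * I - z)⁻¹) =
      Complex.log ((a + s : ℝ) + ((b + s : ℝ) : ℂ) * I - z)
        - Complex.log ((a : ℝ) + ((b + s : ℝ) : ℂ) * I - z) := by
    have h := integral_inv_horizontal (u := a) (v := a + s) (c := ((b + s : ℝ) : ℂ) * I - z)
      (by simp; linarith)
    simpa only [add_sub_assoc] using h
  have hR : (∫ y in b..(b + s), (((a + s : ℝ) : ℂ) + (y : ℂ) * I - z)⁻¹) =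
      (-I * Complex.log (((a + s : ℝ) : ℂ) + ((b + s : ℝ) : ℂ) * I - z))
        - (-I * Complex.log (((a + s : ℝ) : ℂ) + (b : ℂ) * I - z)) := by
    have h := integral_inv_vertical_pos (u := b) (v := b + s) (c := ((a + s : ℝ) : ℂ) - z)
      (by simp; linarith)
    simpa only [sub_add_eq_add_sub] using h
  have hL : (∫ y in b..(b + s), (((a : ℝ) : ℂ) + (y : ℂ) * I - z)⁻¹) =
      (-I * Complex.log (-(((a : ℝ) : ℂ) + ((b + s : ℝ) : ℂ) * I - z)))
        - (-I * Complex.log (-(((a : ℝ) : ℂ) + (b : ℂ) * I - z))) := by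
    have h := integral_inv_vertical_neg (u := b) (v := b + s) (c := ((a : ℝ) : ℂ) - z)
      (by simp; linarith)
    simpa only [sub_add_eq_add_sub] using h
  have hn1 : Complex.log (-(((a : ℝ) : ℂ) + (b : ℂ) * I - z)) =
      Complex.log (((a : ℝ) : ℂ) + (b : ℂ) * I - z) + Real.pi * I :=
    log_neg_of_im_neg (by simp; linarith)
  have hn4 : Complex.log (-(((a : ℝ) : ℂ) + ((b + s : ℝ) : ℂ) * I - z)) =
      Complex.log (((a : ℝ) : ℂ) + ((b + s : ℝ) : ℂ) * I - z) - Real.pi * I :=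
    log_neg_of_im_pos (by simp; linarith)
  dsimp only
  push_cast at hB hT hR hL hn1 hn4 ⊢
  rw [hB, hT, hR, hL, hn1, hn4]
  linear_combination (Complex.log ((a : ℂ) + (s : ℂ) + (b : ℂ) * I - z)
      - Complex.log ((a : ℂ) + (s : ℂ) + ((b : ℂ) + (s : ℂ)) * I - z)
      + Complex.log ((a : ℂ) + ((b : ℂ) + (s : ℂ)) * I - z)
      - Complex.log ((a : ℂ) + (b : ℂ) * I - z)
      - 2 * Real.pi * I) * Complex.I_mul_I

lemma seg_decomp {a b s : ℝ} {f : ℂ → ℂ} {z : ℂ} (L : ℝ → ℂ) (hL : Continuous L)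
    (u v : ℝ) (hmem : ∀ x ∈ Set.uIcc u v, L x ∈ closedSquare a b s)
    (hne : ∀ x ∈ Set.uIcc u v, L x ≠ z)
    (hcont : ContinuousOn (dslope f z) (closedSquare a b s)) :
    ∫ x in u..v, f (L x) / (L x - z) =
      (∫ x in u..v, dslope f z (L x)) + f z * ∫ x in u..v, (L x - z)⁻¹ := by
  have hi1 : IntervalIntegrable (fun x => dslope f z (L x)) MeasureTheory.volume u v :=
    (hcont.comp hL.continuousOn hmem).intervalIntegrable
  have hi2 : IntervalIntegrable (fun x => f z * (L x - z)⁻¹) MeasureTheory.volume u v := by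
    apply ContinuousOn.intervalIntegrable
    exact continuousOn_const.mul (((hL.sub continuous_const).continuousOn).inv₀
      fun x hx => sub_ne_zero.mpr (hne x hx))
  rw [← intervalIntegral.integral_const_mul, ← intervalIntegral.integral_add hi1 hi2]
  apply intervalIntegral.integral_congr
  intro x hx
  have h := hne x hx
  dsimp only
  rw [dslope_of_ne f h, slope_def_field]
  have h' : L x - z ≠ 0 := sub_ne_zero.mpr h
  field_simp
  ring

lemma sbi_cauchy {U : Set ℂ} (hU : IsOpen U) {f : ℂ → ℂ} (hf : DifferentiableOn ℂ f U)
    {a b s : ℝ} (hs : 0 < s) (hQ : closedSquare a b s ⊆ U) {z : ℂ}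
    (hz : z ∈ interior (closedSquare a b s)) :
    squareBoundaryIntegral a b s (fun ζ => f ζ / (ζ - z)) = 2 * Real.pi * I * f z := by
  have hzU : z ∈ U := hQ (interior_subset hz)
  have hds : DifferentiableOn ℂ (dslope f z) (closedSquare a b s) :=
    ((Complex.differentiableOn_dslope (hU.mem_nhds hzU)).2 hf).mono hQ
  have h0 : squareBoundaryIntegral a b s (dslope f z) = 0 := sbi_eq_zero hs.le hds
  have hw : squareBoundaryIntegral a b s (fun ζ => (ζ - z)⁻¹) = 2 * Real.pi * I := sbi_inv hz
  rw [mem_interior_closedSquare] at hz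
  obtain ⟨⟨h1, h2⟩, h3, h4⟩ := hz
  have ha : a ≤ a + s := by linarith
  have hb : b ≤ b + s := by linarith
  have hcont := hds.continuousOn
  have hB := seg_decomp (f := f) (z := z) (fun x : ℝ => (x : ℂ) + (b : ℂ) * I)
    (by continuity) a (a + s)
    (fun x hx => by
      rw [Set.uIcc_of_le ha, Set.mem_Icc] at hx
      simp only [closedSquare, Set.mem_setOf_eq, Set.mem_Icc]
      refine ⟨⟨?_, ?_⟩, ?_, ?_⟩ <;> simp <;> linarith [hx.1, hx.2, hs.le])
    (fun x hx => by
      intro hzz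
      have := congrArg Complex.im hzz
      simp at this; linarith)
    hcont
  have hT := seg_decomp (f := f) (z := z) (fun x : ℝ => (x : ℂ) + ((b : ℂ) + (s : ℂ)) * I)
    (by continuity) a (a + s)
    (fun x hx => by
      rw [Set.uIcc_of_le ha, Set.mem_Icc] at hx
      simp only [closedSquare, Set.mem_setOf_eq, Set.mem_Icc]
      refine ⟨⟨?_, ?_⟩, ?_, ?_⟩ <;> simp <;> linarith [hx.1, hx.2, hs.le])
    (fun x hx => by
      intro hzz
      have := congrArg Complex.im hzz
      simp at this; linarith)
    hcont
  have hR := seg_decomp (f := f) (z := z) (fun y : ℝ => ((a : ℂ) + (s : ℂ)) + (y : ℂ) * I)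
    (by continuity) b (b + s)
    (fun y hy => by
      rw [Set.uIcc_of_le hb, Set.mem_Icc] at hy
      simp only [closedSquare, Set.mem_setOf_eq, Set.mem_Icc]
      refine ⟨⟨?_, ?_⟩, ?_, ?_⟩ <;> simp <;> linarith [hy.1, hy.2, hs.le])
    (fun y hy => by
      intro hzz
      have := congrArg Complex.re hzz
      simp at this; linarith)
    hcont
  have hL := seg_decomp (f := f) (z := z) (fun y : ℝ => (a : ℂ) + (y : ℂ) * I)
    (by continuity) b (b + s)
    (fun y hy => by
      rw [Set.uIcc_of_le hb, Set.mem_Icc] at hy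
      simp only [closedSquare, Set.mem_setOf_eq, Set.mem_Icc]
      refine ⟨⟨?_, ?_⟩, ?_, ?_⟩ <;> simp <;> linarith [hy.1, hy.2, hs.le])
    (fun y hy => by
      intro hzz
      have := congrArg Complex.re hzz
      simp at this; linarith)
    hcont
  unfold squareBoundaryIntegral at h0 hw ⊢
  dsimp only at h0 hw hB hT hR hL ⊢
  push_cast at h0 hw hB hT hR hL ⊢
  rw [hB, hT, hR, hL]
  linear_combination h0 + f z * hw

lemma sbi_zero_of_notMem {U : Set ℂ} {f : ℂ → ℂ} (hf : DifferentiableOn ℂ f U)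
    {a b s : ℝ} (hs : 0 ≤ s) (hQ : closedSquare a b s ⊆ U) {z : ℂ}
    (hz : z ∉ closedSquare a b s) :
    squareBoundaryIntegral a b s (fun ζ => f ζ / (ζ - z)) = 0 := by
  apply sbi_eq_zero hs
  exact (hf.mono hQ).div (differentiableOn_id.sub (differentiableOn_const z))
    fun ζ hζ => sub_ne_zero.mpr (ne_of_mem_of_not_mem hζ hz)

-- separation of distinct grid squares
lemma grid_sep {δ : ℝ} (hδ : 0 < δ) {p q : ℤ × ℤ} (hpq : p ≠ q) {w : ℂ}
    (h1 : w ∈ interior (closedSquare (p.1 * δ) (p.2 * δ) δ))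
    (h2 : w ∈ closedSquare (q.1 * δ) (q.2 * δ) δ) : False := by
  rw [mem_interior_closedSquare] at h1
  obtain ⟨⟨h1a, h1b⟩, h1c, h1d⟩ := h1
  obtain ⟨⟨h2a, h2b⟩, h2c, h2d⟩ := h2
  have hcase : p.1 ≠ q.1 ∨ p.2 ≠ q.2 := by
    by_contra h
    push_neg at h
    exact hpq (Prod.ext h.1 h.2)
  rcases hcase with h | h
  · rcases h.lt_or_gt with hlt | hlt
    · have : (p.1 : ℝ) + 1 ≤ q.1 := by exact_mod_cast hlt
      nlinarith
    · have : (q.1 : ℝ) + 1 ≤ p.1 := by exact_mod_cast hlt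
      nlinarith
  · rcases h.lt_or_gt with hlt | hlt
    · have : (p.2 : ℝ) + 1 ≤ q.2 := by exact_mod_cast hlt
      nlinarith
    · have : (q.2 : ℝ) + 1 ≤ p.2 := by exact_mod_cast hlt
      nlinarith

/-- **Cauchy's integral formula for compact sets (square version).** For every open
`U ⊆ ℂ` and compact `K ⊆ U` there are finitely many closed axis-parallel squares
`Q₁, …, Q_M ⊆ U` with pairwise disjoint interiors, whose union contains `K` in its
interior, such that for every holomorphic `f` on `U` the sum of the boundary integrals
of `f(ζ)/(ζ - z)` reproduces `2πi·f(z)` for `z` in the interior of some `Q_j` and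
vanishes for `z ∈ U` outside the union of the squares. -/
theorem cauchy_integral_formula_compact (U : Set ℂ) (hU : IsOpen U)
    (K : Set ℂ) (hK : IsCompact K) (hKU : K ⊆ U) :
    ∃ (M : ℕ) (a b s : Fin M → ℝ),
      (∀ j, 0 < s j) ∧
      (∀ j, closedSquare (a j) (b j) (s j) ⊆ U) ∧
      (Pairwise fun j k =>
        interior (closedSquare (a j) (b j) (s j)) ∩
          interior (closedSquare (a k) (b k) (s k)) = ∅) ∧
      K ⊆ interior (⋃ j, closedSquare (a j) (b j) (s j)) ∧
      ∀ f : ℂ → ℂ, DifferentiableOn ℂ f U →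
        (∀ z : ℂ, (∃ j, z ∈ interior (closedSquare (a j) (b j) (s j))) →
          (2 * Real.pi * Complex.I)⁻¹ *
            ∑ j, squareBoundaryIntegral (a j) (b j) (s j) (fun ζ => f ζ / (ζ - z)) = f z) ∧
        (∀ z ∈ U \ ⋃ j, closedSquare (a j) (b j) (s j),
          ∑ j, squareBoundaryIntegral (a j) (b j) (s j) (fun ζ => f ζ / (ζ - z)) = 0) := by
  obtain ⟨ε, hε, hthick⟩ := hK.exists_thickening_subset_open hU hKU
  set δ := ε / 3 with hδdef
  have hδ : 0 < δ := by positivity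
  set T := Metric.thickening δ K with hTdef
  set S : Set (ℤ × ℤ) :=
    {p | (closedSquare (p.1 * δ) (p.2 * δ) δ ∩ T).Nonempty} with hSdef
  have hsubU : ∀ p ∈ S, closedSquare (p.1 * δ) (p.2 * δ) δ ⊆ U := by
    intro p hp q hq
    obtain ⟨r, hrQ, hrT⟩ := hp
    obtain ⟨k, hk, hrk⟩ := Metric.mem_thickening_iff.1 hrT
    apply hthick
    rw [Metric.mem_thickening_iff]
    refine ⟨k, hk, ?_⟩
    have hq1 := hq.1; have hq2 := hq.2; have hr1 := hrQ.1; have hr2 := hrQ.2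
    rw [Set.mem_Icc] at hq1 hq2 hr1 hr2
    have hd : dist q r ≤ 2 * δ := by
      have heq : dist q r = ‖q - r‖ := dist_eq_norm q r
      rw [heq]
      calc ‖q - r‖ ≤ |(q - r).re| + |(q - r).im| :=
            Complex.norm_le_abs_re_add_abs_im _
        _ ≤ δ + δ := by
            have hre : |(q - r).re| ≤ δ := by
              rw [Complex.sub_re, abs_le]; constructor <;> linarith
            have him : |(q - r).im| ≤ δ := by
              rw [Complex.sub_im, abs_le]; constructor <;> linarith
            linarith
        _ = 2 * δ := by ring
    calc dist q k ≤ dist q r + dist r k := dist_triangle _ _ _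
      _ < 2 * δ + δ := by linarith
      _ = ε := by rw [hδdef]; ring
  obtain ⟨R, hR⟩ := hK.isBounded.subset_closedBall 0
  set N : ℤ := ⌈(R + 2 * δ) / δ⌉ with hNdef
  have hNδ : R + 2 * δ ≤ (N : ℝ) * δ := by
    have h := Int.le_ceil ((R + 2 * δ) / δ)
    have h2 := mul_le_mul_of_nonneg_right h hδ.le
    rw [div_mul_cancel₀ _ hδ.ne'] at h2
    exact h2
  have hbound : ∀ p ∈ S, p.1 ∈ Finset.Icc (-N) N ∧ p.2 ∈ Finset.Icc (-N) N := by
    intro p hp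
    obtain ⟨q, hqQ, hqT⟩ := hp
    obtain ⟨k, hk, hqk⟩ := Metric.mem_thickening_iff.1 hqT
    have hkR : dist k (0 : ℂ) ≤ R := Metric.mem_closedBall.1 (hR hk)
    have habs : ‖q‖ < R + δ := by
      have h1 : dist q (0 : ℂ) ≤ dist q k + dist k 0 := dist_triangle _ _ _
      have h2 : dist q (0 : ℂ) = ‖q‖ := by simp [Complex.dist_eq]
      linarith
    have hre : |q.re| < R + δ := lt_of_le_of_lt (Complex.abs_re_le_norm q) habs
    have him : |q.im| < R + δ := lt_of_le_of_lt (Complex.abs_im_le_norm q) habs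
    rw [abs_lt] at hre him
    have hq1 := hqQ.1; have hq2 := hqQ.2
    rw [Set.mem_Icc] at hq1 hq2
    have key : ∀ m : ℤ, (m : ℝ) * δ ≤ R + δ → -(R + 2 * δ) ≤ (m : ℝ) * δ →
        m ∈ Finset.Icc (-N) N := by
      intro m hm1 hm2
      rw [Finset.mem_Icc]
      constructor
      · have : (-N : ℝ) * δ ≤ (m : ℝ) * δ := by push_cast; nlinarith
        have := le_of_mul_le_mul_right this hδ
        exact_mod_cast this
      · have : (m : ℝ) * δ ≤ (N : ℝ) * δ := by nlinarith
        have := le_of_mul_le_mul_right this hδ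
        exact_mod_cast this
    constructor
    · exact key p.1 (by linarith [hq1.1, hq1.2, hre.2]) (by linarith [hq1.1, hq1.2, hre.1])
    · exact key p.2 (by linarith [hq2.1, hq2.2, him.2]) (by linarith [hq2.1, hq2.2, him.1])
  have hSfin : S.Finite := by
    apply Set.Finite.subset (Finset.Icc (-N) N ×ˢ Finset.Icc (-N) N).finite_toSet
    intro p hp
    have h := hbound p hp
    simp only [Finset.coe_product, Set.mem_prod, Finset.mem_coe]
    exact h
  set F := hSfin.toFinset with hFdef
  set M := F.card with hMdef
  set e : { x // x ∈ F } ≃ Fin M := F.equivFin with hedef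
  set P : Fin M → ℤ × ℤ := fun j => (e.symm j : ℤ × ℤ) with hPdef
  have hPS : ∀ j, P j ∈ S := fun j => hSfin.mem_toFinset.1 (e.symm j).2
  have hPinj : Function.Injective P := by
    intro j k h
    have : e.symm j = e.symm k := Subtype.ext h
    exact e.symm.injective this
  refine ⟨M, fun j => ((P j).1 : ℝ) * δ, fun j => ((P j).2 : ℝ) * δ, fun _ => δ,
    fun _ => hδ, fun j => hsubU _ (hPS j), ?_, ?_, ?_⟩
  · intro j k hjk
    rw [Set.eq_empty_iff_forall_notMem]
    rintro w ⟨hw1, hw2⟩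
    exact grid_sep hδ (fun h => hjk (hPinj h)) hw1 (interior_subset hw2)
  · intro z hz
    have hball : Metric.ball z δ ⊆ ⋃ j, closedSquare (((P j).1 : ℝ) * δ) (((P j).2 : ℝ) * δ) δ := by
      intro w hw
      have hwT : w ∈ T := Metric.mem_thickening_iff.2 ⟨z, hz, Metric.mem_ball.1 hw⟩
      set p : ℤ × ℤ := (⌊w.re / δ⌋, ⌊w.im / δ⌋) with hpdef
      have hcoord : ∀ t : ℝ, (⌊t / δ⌋ : ℝ) * δ ≤ t ∧ t ≤ (⌊t / δ⌋ : ℝ) * δ + δ := by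
        intro t
        have h1 : (⌊t / δ⌋ : ℝ) ≤ t / δ := Int.floor_le _
        have h2 : t / δ < ⌊t / δ⌋ + 1 := Int.lt_floor_add_one _
        have h1' := mul_le_mul_of_nonneg_right h1 hδ.le
        have h2' := mul_le_mul_of_nonneg_right h2.le hδ.le
        rw [div_mul_cancel₀ _ hδ.ne'] at h1' h2'
        constructor
        · exact h1'
        · nlinarith
      have hwQ : w ∈ closedSquare ((p.1 : ℝ) * δ) ((p.2 : ℝ) * δ) δ := by
        refine ⟨Set.mem_Icc.2 ⟨?_, ?_⟩, Set.mem_Icc.2 ⟨?_, ?_⟩⟩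
        · exact (hcoord w.re).1
        · exact (hcoord w.re).2
        · exact (hcoord w.im).1
        · exact (hcoord w.im).2
      have hpS : p ∈ S := ⟨w, hwQ, hwT⟩
      refine Set.mem_iUnion.2 ⟨e ⟨p, hSfin.mem_toFinset.2 hpS⟩, ?_⟩
      have hPapp : P (e ⟨p, hSfin.mem_toFinset.2 hpS⟩) = p := by
        rw [hPdef]
        simp [Equiv.symm_apply_apply]
      rw [hPapp]
      exact hwQ
    have hzball : z ∈ Metric.ball z δ := Metric.mem_ball_self hδ
    exact interior_maximal hball Metric.isOpen_ball hzball
  · intro f hf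
    have hQsub : ∀ j, closedSquare (((P j).1 : ℝ) * δ) (((P j).2 : ℝ) * δ) δ ⊆ U :=
      fun j => hsubU _ (hPS j)
    constructor
    · rintro z ⟨j, hzj⟩
      have hsum : ∑ k, squareBoundaryIntegral (((P k).1 : ℝ) * δ) (((P k).2 : ℝ) * δ) δ
          (fun ζ => f ζ / (ζ - z)) = 2 * Real.pi * I * f z := by
        rw [Finset.sum_eq_single_of_mem j (Finset.mem_univ j)]
        · exact sbi_cauchy hU hf hδ (hQsub j) hzj
        · intro k _ hkj
          apply sbi_zero_of_notMem hf hδ.le (hQsub k)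
          intro hzQ
          exact grid_sep hδ (fun h => hkj (hPinj h.symm)) hzj hzQ
      rw [hsum, ← mul_assoc, inv_mul_cancel₀, one_mul]
      exact mul_ne_zero (mul_ne_zero two_ne_zero
        (Complex.ofReal_ne_zero.2 Real.pi_ne_zero)) Complex.I_ne_zero
    · rintro z ⟨hzU, hzn⟩
      apply Finset.sum_eq_zero
      intro k _
      apply sbi_zero_of_notMem hf hδ.le (hQsub k)
      intro hzQ
      exact hzn (Set.mem_iUnion.2 ⟨k, hzQ⟩)
end

section
/- Let n ≥ 2 and let q₁, …, qₙ ∈ (0,1). Define the Hartogs figure 𝓗(q₁,…,qₙ) = {z ∈ Δⁿ : |z₁| > q₁, or |z_i| < q_i for all i ∈ {2,…,n}}, where Δⁿ is the open unit polydisc. Then every holomorphic function f on 𝓗(q₁,…,qₙ) has a unique holomorphic extension F to Δⁿ, i.e. F is holomorphic on Δⁿ and F = f on 𝓗(q₁,…,qₙ). -/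
open Metric Complex Set

local notation "cabs" => (norm : ℂ → ℝ)

variable {m : ℕ}

lemma update_eq_affine (x : Fin m → ℂ) (i : Fin m) :
    (fun ζ : ℂ => Function.update x i ζ)
      = fun ζ : ℂ => x + (ζ - x i) • (Pi.single i 1 : Fin m → ℂ) := by
  funext ζ; funext j
  rcases eq_or_ne j i with rfl | hj
  · simp
  · simp [Function.update_of_ne hj, Pi.single_eq_of_ne hj]

lemma hasDerivAt_update' (x : Fin m → ℂ) (i : Fin m) (ζ : ℂ) :
    HasDerivAt (fun ζ : ℂ => Function.update x i ζ) (Pi.single i 1 : Fin m → ℂ) ζ := by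
  rw [update_eq_affine]
  simpa using (((hasDerivAt_id ζ).sub_const (x i)).smul_const
    (Pi.single i 1 : Fin m → ℂ)).const_add x

/-- Cauchy estimate in several variables. -/
lemma fderiv_norm_le_of_bound {U : Set (Fin m → ℂ)} {f : (Fin m → ℂ) → ℂ}
    (hU : IsOpen U) (hf : DifferentiableOn ℂ f U) {p : Fin m → ℂ} {δ M : ℝ}
    (hδ : 0 < δ) (hsub : closedBall p (2 * δ) ⊆ U)
    (hbd : ∀ w ∈ closedBall p (2 * δ), ‖f w‖ ≤ M)
    {x : Fin m → ℂ} (hx : x ∈ ball p δ) :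
    ‖fderiv ℂ f x‖ ≤ m * (2 * M / δ) := by
  have hxU : DifferentiableAt ℂ f x :=
    hf.differentiableAt (hU.mem_nhds (hsub (ball_subset_closedBall.trans
      (closedBall_subset_closedBall (by linarith)) hx)))
  have hslice : ∀ i : Fin m, ∀ ζ ∈ ball (x i) δ, Function.update x i ζ ∈ closedBall p (2 * δ) := by
    intro i ζ hζ
    rw [mem_closedBall, dist_pi_le_iff (by linarith)]
    intro j
    rcases eq_or_ne j i with rfl | hj
    · simp only [Function.update_self]
      calc dist ζ (p j) ≤ dist ζ (x j) + dist (x j) (p j) := dist_triangle _ _ _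
        _ ≤ δ + δ := add_le_add (mem_ball.mp hζ).le
            ((dist_le_pi_dist x p j).trans (mem_ball.mp hx).le)
        _ = 2 * δ := by ring
    · simp only [Function.update_of_ne hj]
      exact (dist_le_pi_dist x p j).trans ((mem_ball.mp hx).le.trans (by linarith))
  have hder : ∀ i : Fin m, ‖fderiv ℂ f x (Pi.single i 1)‖ ≤ 2 * M / δ := by
    intro i
    set g : ℂ → ℂ := fun ζ => f (Function.update x i ζ) with hg
    have hgd : DifferentiableOn ℂ g (ball (x i) δ) := by
      intro ζ hζ
      have h1 : DifferentiableAt ℂ f (Function.update x i ζ) :=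
        hf.differentiableAt (hU.mem_nhds (hsub (hslice i ζ hζ)))
      exact (h1.comp ζ (hasDerivAt_update' x i ζ).differentiableAt).differentiableWithinAt
    have hDco : HasDerivAt g (fderiv ℂ f x (Pi.single i 1)) (x i) := by
      have h1 : HasFDerivAt f (fderiv ℂ f x) (Function.update x i (x i)) := by
        rw [Function.update_eq_self]; exact hxU.hasFDerivAt
      exact h1.comp_hasDerivAt (x i) (hasDerivAt_update' x i (x i))
    have hbd' : ∀ ζ ∈ sphere (x i) (δ / 2), ‖g ζ‖ ≤ M := by
      intro ζ hζ
      rw [mem_sphere] at hζ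
      exact hbd _ (hslice i ζ (by rw [mem_ball, hζ]; linarith))
    have hdc : DiffContOnCl ℂ g (ball (x i) (δ / 2)) := by
      refine ⟨hgd.mono (ball_subset_ball (by linarith)), (hgd.continuousOn).mono ?_⟩
      rw [closure_ball (x i) (by positivity : (δ:ℝ)/2 ≠ 0)]
      exact closedBall_subset_ball (by linarith)
    have := Complex.norm_deriv_le_of_forall_mem_sphere_norm_le
      (by positivity : 0 < δ / 2) hdc hbd'
    rw [hDco.deriv] at this
    calc ‖fderiv ℂ f x (Pi.single i 1)‖ ≤ M / (δ / 2) := this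
      _ = 2 * M / δ := by field_simp
  have hM0 : 0 ≤ 2 * M / δ := by
    have h0 : (0:ℝ) ≤ M := le_trans (norm_nonneg _) (hbd p (mem_closedBall_self (by linarith)))
    positivity
  refine ContinuousLinearMap.opNorm_le_bound _ (by positivity) fun v => ?_
  have hv : v = ∑ i : Fin m, (v i) • (Pi.single i 1 : Fin m → ℂ) := by
    funext j
    rw [Finset.sum_apply]
    simp [Pi.single_apply, eq_comm]
  conv_lhs => rw [hv]
  rw [map_sum]
  calc ‖∑ i : Fin m, fderiv ℂ f x ((v i) • (Pi.single i 1 : Fin m → ℂ))‖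
      ≤ ∑ i : Fin m, ‖fderiv ℂ f x ((v i) • (Pi.single i 1 : Fin m → ℂ))‖ :=
        norm_sum_le _ _
    _ ≤ ∑ _i : Fin m, (2 * M / δ) * ‖v‖ := by
        refine Finset.sum_le_sum fun i _ => ?_
        rw [map_smul, norm_smul]
        calc ‖v i‖ * ‖fderiv ℂ f x (Pi.single i 1)‖
            ≤ ‖v‖ * (2 * M / δ) :=
              mul_le_mul (norm_le_pi_norm v i) (hder i) (norm_nonneg _) (norm_nonneg _)
          _ = (2 * M / δ) * ‖v‖ := mul_comm _ _
    _ = m * (2 * M / δ) * ‖v‖ := by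
        rw [Finset.sum_const, Finset.card_univ, Fintype.card_fin, nsmul_eq_mul]; ring

/-- Lipschitz estimate from the Cauchy estimate. -/
lemma norm_sub_le_of_bound {U : Set (Fin m → ℂ)} {f : (Fin m → ℂ) → ℂ}
    (hU : IsOpen U) (hf : DifferentiableOn ℂ f U) {p : Fin m → ℂ} {δ M : ℝ}
    (hδ : 0 < δ) (hsub : closedBall p (2 * δ) ⊆ U)
    (hbd : ∀ w ∈ closedBall p (2 * δ), ‖f w‖ ≤ M)
    {a b : Fin m → ℂ} (ha : a ∈ ball p δ) (hb : b ∈ ball p δ) :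
    ‖f a - f b‖ ≤ m * (2 * M / δ) * ‖a - b‖ := by
  refine (convex_ball p δ).norm_image_sub_le_of_norm_hasFDerivWithin_le
    (f' := fun x => (fderiv ℂ f x).restrictScalars ℝ) (fun x hx => ?_) (fun x hx => ?_) hb ha
  · have hxU : DifferentiableAt ℂ f x :=
      hf.differentiableAt (hU.mem_nhds (hsub (ball_subset_closedBall.trans
        (closedBall_subset_closedBall (by linarith)) hx)))
    exact (hxU.hasFDerivAt.restrictScalars ℝ).hasFDerivWithinAt
  · rw [ContinuousLinearMap.norm_restrictScalars]
    exact fderiv_norm_le_of_bound hU hf hδ hsub hbd hx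


open intervalIntegral Real

lemma abs_sub_abs_le' (a b : ℂ) : cabs a - cabs b ≤ cabs (a - b) := by
  simpa using norm_sub_norm_le a b

lemma abs_le_abs_add_dist (a b : ℂ) : cabs a ≤ cabs b + dist a b := by
  rw [Complex.dist_eq]
  calc cabs a = cabs (b + (a - b)) := by congr 1; ring
    _ ≤ cabs b + cabs (a - b) := norm_add_le _ _

lemma isOpen_polylt {k : ℕ} (c : Fin k → ℝ) :
    IsOpen {w : Fin k → ℂ | ∀ i, cabs (w i) < c i} := by
  have : {w : Fin k → ℂ | ∀ i, cabs (w i) < c i}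
      = ⋂ i, {w : Fin k → ℂ | cabs (w i) < c i} := by ext w; simp
  rw [this]
  exact isOpen_iInter_of_finite fun i =>
    isOpen_lt (continuous_norm.comp (continuous_apply i)) continuous_const

set_option maxHeartbeats 1600000 in
lemma cauchyTransform_differentiableOn {q0 r : ℝ} {f : (Fin (m+1) → ℂ) → ℂ}
    (hq00 : 0 ≤ q0) (hq0r : q0 < r) (hr1 : r < 1)
    (hf : DifferentiableOn ℂ f {w : Fin (m+1) → ℂ | q0 < cabs (w 0) ∧ ∀ i, cabs (w i) < 1}) :
    DifferentiableOn ℂ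
      (fun z => (2 * π * I : ℂ)⁻¹ • ∮ ζ in C(0, r), (ζ - z 0)⁻¹ • f (Function.update z 0 ζ))
      {z : Fin (m+1) → ℂ | cabs (z 0) < r ∧ ∀ i, cabs (z i) < 1} := by
  have hr0 : 0 < r := lt_of_le_of_lt hq00 hq0r
  set H' : Set (Fin (m+1) → ℂ) :=
    {w | q0 < cabs (w 0) ∧ ∀ i, cabs (w i) < 1} with hH'
  have hH'o : IsOpen H' := by
    have h1 : IsOpen {w : Fin (m+1) → ℂ | q0 < cabs (w 0)} :=
      isOpen_lt continuous_const (continuous_norm.comp (continuous_apply 0))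
    have h2 := isOpen_polylt (fun _ : Fin (m+1) => (1:ℝ))
    exact h1.inter h2
  have hfc : ContinuousOn f H' := hf.continuousOn
  intro x₀ hx₀
  obtain ⟨hx0, hx⟩ := hx₀
  -- constants
  set r₁ : ℝ := (max (cabs (x₀ 0)) q0 + r) / 2 with hr₁def
  have hmaxlt : max (cabs (x₀ 0)) q0 < r := max_lt hx0 hq0r
  have hr₁a : cabs (x₀ 0) < r₁ := by
    have := le_max_left (cabs (x₀ 0)) q0
    simp only [hr₁def]; linarith
  have hr₁q : q0 < r₁ := by
    have := le_max_right (cabs (x₀ 0)) q0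
    simp only [hr₁def]; linarith
  have hr₁r : r₁ < r := by simp only [hr₁def]; linarith
  have hx₀n : ‖x₀‖ < 1 := by
    rw [pi_norm_lt_iff zero_lt_one]; exact hx
  set δ : ℝ := min (r - q0) (min (1 - r) (1 - ‖x₀‖)) / 4 with hδdef
  have hδ : 0 < δ := by
    have h1 : 0 < r - q0 := by linarith
    have h2 : 0 < 1 - r := by linarith
    have h3 : 0 < 1 - ‖x₀‖ := by linarith
    have := lt_min h1 (lt_min h2 h3)
    positivity
  have hδ1 : q0 < r - 2 * δ := by
    have := min_le_left (r - q0) (min (1 - r) (1 - ‖x₀‖))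
    simp only [hδdef]; linarith
  have hδ2 : r + 2 * δ < 1 := by
    have := (min_le_right (r - q0) _).trans (min_le_left (1 - r) (1 - ‖x₀‖))
    simp only [hδdef]; linarith
  have hδ3 : ‖x₀‖ + 2 * δ < 1 := by
    have := (min_le_right (r - q0) _).trans (min_le_right (1 - r) (1 - ‖x₀‖))
    simp only [hδdef]; linarith
  set ε : ℝ := min δ (r₁ - cabs (x₀ 0)) with hεdef
  have hε : 0 < ε := lt_min hδ (by linarith)
  have hεδ : ε ≤ δ := min_le_left _ _
  have hεr₁ : ε ≤ r₁ - cabs (x₀ 0) := min_le_right _ _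
  set d : ℝ := r - r₁ with hddef
  have hd : 0 < d := by simp only [hddef]; linarith
  -- compact set and bound
  set K : Set (Fin (m+1) → ℂ) :=
    {w | r - 2*δ ≤ cabs (w 0) ∧ cabs (w 0) ≤ r + 2*δ ∧
      ∀ i, i ≠ 0 → cabs (w i) ≤ ‖x₀‖ + 2*δ} with hKdef
  have hKH' : K ⊆ H' := by
    rintro w ⟨h1, h2, h3⟩
    refine ⟨by linarith, fun i => ?_⟩
    rcases eq_or_ne i 0 with rfl | hi
    · linarith
    · exact lt_of_le_of_lt (h3 i hi) hδ3
  have hKc : IsCompact K := by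
    have hclosed : IsClosed K := by
      have c1 : IsClosed {w : Fin (m+1) → ℂ | r - 2*δ ≤ cabs (w 0)} :=
        isClosed_le continuous_const (continuous_norm.comp (continuous_apply 0))
      have c2 : IsClosed {w : Fin (m+1) → ℂ | cabs (w 0) ≤ r + 2*δ} :=
        isClosed_le (continuous_norm.comp (continuous_apply 0)) continuous_const
      have c3 : IsClosed {w : Fin (m+1) → ℂ | ∀ i, i ≠ 0 → cabs (w i) ≤ ‖x₀‖ + 2*δ} := by
        have : {w : Fin (m+1) → ℂ | ∀ i, i ≠ 0 → cabs (w i) ≤ ‖x₀‖ + 2*δ}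
            = ⋂ i, {w : Fin (m+1) → ℂ | i ≠ 0 → cabs (w i) ≤ ‖x₀‖ + 2*δ} := by
          ext w; simp
        rw [this]
        refine isClosed_iInter fun i => ?_
        rcases eq_or_ne i 0 with rfl | hi
        · simp
        · simp only [hi, ne_eq, not_false_eq_true, forall_true_left]
          exact isClosed_le (continuous_norm.comp (continuous_apply i)) continuous_const
      exact c1.inter (c2.inter c3)
    have hbdd : Bornology.IsBounded K := by
      apply (Metric.isBounded_closedBall (x := (0 : Fin (m+1) → ℂ))
        (r := max (r + 2*δ) (‖x₀‖ + 2*δ))).subset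
      rintro w ⟨h1, h2, h3⟩
      rw [mem_closedBall, dist_zero_right, pi_norm_le_iff_of_nonneg
        (le_trans (by positivity) (le_max_left _ _))]
      intro i
      rcases eq_or_ne i 0 with rfl | hi
      · exact le_trans h2 (le_max_left _ _)
      · exact le_trans (h3 i hi) (le_max_right _ _)
    exact Metric.isCompact_of_isClosed_isBounded hclosed hbdd
  obtain ⟨M, hM⟩ := hKc.exists_bound_of_continuousOn (hfc.mono hKH')
  set M' : ℝ := max M 0 with hM'def
  have hM' : ∀ w ∈ K, ‖f w‖ ≤ M' := fun w hw => le_trans (hM w hw) (le_max_left _ _)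
  have hM'0 : 0 ≤ M' := le_max_right _ _
  set Cf : ℝ := ((m+1 : ℕ) : ℝ) * (2 * M' / δ) with hCfdef
  -- closed polydisc around update x₀ 0 c is inside K
  have hpc : ∀ c : ℂ, cabs c = r →
      closedBall (Function.update x₀ 0 c) (2*δ) ⊆ K := by
    intro c hc w hw
    rw [mem_closedBall] at hw
    have hcoord : ∀ j, dist (w j) (Function.update x₀ 0 c j) ≤ 2*δ :=
      fun j => (dist_le_pi_dist w _ j).trans hw
    have h0 := hcoord 0
    rw [Function.update_self] at h0
    refine ⟨?_, ?_, fun i hi => ?_⟩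
    · have := abs_le_abs_add_dist c (w 0)
      rw [dist_comm] at this
      rw [← hc] at *; linarith
    · have := abs_le_abs_add_dist (w 0) c
      rw [← hc] at *; linarith
    · have h1 := hcoord i
      rw [Function.update_of_ne hi] at h1
      have h2 := abs_le_abs_add_dist (w i) (x₀ i)
      have h3 : cabs (x₀ i) ≤ ‖x₀‖ := by
        exact norm_le_pi_norm x₀ i
      linarith
  -- update z 0 c lies in ball (update x₀ 0 c) δ for z ∈ ball x₀ ε
  have hupd : ∀ c : ℂ, ∀ z ∈ ball x₀ ε, Function.update z 0 c ∈ ball (Function.update x₀ 0 c) δ := by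
    intro c z hz
    rw [mem_ball, dist_pi_lt_iff hδ]
    intro j
    rcases eq_or_ne j 0 with rfl | hj
    · simp [hδ]
    · rw [Function.update_of_ne hj, Function.update_of_ne hj]
      calc dist (z j) (x₀ j) ≤ dist z x₀ := dist_le_pi_dist z x₀ j
        _ < ε := mem_ball.mp hz
        _ ≤ δ := hεδ
  -- the two-variable function
  set Ψ : ℂ × (Fin (m+1) → ℂ) → ℂ :=
    fun p => (p.1 * I) * ((p.1 - p.2 0)⁻¹ * f (Function.update p.2 0 p.1)) with hΨdef
  set Ω : Set (ℂ × (Fin (m+1) → ℂ)) :=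
    {p | r₁ < cabs p.1 ∧ cabs p.1 < 1 ∧ cabs (p.2 0) < r₁ ∧
      ∀ i, i ≠ 0 → cabs (p.2 i) < 1} with hΩdef
  have hΩo : IsOpen Ω := by
    have o1 : IsOpen {p : ℂ × (Fin (m+1) → ℂ) | r₁ < cabs p.1} :=
      isOpen_lt continuous_const (continuous_norm.comp continuous_fst)
    have o2 : IsOpen {p : ℂ × (Fin (m+1) → ℂ) | cabs p.1 < 1} :=
      isOpen_lt (continuous_norm.comp continuous_fst) continuous_const
    have o3 : IsOpen {p : ℂ × (Fin (m+1) → ℂ) | cabs (p.2 0) < r₁} :=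
      isOpen_lt (continuous_norm.comp ((continuous_apply 0).comp continuous_snd))
        continuous_const
    have o4 : IsOpen {p : ℂ × (Fin (m+1) → ℂ) | ∀ i, i ≠ 0 → cabs (p.2 i) < 1} := by
      have : {p : ℂ × (Fin (m+1) → ℂ) | ∀ i, i ≠ 0 → cabs (p.2 i) < 1}
          = ⋂ i, {p : ℂ × (Fin (m+1) → ℂ) | i ≠ 0 → cabs (p.2 i) < 1} := by ext p; simp
      rw [this]
      refine isOpen_iInter_of_finite fun i => ?_
      rcases eq_or_ne i 0 with rfl | hi
      · simp
      · simp only [hi, ne_eq, not_false_eq_true, forall_true_left]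
        exact isOpen_lt (continuous_norm.comp ((continuous_apply i).comp continuous_snd))
          continuous_const
    exact o1.inter (o2.inter (o3.inter o4))
  have hΩH' : ∀ p ∈ Ω, Function.update p.2 0 p.1 ∈ H' := by
    rintro p ⟨h1, h2, _h3, h4⟩
    constructor
    · rw [Function.update_self]; linarith
    · intro i
      rcases eq_or_ne i 0 with rfl | hi
      · rw [Function.update_self]; linarith
      · rw [Function.update_of_ne hi]; exact h4 i hi
  have hproj2 : Differentiable ℂ (fun p : ℂ × (Fin (m+1) → ℂ) => p.2 0) :=
    ((ContinuousLinearMap.proj (0 : Fin (m+1))).comp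
      (ContinuousLinearMap.snd ℂ ℂ (Fin (m+1) → ℂ))).differentiable
  have hΨd : DifferentiableOn ℂ Ψ Ω := by
    have hu : Differentiable ℂ (fun p : ℂ × (Fin (m+1) → ℂ) => Function.update p.2 0 p.1) := by
      have : (fun p : ℂ × (Fin (m+1) → ℂ) => Function.update p.2 0 p.1)
          = fun p => p.2 + (p.1 - p.2 0) • (Pi.single 0 1 : Fin (m+1) → ℂ) := by
        funext p
        exact congrFun (update_eq_affine p.2 0) p.1
      rw [this]
      exact differentiable_snd.add
        ((differentiable_fst.sub hproj2).smul_const _)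
    have hfu : DifferentiableOn ℂ (fun p : ℂ × (Fin (m+1) → ℂ) =>
        f (Function.update p.2 0 p.1)) Ω :=
      hf.comp hu.differentiableOn hΩH'
    have hinv : DifferentiableOn ℂ (fun p : ℂ × (Fin (m+1) → ℂ) => (p.1 - p.2 0)⁻¹) Ω := by
      refine DifferentiableOn.inv ?_ ?_
      · exact (differentiable_fst.sub hproj2).differentiableOn
      · rintro p ⟨h1, _h2, h3, _h4⟩
        intro h
        have : cabs p.1 = cabs (p.2 0) := by
          rw [sub_eq_zero] at h; rw [h]
        linarith
    exact ((differentiable_fst.mul_const I).differentiableOn.mul (hinv.mul hfu))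
  have habsc : ∀ t : ℝ, cabs (circleMap 0 r t) = r := by
    intro t; rw [norm_circleMap_zero, abs_of_pos hr0]
  have hmemΩ : ∀ (t : ℝ), ∀ z ∈ ball x₀ ε, ((circleMap 0 r t), z) ∈ Ω := by
    intro t z hz
    have hz0 : cabs (z 0) < r₁ := by
      have h1 : dist (z 0) (x₀ 0) ≤ dist z x₀ := dist_le_pi_dist z x₀ 0
      have h2 := abs_le_abs_add_dist (z 0) (x₀ 0)
      have h3 := mem_ball.mp hz
      linarith
    refine ⟨by rw [habsc]; linarith, by rw [habsc]; linarith, hz0, fun i hi => ?_⟩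
    have h1 : dist (z i) (x₀ i) ≤ dist z x₀ := dist_le_pi_dist z x₀ i
    have h2 := abs_le_abs_add_dist (z i) (x₀ i)
    have h3 := mem_ball.mp hz
    have h4 : cabs (x₀ i) ≤ ‖x₀‖ := by
      exact norm_le_pi_norm x₀ i
    have : ε ≤ δ := hεδ
    nlinarith [hδ.le]
  have hGcont : ∀ z ∈ ball x₀ ε, Continuous fun t : ℝ => Ψ (circleMap 0 r t, z) := by
    intro z hz
    exact hΨd.continuousOn.comp_continuous
      ((continuous_circleMap 0 r).prodMk continuous_const) (fun t => hmemΩ t z hz)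
  have hΨat : ∀ t : ℝ, DifferentiableAt ℂ Ψ ((circleMap 0 r t), x₀) := fun t =>
    hΨd.differentiableAt (hΩo.mem_nhds (hmemΩ t x₀ (mem_ball_self hε)))
  set F' : ℝ → (Fin (m+1) → ℂ) →L[ℂ] ℂ := fun t =>
    (fderiv ℂ Ψ ((circleMap 0 r t), x₀)).comp
      (ContinuousLinearMap.inr ℂ ℂ (Fin (m+1) → ℂ)) with hF'def
  have h_diff : ∀ t : ℝ, HasFDerivAt (fun z => Ψ (circleMap 0 r t, z)) (F' t) x₀ := fun t =>
    ((hΨat t).hasFDerivAt).comp x₀ (hasFDerivAt_prodMk_right (circleMap 0 r t) x₀)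
  have hF'meas : MeasureTheory.AEStronglyMeasurable F'
      (MeasureTheory.volume.restrict (Set.uIoc (0:ℝ) (2*π))) := by
    have h1 : Measurable (fderiv ℂ Ψ) := measurable_fderiv ℂ Ψ
    have h2 : Continuous fun t : ℝ => ((circleMap 0 r t), x₀) :=
      (continuous_circleMap 0 r).prodMk continuous_const
    have h3 : Continuous fun L : (ℂ × (Fin (m+1) → ℂ)) →L[ℂ] ℂ =>
        L.comp (ContinuousLinearMap.inr ℂ ℂ (Fin (m+1) → ℂ)) :=
      ((ContinuousLinearMap.compL ℂ (Fin (m+1) → ℂ) (ℂ × (Fin (m+1) → ℂ)) ℂ).flip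
        (ContinuousLinearMap.inr ℂ ℂ (Fin (m+1) → ℂ))).continuous
    exact ((h3.measurable.comp (h1.comp h2.measurable)).stronglyMeasurable).aestronglyMeasurable
  set C : ℝ := r * (Cf / d + M' / (d*d)) with hCdef
  have h_lip : ∀ t : ℝ, LipschitzOnWith (Real.nnabs C)
      (fun z => Ψ (circleMap 0 r t, z)) (ball x₀ ε) := by
    intro t
    rw [lipschitzOnWith_iff_dist_le_mul]
    intro z hz y hy
    set c := circleMap 0 r t with hcdef
    have hc : cabs c = r := habsc t
    have hz0 : cabs (z 0) < r₁ := (hmemΩ t z hz).2.2.1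
    have hy0 : cabs (y 0) < r₁ := (hmemΩ t y hy).2.2.1
    have hcz : d ≤ cabs (c - z 0) := by
      have h5 := abs_sub_abs_le' c (z 0)
      rw [hc] at h5; simp only [hddef]; linarith
    have hcy : d ≤ cabs (c - y 0) := by
      have h5 := abs_sub_abs_le' c (y 0)
      rw [hc] at h5; simp only [hddef]; linarith
    have hcz0 : c - z 0 ≠ 0 := fun h => by
      rw [h] at hcz; simp at hcz; linarith
    have hcy0 : c - y 0 ≠ 0 := fun h => by
      rw [h] at hcy; simp at hcy; linarith
    set uz := Function.update z 0 c with huzdef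
    set uy := Function.update y 0 c with huydef
    have hBd : ‖f uz - f uy‖ ≤ Cf * dist z y := by
      have hlip := norm_sub_le_of_bound hH'o hf hδ ((hpc c hc).trans hKH')
        (fun w hw => hM' w (hpc c hc hw)) (hupd c z hz) (hupd c y hy)
      have hdist : ‖uz - uy‖ ≤ dist z y := by
        rw [← dist_eq_norm]
        rw [dist_pi_le_iff dist_nonneg]
        intro j
        rcases eq_or_ne j 0 with rfl | hj
        · simp only [huzdef, huydef, Function.update_self, dist_self]
          exact dist_nonneg
        · simp only [huzdef, huydef, Function.update_of_ne hj]
          exact dist_le_pi_dist z y j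
      calc ‖f uz - f uy‖ ≤ ((m+1 : ℕ) : ℝ) * (2 * M' / δ) * ‖uz - uy‖ := hlip
        _ ≤ Cf * dist z y := by
            rw [hCfdef]
            have h2M : (0:ℝ) ≤ 2 * M' / δ := div_nonneg (by linarith) hδ.le
            exact mul_le_mul_of_nonneg_left hdist (mul_nonneg (Nat.cast_nonneg _) h2M)
    have hBy : ‖f uy‖ ≤ M' := hM' uy (hpc c hc (ball_subset_closedBall.trans
        (closedBall_subset_closedBall (by linarith)) (hupd c y hy)))
    have key : Ψ (c, z) - Ψ (c, y)
        = (c * I) * ((c - z 0)⁻¹ * (f uz - f uy) + ((c - z 0)⁻¹ - (c - y 0)⁻¹) * f uy) := by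
      simp only [hΨdef, huzdef, huydef]
      ring
    have hinvdiff : cabs ((c - z 0)⁻¹ - (c - y 0)⁻¹) ≤ dist z y / (d * d) := by
      rw [inv_sub_inv hcz0 hcy0]
      have hnum : (c - y 0) - (c - z 0) = z 0 - y 0 := by ring
      rw [hnum, norm_div, norm_mul]
      have hzy : cabs (z 0 - y 0) ≤ dist z y := by
        rw [← Complex.dist_eq]; exact dist_le_pi_dist z y 0
      have hdd : d * d ≤ cabs (c - z 0) * cabs (c - y 0) :=
        mul_le_mul hcz hcy hd.le (norm_nonneg _)
      exact div_le_div₀ dist_nonneg hzy (mul_pos hd hd) hdd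
    -- final estimate
    rw [Complex.dist_eq, key, norm_mul]
    have habscI : cabs (c * I) = r := by rw [norm_mul, hc, Complex.norm_I, mul_one]
    have hBd' : cabs (f uz - f uy) ≤ Cf * dist z y := by
      exact hBd
    have hBy' : cabs (f uy) ≤ M' := by exact hBy
    have h1 : cabs ((c - z 0)⁻¹ * (f uz - f uy)) ≤ (Cf * dist z y) / d := by
      rw [norm_mul, norm_inv]
      have hinv : (cabs (c - z 0))⁻¹ ≤ d⁻¹ := inv_anti₀ hd hcz
      calc (cabs (c - z 0))⁻¹ * cabs (f uz - f uy)
          ≤ d⁻¹ * (Cf * dist z y) :=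
            mul_le_mul hinv hBd' (norm_nonneg _) (inv_nonneg.mpr hd.le)
        _ = (Cf * dist z y) / d := by rw [inv_mul_eq_div]
    have h2 : cabs (((c - z 0)⁻¹ - (c - y 0)⁻¹) * f uy) ≤ (dist z y / (d*d)) * M' := by
      rw [norm_mul]
      exact mul_le_mul hinvdiff hBy' (norm_nonneg _)
        (div_nonneg dist_nonneg (mul_pos hd hd).le)
    calc cabs (c * I) * cabs ((c - z 0)⁻¹ * (f uz - f uy)
          + ((c - z 0)⁻¹ - (c - y 0)⁻¹) * f uy)
        ≤ r * ((Cf * dist z y) / d + (dist z y / (d*d)) * M') := by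
          rw [habscI]
          exact mul_le_mul_of_nonneg_left
            ((norm_add_le _ _).trans (add_le_add h1 h2)) hr0.le
      _ = C * dist z y := by rw [hCdef]; ring
      _ ≤ ↑(Real.nnabs C) * dist z y := by
          rw [Real.coe_nnabs]
          exact mul_le_mul_of_nonneg_right (le_abs_self C) dist_nonneg
  -- apply the dominated differentiation theorem
  have h_meas : ∀ᶠ x in nhds x₀, MeasureTheory.AEStronglyMeasurable
      (fun t : ℝ => Ψ (circleMap 0 r t, x))
      (MeasureTheory.volume.restrict (Set.uIoc (0:ℝ) (2*π))) := by
    filter_upwards [ball_mem_nhds x₀ hε] with x hx using (hGcont x hx).aestronglyMeasurable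
  have h_int : IntervalIntegrable (fun t : ℝ => Ψ (circleMap 0 r t, x₀))
      MeasureTheory.volume 0 (2*π) := (hGcont x₀ (mem_ball_self hε)).intervalIntegrable 0 (2*π)
  obtain ⟨-, hD⟩ := intervalIntegral.hasFDerivAt_integral_of_dominated_loc_of_lip
    (bound := fun _ => C) (ball_mem_nhds x₀ hε) h_meas h_int hF'meas
    (Filter.Eventually.of_forall fun t _ => h_lip t) intervalIntegrable_const
    (Filter.Eventually.of_forall fun t _ => h_diff t)
  have heqfun : (fun z : Fin (m+1) → ℂ =>
        (2 * π * I : ℂ)⁻¹ • ∮ ζ in C(0, r), (ζ - z 0)⁻¹ • f (Function.update z 0 ζ))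
      = fun z => (2 * π * I : ℂ)⁻¹ • ∫ t in (0:ℝ)..2*π, Ψ (circleMap 0 r t, z) := by
    funext z
    congr 1
    rw [circleIntegral]
    refine intervalIntegral.integral_congr fun t _ => ?_
    simp only [hΨdef, deriv_circleMap, smul_eq_mul]
  rw [heqfun]
  exact ((hD.const_smul ((2 * π * I : ℂ)⁻¹)).differentiableAt).differentiableWithinAt

/-- The open unit polydisc in `ℂⁿ`. -/
def unitPolydisc (n : ℕ) : Set (Fin n → ℂ) :=
  {z : Fin n → ℂ | ∀ i, ‖z i‖ < 1}

/-- The Hartogs figure `𝓗(q) = {z ∈ Δⁿ : |z₀| > q₀, or |z_i| < q_i for all i ≠ 0}`. -/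
def hartogsFigure (n : ℕ) (q : Fin (n + 1) → ℝ) : Set (Fin (n + 1) → ℂ) :=
  {z ∈ unitPolydisc (n + 1) |
    q 0 < ‖z 0‖ ∨ ∀ i, i ≠ 0 → ‖z i‖ < q i}

set_option maxHeartbeats 1600000 in
/-- **Extension from Hartogs figures.** Let `n ≥ 2` (here the dimension is `n + 2`) and
`q_i ∈ (0,1)`. Every holomorphic function on the Hartogs figure `𝓗(q)` has a unique
holomorphic extension to the unit polydisc `Δⁿ`. -/
theorem hartogs_figure_extension (n : ℕ) (q : Fin (n + 2) → ℝ)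
    (hq : ∀ i, q i ∈ Set.Ioo (0 : ℝ) 1)
    (f : (Fin (n + 2) → ℂ) → ℂ)
    (hf : DifferentiableOn ℂ f (hartogsFigure (n + 1) q)) :
    ∃ F : (Fin (n + 2) → ℂ) → ℂ,
      (DifferentiableOn ℂ F (unitPolydisc (n + 2)) ∧
        Set.EqOn F f (hartogsFigure (n + 1) q)) ∧
      ∀ G : (Fin (n + 2) → ℂ) → ℂ,
        DifferentiableOn ℂ G (unitPolydisc (n + 2)) →
        Set.EqOn G f (hartogsFigure (n + 1) q) →
        Set.EqOn G F (unitPolydisc (n + 2)) := by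
  have hq0 : 0 < q 0 := (hq 0).1
  have hq01 : q 0 < 1 := (hq 0).2
  set r : ℝ := (q 0 + 1) / 2 with hrdef
  have hr0 : q 0 < r := by simp only [hrdef]; linarith
  have hr1 : r < 1 := by simp only [hrdef]; linarith
  have hrpos : 0 < r := by linarith
  set H : Set (Fin (n+2) → ℂ) := hartogsFigure (n+1) q with hHdef
  set H' : Set (Fin (n+2) → ℂ) :=
    {w | q 0 < cabs (w 0) ∧ ∀ i, cabs (w i) < 1} with hH'def
  set S' : Set (Fin (n+2) → ℂ) :=
    {w | (∀ i, cabs (w i) < 1) ∧ ∀ i, i ≠ 0 → cabs (w i) < q i} with hS'def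
  have hHsplit : H = H' ∪ S' := by
    ext z
    simp only [hHdef, hH'def, hS'def, hartogsFigure, unitPolydisc, Set.mem_setOf_eq,
      Set.mem_sep_iff, Set.mem_union]
    tauto
  have hH'o : IsOpen H' := by
    have h1 : IsOpen {w : Fin (n+2) → ℂ | q 0 < cabs (w 0)} :=
      isOpen_lt continuous_const (continuous_norm.comp (continuous_apply 0))
    exact h1.inter (isOpen_polylt (fun _ => (1:ℝ)))
  have hS'o : IsOpen S' := by
    have h2 : IsOpen {w : Fin (n+2) → ℂ | ∀ i, i ≠ 0 → cabs (w i) < q i} := by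
      have : {w : Fin (n+2) → ℂ | ∀ i, i ≠ 0 → cabs (w i) < q i}
          = ⋂ i, {w : Fin (n+2) → ℂ | i ≠ 0 → cabs (w i) < q i} := by ext w; simp
      rw [this]
      refine isOpen_iInter_of_finite fun i => ?_
      rcases eq_or_ne i 0 with rfl | hi
      · simp
      · simp only [hi, ne_eq, not_false_eq_true, forall_true_left]
        exact isOpen_lt (continuous_norm.comp (continuous_apply i)) continuous_const
    exact (isOpen_polylt (fun _ => (1:ℝ))).inter h2
  have hHo : IsOpen H := by rw [hHsplit]; exact hH'o.union hS'o
  have hH'H : H' ⊆ H := by rw [hHsplit]; exact Set.subset_union_left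
  have hS'H : S' ⊆ H := by rw [hHsplit]; exact Set.subset_union_right
  have hfH' : DifferentiableOn ℂ f H' := hf.mono hH'H
  set V : Set (Fin (n+2) → ℂ) :=
    {z | cabs (z 0) < r ∧ ∀ i, cabs (z i) < 1} with hVdef
  have hVo : IsOpen V := by
    have h1 : IsOpen {w : Fin (n+2) → ℂ | cabs (w 0) < r} :=
      isOpen_lt (continuous_norm.comp (continuous_apply 0)) continuous_const
    exact h1.inter (isOpen_polylt (fun _ => (1:ℝ)))
  set F₀ : (Fin (n+2) → ℂ) → ℂ := fun z =>
    (2 * π * I : ℂ)⁻¹ • ∮ ζ in C(0, r), (ζ - z 0)⁻¹ • f (Function.update z 0 ζ) with hF₀def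
  have hF₀ : DifferentiableOn ℂ F₀ V :=
    cauchyTransform_differentiableOn (m := n+1) hq0.le hr0 hr1 hfH'
  -- Step (b): Cauchy formula on small tails
  have hb : ∀ z : Fin (n+2) → ℂ, (∀ i, cabs (z i) < 1) →
      (∀ i, i ≠ 0 → cabs (z i) < q i) → cabs (z 0) < r → F₀ z = f z := by
    intro z h1 h2 h3
    have hmapsTo : ∀ ζ ∈ Metric.closedBall (0:ℂ) r, Function.update z 0 ζ ∈ H := by
      intro ζ hζ
      apply hS'H
      have hζr : cabs ζ ≤ r := by
        rw [Metric.mem_closedBall, Complex.dist_eq, sub_zero] at hζ; exact hζ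
      constructor
      · intro i
        rcases eq_or_ne i 0 with rfl | hi
        · rw [Function.update_self]; linarith
        · rw [Function.update_of_ne hi]; exact h1 i
      · intro i hi
        rw [Function.update_of_ne hi]; exact h2 i hi
    have hgd : DifferentiableOn ℂ (fun ζ => f (Function.update z 0 ζ))
        (Metric.closedBall (0:ℂ) r) := by
      refine DifferentiableOn.comp hf ?_ hmapsTo
      exact fun ζ _ => (hasDerivAt_update' z 0 ζ).differentiableAt.differentiableWithinAt
    have hcauchy := hgd.circleIntegral_sub_inv_smul (w := z 0)
      (by rw [mem_ball_zero_iff]; exact h3)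
    rw [Function.update_eq_self] at hcauchy
    rw [hF₀def]
    simp only [hcauchy, smul_smul]
    rw [inv_mul_cancel₀ Complex.two_pi_I_ne_zero, one_smul]
  -- Step (c): agreement on the annulus part of V, by sliced identity theorem
  have hc : ∀ z : Fin (n+2) → ℂ, (∀ i, cabs (z i) < 1) →
      q 0 < cabs (z 0) → cabs (z 0) < r → F₀ z = f z := by
    have claim : ∀ k : ℕ, ∀ z : Fin (n+2) → ℂ, (∀ i, cabs (z i) < 1) →
        q 0 < cabs (z 0) → cabs (z 0) < r →
        (∀ i : Fin (n+2), k ≤ (i : ℕ) → i ≠ 0 → cabs (z i) < q i) → F₀ z = f z := by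
      intro k
      induction k with
      | zero => exact fun z h1 h2 h3 h4 => hb z h1 (fun i hi => h4 i (Nat.zero_le _) hi) h3
      | succ k ih =>
        intro z h1 h2 h3 h4
        by_cases hk : k < n + 2
        · set i₀ : Fin (n+2) := ⟨k, hk⟩ with hi₀def
          by_cases hk0 : k = 0
          · refine ih z h1 h2 h3 fun i hik hi0 => ?_
            refine h4 i ?_ hi0
            have : (i : ℕ) ≠ 0 := fun h => hi0 (Fin.ext h)
            omega
          · have hi₀0 : i₀ ≠ 0 := by
              intro h
              apply hk0
              have := congrArg (Fin.val) h
              simpa [hi₀def] using this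
            set g : ℂ → ℂ := fun ζ =>
              F₀ (Function.update z i₀ ζ) - f (Function.update z i₀ ζ) with hgdef
            have hmemV : ∀ ζ : ℂ, cabs ζ < 1 → Function.update z i₀ ζ ∈ V := by
              intro ζ hζ
              refine ⟨?_, fun i => ?_⟩
              · rw [Function.update_of_ne (Ne.symm hi₀0)]; exact h3
              · rcases eq_or_ne i i₀ with rfl | hi
                · rw [Function.update_self]; exact hζ
                · rw [Function.update_of_ne hi]; exact h1 i
            have hmemH' : ∀ ζ : ℂ, cabs ζ < 1 → Function.update z i₀ ζ ∈ H' := by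
              intro ζ hζ
              refine ⟨?_, (hmemV ζ hζ).2⟩
              rw [Function.update_of_ne (Ne.symm hi₀0)]; exact h2
            have hgd : DifferentiableOn ℂ g (Metric.ball (0:ℂ) 1) := by
              intro ζ hζ
              rw [mem_ball_zero_iff] at hζ
              have hup : DifferentiableAt ℂ (fun ζ : ℂ => Function.update z i₀ ζ) ζ :=
                (hasDerivAt_update' z i₀ ζ).differentiableAt
              have d1 : DifferentiableAt ℂ F₀ (Function.update z i₀ ζ) :=
                hF₀.differentiableAt (hVo.mem_nhds (hmemV ζ hζ))
              have d2 : DifferentiableAt ℂ f (Function.update z i₀ ζ) :=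
                hf.differentiableAt (hHo.mem_nhds (hH'H (hmemH' ζ hζ)))
              exact ((d1.comp ζ hup).sub (d2.comp ζ hup)).differentiableWithinAt
            have hg0 : ∀ ζ : ℂ, cabs ζ < q i₀ → g ζ = 0 := by
              intro ζ hζ
              have hζ1 : cabs ζ < 1 := lt_trans hζ (hq i₀).2
              have := ih (Function.update z i₀ ζ) (hmemV ζ hζ1).2
                (by rw [Function.update_of_ne (Ne.symm hi₀0)]; exact h2)
                (by rw [Function.update_of_ne (Ne.symm hi₀0)]; exact h3)
                (fun i hik hi0 => ?_)
              · simp only [hgdef]; rw [this, sub_self]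
              rcases eq_or_ne i i₀ with rfl | hi
              · rw [Function.update_self]; exact hζ
              · rw [Function.update_of_ne hi]
                refine h4 i ?_ hi0
                have : (i : ℕ) ≠ k := fun h => hi (Fin.ext (by simp [hi₀def, h]))
                omega
            have hga : AnalyticOnNhd ℂ g (Metric.ball (0:ℂ) 1) :=
              hgd.analyticOnNhd Metric.isOpen_ball
            have hzero : g =ᶠ[nhds (0:ℂ)] 0 := by
              filter_upwards [Metric.ball_mem_nhds (0:ℂ) (hq i₀).1] with ζ hζ
              rw [mem_ball_zero_iff] at hζ
              exact hg0 ζ hζ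
            have hEq := hga.eqOn_zero_of_preconnected_of_eventuallyEq_zero
              ((convex_ball (0:ℂ) 1).isPreconnected)
              (by simp : (0:ℂ) ∈ Metric.ball (0:ℂ) 1) hzero
            have hzi₀ : z i₀ ∈ Metric.ball (0:ℂ) 1 := by
              rw [mem_ball_zero_iff]; exact h1 i₀
            have := hEq hzi₀
            rw [hgdef] at this
            simp only [Function.update_eq_self, Pi.zero_apply] at this
            exact sub_eq_zero.mp this
        · refine ih z h1 h2 h3 fun i hik hi0 => ?_
          exact absurd (lt_of_lt_of_le i.isLt (le_trans (by omega) hik)) (lt_irrefl _)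
    intro z h1 h2 h3
    refine claim (n+2) z h1 h2 h3 fun i hik hi0 => ?_
    exact absurd (lt_of_lt_of_le i.isLt hik) (lt_irrefl _)
  -- glue
  set Ffin : (Fin (n+2) → ℂ) → ℂ := fun z =>
    if cabs (z 0) < r then F₀ z else f z with hFfindef
  have hFfinH' : Set.EqOn Ffin f H' := by
    intro z hz
    rw [hFfindef]
    simp only
    split_ifs with h
    · exact hc z hz.2 hz.1 h
    · rfl
  have hFdiff : DifferentiableOn ℂ Ffin (unitPolydisc (n+2)) := by
    intro z hz
    have hz' : ∀ i, cabs (z i) < 1 := hz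
    rcases lt_or_ge (cabs (z 0)) r with h | h
    · have hzV : z ∈ V := ⟨h, hz'⟩
      have d1 : DifferentiableAt ℂ F₀ z := hF₀.differentiableAt (hVo.mem_nhds hzV)
      have hev : Ffin =ᶠ[nhds z] F₀ := by
        filter_upwards [hVo.mem_nhds hzV] with w hw
        rw [hFfindef]; simp only [if_pos hw.1]
      exact (d1.congr_of_eventuallyEq hev).differentiableWithinAt
    · have hzH' : z ∈ H' := ⟨lt_of_lt_of_le hr0 h, hz'⟩
      have d2 : DifferentiableAt ℂ f z := hf.differentiableAt (hHo.mem_nhds (hH'H hzH'))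
      have hev : Ffin =ᶠ[nhds z] f := by
        filter_upwards [hH'o.mem_nhds hzH'] with w hw using hFfinH' hw
      exact (d2.congr_of_eventuallyEq hev).differentiableWithinAt
  have hFeq : Set.EqOn Ffin f H := by
    intro z hz
    rw [hHsplit] at hz
    rcases hz with hz | hz
    · exact hFfinH' hz
    · rcases lt_or_ge (cabs (z 0)) r with h | h
      · rw [hFfindef]
        simp only [if_pos h]
        exact hb z hz.1 hz.2 h
      · exact hFfinH' ⟨lt_of_lt_of_le hr0 h, hz.1⟩
  refine ⟨Ffin, ⟨hFdiff, hFeq⟩, ?_⟩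
  -- uniqueness
  intro G hG hGf z hz
  have hz' : ∀ i, cabs (z i) < 1 := hz
  have hΔo : IsOpen (unitPolydisc (n+2)) := isOpen_polylt (fun _ => (1:ℝ))
  set g : ℂ → ℂ := fun ζ =>
    G (Function.update z 0 ζ) - Ffin (Function.update z 0 ζ) with hgdef
  have hmemΔ : ∀ ζ : ℂ, cabs ζ < 1 → Function.update z 0 ζ ∈ unitPolydisc (n+2) := by
    intro ζ hζ i
    rcases eq_or_ne i 0 with rfl | hi
    · rw [Function.update_self]; exact hζ
    · rw [Function.update_of_ne hi]; exact hz' i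
  have hgd : DifferentiableOn ℂ g (Metric.ball (0:ℂ) 1) := by
    intro ζ hζ
    rw [mem_ball_zero_iff] at hζ
    have hup : DifferentiableAt ℂ (fun ζ : ℂ => Function.update z 0 ζ) ζ :=
      (hasDerivAt_update' z 0 ζ).differentiableAt
    have d1 : DifferentiableAt ℂ G (Function.update z 0 ζ) :=
      hG.differentiableAt (hΔo.mem_nhds (hmemΔ ζ hζ))
    have d2 : DifferentiableAt ℂ Ffin (Function.update z 0 ζ) :=
      hFdiff.differentiableAt (hΔo.mem_nhds (hmemΔ ζ hζ))
    exact ((d1.comp ζ hup).sub (d2.comp ζ hup)).differentiableWithinAt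
  have hg0 : ∀ ζ : ℂ, q 0 < cabs ζ → cabs ζ < 1 → g ζ = 0 := by
    intro ζ hζ1 hζ2
    have hmem : Function.update z 0 ζ ∈ H' := by
      refine ⟨by rw [Function.update_self]; exact hζ1, fun i => hmemΔ ζ hζ2 i⟩
    rw [hgdef]
    simp only
    rw [hGf (hH'H hmem), hFeq (hH'H hmem), sub_self]
  set ζ₀ : ℂ := (((q 0 + 1) / 2 : ℝ) : ℂ) with hζ₀def
  have hζ₀abs : cabs ζ₀ = (q 0 + 1) / 2 := by
    rw [hζ₀def, Complex.norm_real, Real.norm_eq_abs, abs_of_pos (by linarith)]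
  have hζ₀mem : ζ₀ ∈ Metric.ball (0:ℂ) 1 := by
    rw [mem_ball_zero_iff, hζ₀abs]; linarith
  have hopen : IsOpen {ζ : ℂ | q 0 < cabs ζ ∧ cabs ζ < 1} :=
    (isOpen_lt continuous_const continuous_norm).inter
      (isOpen_lt continuous_norm continuous_const)
  have hzero : g =ᶠ[nhds ζ₀] 0 := by
    filter_upwards [hopen.mem_nhds (by rw [Set.mem_setOf_eq, hζ₀abs]; constructor <;> linarith)]
      with ζ hζ
    exact hg0 ζ hζ.1 hζ.2
  have hga : AnalyticOnNhd ℂ g (Metric.ball (0:ℂ) 1) :=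
    hgd.analyticOnNhd Metric.isOpen_ball
  have hEq := hga.eqOn_zero_of_preconnected_of_eventuallyEq_zero
    ((convex_ball (0:ℂ) 1).isPreconnected) hζ₀mem hzero
  have hz0mem : z 0 ∈ Metric.ball (0:ℂ) 1 := by
    rw [mem_ball_zero_iff]; exact hz' 0
  have := hEq hz0mem
  rw [hgdef] at this
  simp only [Function.update_eq_self, Pi.zero_apply] at this
  exact sub_eq_zero.mp this
end

section
/- Let ε > 0 and let f be a holomorphic function on U = Δ²(1+ε) \ closure(Δ²(1−ε)), where Δ²(r) = {(z₁,z₂) ∈ ℂ² : |z₁| < r, |z₂| < r}. Define F on the unit bidisc Δ² = Δ²(1) by F(z₁,z₂) = (1/(2πi)) ∮_{|ζ|=1} f(z₁,ζ)/(ζ − z₂) dζ (contour integral over the positively oriented unit circle). Then F is holomorphic on Δ² and F(z₁,z₂) = f(z₁,z₂) for all (z₁,z₂) with 1−ε < |z₁| < 1 and |z₂| < 1; in particular f extends holomorphically to Δ²(1+ε). -/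
open Complex

def bidisc (r : ℝ) : Set (ℂ × ℂ) :=
  {p : ℂ × ℂ | ‖p.1‖ < r ∧ ‖p.2‖ < r}

open MeasureTheory Metric Set Filter ContinuousLinearMap Topology intervalIntegral

lemma isOpen_bidisc (r : ℝ) : IsOpen (bidisc r) :=
  (isOpen_lt (continuous_norm.comp continuous_fst) continuous_const).and
    (isOpen_lt (continuous_norm.comp continuous_snd) continuous_const)

lemma not_mem_closure_bidisc {r : ℝ} {p : ℂ × ℂ}
    (h : r < ‖p.1‖ ∨ r < ‖p.2‖) : p ∉ closure (bidisc r) := by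
  intro hp
  have hsub : closure (bidisc r) ⊆ {q : ℂ × ℂ | ‖q.1‖ ≤ r ∧ ‖q.2‖ ≤ r} := by
    refine closure_minimal (fun q hq => ?_) ?_
    · exact ⟨hq.1.le, hq.2.le⟩
    exact (isClosed_le (continuous_norm.comp continuous_fst) continuous_const).inter
      (isClosed_le (continuous_norm.comp continuous_snd) continuous_const)
  obtain ⟨h1, h2⟩ := hsub hp
  rcases h with h | h <;> linarith

lemma mem_closure_bidisc {r : ℝ} (hr : 0 < r) {p : ℂ × ℂ}
    (h1 : ‖p.1‖ ≤ r) (h2 : ‖p.2‖ ≤ r) : p ∈ closure (bidisc r) := by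
  have hb : bidisc r = (ball (0:ℂ) r) ×ˢ (ball (0:ℂ) r) := by
    ext q
    simp [bidisc, Metric.mem_ball, Complex.dist_eq, Set.mem_prod]
  rw [hb, closure_prod_eq, closure_ball _ hr.ne', Set.mem_prod]
  constructor <;> simpa [Complex.dist_eq]

lemma circleMap_sub_ne {θ : ℝ} {z : ℂ} (hz : ‖z‖ < 1) :
    circleMap 0 1 θ - z ≠ 0 := by
  refine sub_ne_zero.2 fun h => ?_
  rw [← h, norm_circleMap_zero] at hz
  simp at hz

lemma one_sub_abs_le_abs_circleMap_sub (θ : ℝ) (z : ℂ) :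
    1 - ‖z‖ ≤ ‖circleMap 0 1 θ - z‖ := by
  have := norm_sub_norm_le (circleMap 0 1 θ) z
  simpa [norm_circleMap_zero] using this

set_option maxHeartbeats 2000000 in
set_option synthInstance.maxHeartbeats 1000000 in
/-- **Hartogs' original extension phenomenon on the bidisc.** Let `ε > 0` and let `f` be
holomorphic on `U = Δ²(1+ε) \ closure (Δ²(1−ε))`. The function
`F(z₁,z₂) = (1/(2πi)) ∮_{|ζ|=1} f(z₁,ζ)/(ζ − z₂) dζ` is holomorphic on the unit bidisc
`Δ²` and agrees with `f` for `1−ε < |z₁| < 1`, `|z₂| < 1`; in particular `f` extends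
holomorphically to `Δ²(1+ε)`. -/
theorem hartogs_bidisc_extension (ε : ℝ) (hε : 0 < ε) (f F : ℂ × ℂ → ℂ)
    (hf : DifferentiableOn ℂ f (bidisc (1 + ε) \ closure (bidisc (1 - ε))))
    (hF : ∀ p : ℂ × ℂ,
      F p = (2 * Real.pi * Complex.I)⁻¹ * ∮ ζ in C(0, 1), f (p.1, ζ) / (ζ - p.2)) :
    DifferentiableOn ℂ F (bidisc 1) ∧
    (∀ p : ℂ × ℂ, 1 - ε < ‖p.1‖ → ‖p.1‖ < 1 →
      ‖p.2‖ < 1 → F p = f p) ∧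
    ∃ G : ℂ × ℂ → ℂ, DifferentiableOn ℂ G (bidisc (1 + ε)) ∧
      Set.EqOn G f (bidisc (1 + ε) \ closure (bidisc (1 - ε))) := by
  set U : Set (ℂ × ℂ) := bidisc (1 + ε) \ closure (bidisc (1 - ε)) with hU
  have hUopen : IsOpen U := (isOpen_bidisc _).sdiff isClosed_closure
  have hmemU : ∀ {z w : ℂ}, ‖z‖ < 1 + ε → ‖w‖ < 1 + ε →
      (1 - ε < ‖z‖ ∨ 1 - ε < ‖w‖) → (z, w) ∈ U :=
    fun h1 h2 h3 => ⟨⟨h1, h2⟩, not_mem_closure_bidisc h3⟩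
  -- Part 2 : F = f on the outer shell of the bidisc
  have part2 : ∀ p : ℂ × ℂ, 1 - ε < ‖p.1‖ → ‖p.1‖ < 1 →
      ‖p.2‖ < 1 → F p = f p := by
    intro p h1 h2 h3
    have hd : DifferentiableOn ℂ (fun ζ => f (p.1, ζ)) (closedBall 0 1) := by
      intro ζ hζ
      have hζ' : ‖ζ‖ ≤ 1 := by simpa [Complex.dist_eq] using hζ
      have hmem : (p.1, ζ) ∈ U :=
        hmemU (h2.trans (by linarith)) (hζ'.trans_lt (by linarith)) (Or.inl h1)
      exact ((hf.differentiableAt (hUopen.mem_nhds hmem)).comp ζ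
        ((differentiableAt_const _).prodMk differentiableAt_id)).differentiableWithinAt
    have hc := hd.circleIntegral_sub_inv_smul (show p.2 ∈ ball (0:ℂ) 1 by
      simpa [Complex.dist_eq] using h3)
    have hre : (∮ ζ in C(0, 1), f (p.1, ζ) / (ζ - p.2))
        = ∮ z in C(0, 1), (z - p.2)⁻¹ • f (p.1, z) := by
      congr 1
      funext z
      simp [div_eq_inv_mul, smul_eq_mul]
    rw [hF, hre, hc, smul_eq_mul, ← mul_assoc, inv_mul_cancel₀ two_pi_I_ne_zero, one_mul]
  -- Part 1 : F is holomorphic on the bidisc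
  have part1 : DifferentiableOn ℂ F (bidisc 1) := by
    have htor : ∀ x : ℝ × ℝ, (circleMap 0 1 x.2, circleMap 0 1 x.1) ∈ U := fun x =>
      hmemU (by rw [norm_circleMap_zero]; rw [abs_one]; linarith)
        (by rw [norm_circleMap_zero]; rw [abs_one]; linarith)
        (Or.inl (by rw [norm_circleMap_zero]; rw [abs_one]; linarith))
    have hfe : Continuous fun x : ℝ × ℝ => f (circleMap 0 1 x.2, circleMap 0 1 x.1) :=
      hf.continuousOn.comp_continuous
        (((continuous_circleMap 0 1).comp continuous_snd).prodMk
          ((continuous_circleMap 0 1).comp continuous_fst)) htor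
    obtain ⟨M, hM⟩ := ((isCompact_sphere (0:ℂ) 1).prod (isCompact_sphere (0:ℂ) 1)).exists_bound_of_continuousOn
      (hf.continuousOn.mono (fun q hq => hmemU
        (by rw [show ‖q.1‖ = 1 by simpa [Complex.dist_eq] using hq.1]; linarith)
        (by rw [show ‖q.2‖ = 1 by simpa [Complex.dist_eq] using hq.2]; linarith)
        (Or.inl (by rw [show ‖q.1‖ = 1 by simpa [Complex.dist_eq] using hq.1]; linarith))))
    have hM0 : 0 ≤ M := le_trans (norm_nonneg _)
      (hM ((1:ℂ), (1:ℂ)) ⟨by simp, by simp⟩)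
    have hMx : ∀ x : ℝ × ℝ, ‖f (circleMap 0 1 x.2, circleMap 0 1 x.1)‖ ≤ M := fun x =>
      hM _ ⟨circleMap_mem_sphere 0 zero_le_one _, circleMap_mem_sphere 0 zero_le_one _⟩
    set μ : Measure ℝ := volume.restrict (Set.Ioc (0:ℝ) (2*Real.pi)) with hμ
    haveI : IsFiniteMeasure μ := ⟨by
      rw [hμ, Measure.restrict_apply_univ, Real.volume_Ioc]
      exact ENNReal.ofReal_lt_top⟩
    set ν : Measure (ℝ × ℝ) := μ.prod μ with hν
    set C : ℝ × ℝ → ℂ := fun x =>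
      circleMap 0 1 x.1 * I * (circleMap 0 1 x.2 * I) * f (circleMap 0 1 x.2, circleMap 0 1 x.1)
      with hC
    set K : (ℂ × ℂ) → ℝ × ℝ → ℂ := fun p x =>
      C x * ((circleMap 0 1 x.2 - p.1)⁻¹ * (circleMap 0 1 x.1 - p.2)⁻¹) with hK
    have hCc : Continuous C := by
      rw [hC]
      exact ((((continuous_circleMap 0 1).comp continuous_fst).mul continuous_const).mul
        (((continuous_circleMap 0 1).comp continuous_snd).mul continuous_const)).mul hfe
    have hCb : ∀ x, ‖C x‖ ≤ M := by
      intro x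
      have hCeq : ‖C x‖ = ‖f (circleMap 0 1 x.2, circleMap 0 1 x.1)‖ := by
        simp [hC, norm_mul, norm_circleMap_zero, Complex.norm_I]
      rw [hCeq]; exact hMx x
    have hKc : ∀ p : ℂ × ℂ, ‖p.1‖ < 1 → ‖p.2‖ < 1 → Continuous (K p) := by
      intro p h1 h2
      rw [hK]
      refine hCc.mul (Continuous.mul ?_ ?_)
      · exact (((continuous_circleMap 0 1).comp continuous_snd).sub continuous_const).inv₀
          (fun x => circleMap_sub_ne h1)
      · exact (((continuous_circleMap 0 1).comp continuous_fst).sub continuous_const).inv₀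
          (fun x => circleMap_sub_ne h2)
    have hKb : ∀ p : ℂ × ℂ, ‖p.1‖ < 1 → ‖p.2‖ < 1 →
        ∀ x, ‖K p x‖ ≤ M * ((1 - ‖p.1‖)⁻¹ * (1 - ‖p.2‖)⁻¹) := by
      intro p h1 h2 x
      have e1 : (0:ℝ) < 1 - ‖p.1‖ := by linarith
      have e2 : (0:ℝ) < 1 - ‖p.2‖ := by linarith
      have i1 : (‖circleMap 0 1 x.2 - p.1‖)⁻¹ ≤ (1 - ‖p.1‖)⁻¹ :=
        inv_anti₀ e1 (one_sub_abs_le_abs_circleMap_sub _ _)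
      have i2 : (‖circleMap 0 1 x.1 - p.2‖)⁻¹ ≤ (1 - ‖p.2‖)⁻¹ :=
        inv_anti₀ e2 (one_sub_abs_le_abs_circleMap_sub _ _)
      have hKeq : ‖K p x‖ = ‖C x‖ *
          ((‖circleMap 0 1 x.2 - p.1‖)⁻¹ * (‖circleMap 0 1 x.1 - p.2‖)⁻¹) := by
        simp [hK, norm_mul, norm_inv]
      rw [hKeq]
      exact mul_le_mul (hCb x) (mul_le_mul i1 i2 (inv_nonneg.2 (norm_nonneg _))
        (inv_nonneg.2 e1.le)) (mul_nonneg (inv_nonneg.2 (norm_nonneg _))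
        (inv_nonneg.2 (norm_nonneg _))) hM0
    have hKint : ∀ p : ℂ × ℂ, ‖p.1‖ < 1 → ‖p.2‖ < 1 → Integrable (K p) ν := by
      intro p h1 h2
      exact (integrable_const (M * ((1 - ‖p.1‖)⁻¹ * (1 - ‖p.2‖)⁻¹))).mono'
        ((hKc p h1 h2).aestronglyMeasurable) (ae_of_all _ fun x => hKb p h1 h2 x)
    -- the representation of F as a double integral
    have hrep : ∀ p ∈ bidisc 1,
        F p = (2*(Real.pi:ℂ)*I)⁻¹ * ((2*(Real.pi:ℂ)*I)⁻¹ * ∫ x, K p x ∂ν) := by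
      intro p hp
      obtain ⟨h1, h2⟩ := hp
      have hinner : ∀ ζ : ℂ, ‖ζ‖ = 1 →
          f (p.1, ζ) = (2*(Real.pi:ℂ)*I)⁻¹ * ∮ w in C(0, 1), (w - p.1)⁻¹ • f (w, ζ) := by
        intro ζ hζ
        have hd : DifferentiableOn ℂ (fun w => f (w, ζ)) (closedBall 0 1) := by
          intro w hw
          have hw' : ‖w‖ ≤ 1 := by simpa [Complex.dist_eq] using hw
          have hmem : (w, ζ) ∈ U := hmemU (hw'.trans_lt (by linarith))
            (by rw [hζ]; linarith) (Or.inr (by rw [hζ]; linarith))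
          exact ((hf.differentiableAt (hUopen.mem_nhds hmem)).comp w
            (differentiableAt_id.prodMk (differentiableAt_const _))).differentiableWithinAt
        rw [hd.circleIntegral_sub_inv_smul (show p.1 ∈ ball (0:ℂ) 1 by
            simpa [Complex.dist_eq] using h1),
          smul_eq_mul, ← mul_assoc, inv_mul_cancel₀ two_pi_I_ne_zero, one_mul]
      rw [hF]
      congr 1
      calc (∮ ζ in C(0, 1), f (p.1, ζ) / (ζ - p.2))
          = ∮ ζ in C(0, 1), ((2*(Real.pi:ℂ)*I)⁻¹ *
              ∮ w in C(0, 1), (w - p.1)⁻¹ • f (w, ζ)) / (ζ - p.2) := by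
            refine circleIntegral.integral_congr zero_le_one fun ζ hζ => ?_
            rw [← hinner ζ (by simpa [Complex.dist_eq] using hζ)]
        _ = ∫ θ in (0:ℝ)..2*Real.pi, (circleMap 0 1 θ * I) •
              (((2*(Real.pi:ℂ)*I)⁻¹ * ∫ φ in (0:ℝ)..2*Real.pi, (circleMap 0 1 φ * I) •
                ((circleMap 0 1 φ - p.1)⁻¹ • f (circleMap 0 1 φ, circleMap 0 1 θ))) /
                  (circleMap 0 1 θ - p.2)) := by
            simp only [circleIntegral, deriv_circleMap]
        _ = ∫ θ in (0:ℝ)..2*Real.pi, (2*(Real.pi:ℂ)*I)⁻¹ *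
              ∫ φ in (0:ℝ)..2*Real.pi, K p (θ, φ) := by
            congr 1
            funext θ
            have h2' : (∫ φ in (0:ℝ)..2*Real.pi, K p (θ, φ))
                = (circleMap 0 1 θ * I * (circleMap 0 1 θ - p.2)⁻¹) *
                  ∫ φ in (0:ℝ)..2*Real.pi, (circleMap 0 1 φ * I) •
                    ((circleMap 0 1 φ - p.1)⁻¹ • f (circleMap 0 1 φ, circleMap 0 1 θ)) := by
              rw [← intervalIntegral.integral_const_mul]
              congr 1
              funext φ
              simp only [hK, hC, smul_eq_mul]
              ring
            rw [h2', smul_eq_mul, div_eq_mul_inv]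
            ring
        _ = (2*(Real.pi:ℂ)*I)⁻¹ *
              ∫ θ in (0:ℝ)..2*Real.pi, ∫ φ in (0:ℝ)..2*Real.pi, K p (θ, φ) :=
            intervalIntegral.integral_const_mul _ _
        _ = (2*(Real.pi:ℂ)*I)⁻¹ * ∫ x, K p x ∂ν := by
            congr 1
            simp_rw [intervalIntegral.integral_of_le Real.two_pi_pos.le]
            exact MeasureTheory.integral_integral (f := fun θ φ => K p (θ, φ)) (hKint p h1 h2)
    -- differentiability of the double integral
    intro p₀ hp₀
    obtain ⟨h01, h02⟩ := hp₀
    set r : ℝ := max (‖p₀.1‖) (‖p₀.2‖) with hr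
    have hr1 : r < 1 := max_lt h01 h02
    have hr0 : 0 ≤ r := (norm_nonneg _).trans (le_max_left _ _)
    set δ : ℝ := (1 - r) / 2 with hδdef
    have hδ : 0 < δ := by rw [hδdef]; linarith
    have hδ1 : 1 - δ < 1 := by linarith
    have hball : ∀ p ∈ ball p₀ δ, ‖p.1‖ < 1 - δ ∧ ‖p.2‖ < 1 - δ := by
      intro p hp
      have hd : dist p p₀ < δ := mem_ball.1 hp
      have k1 : ‖p.1 - p₀.1‖ ≤ dist p p₀ := by
        rw [dist_eq_norm]
        exact norm_fst_le (p - p₀)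
      have k2 : ‖p.2 - p₀.2‖ ≤ dist p p₀ := by
        rw [dist_eq_norm]
        exact norm_snd_le (p - p₀)
      have l1 : ‖p.1‖ ≤ ‖p₀.1‖ + ‖p.1 - p₀.1‖ := by
        simpa using norm_add_le p₀.1 (p.1 - p₀.1)
      have l2 : ‖p.2‖ ≤ ‖p₀.2‖ + ‖p.2 - p₀.2‖ := by
        simpa using norm_add_le p₀.2 (p.2 - p₀.2)
      have m1 : ‖p₀.1‖ ≤ r := le_max_left _ _
      have m2 : ‖p₀.2‖ ≤ r := le_max_right _ _
      constructor <;> [skip; skip] <;> rw [hδdef] at hd ⊢ <;> [linarith; linarith]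
    set K' : (ℂ × ℂ) → ℝ × ℝ → (ℂ × ℂ) →L[ℂ] ℂ := fun p x =>
      (C x * ((circleMap 0 1 x.1 - p.2)⁻¹ * (1/(circleMap 0 1 x.2 - p.1)^2))) •
          ContinuousLinearMap.fst ℂ ℂ ℂ
        + (C x * ((circleMap 0 1 x.2 - p.1)⁻¹ * (1/(circleMap 0 1 x.1 - p.2)^2))) •
          ContinuousLinearMap.snd ℂ ℂ ℂ with hK'
    have hKd : ∀ (x : ℝ × ℝ) (p : ℂ × ℂ), ‖p.1‖ < 1 → ‖p.2‖ < 1 →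
        HasFDerivAt (fun q => K q x) (K' p x) p := by
      intro x p h1 h2
      have ha : circleMap 0 1 x.2 - p.1 ≠ 0 := circleMap_sub_ne h1
      have hb : circleMap 0 1 x.1 - p.2 ≠ 0 := circleMap_sub_ne h2
      have H1 : HasFDerivAt (fun q : ℂ × ℂ => (circleMap 0 1 x.2 - q.1)⁻¹)
          ((1/(circleMap 0 1 x.2 - p.1)^2) • ContinuousLinearMap.fst ℂ ℂ ℂ) p := by
        have hin := ((hasDerivAt_id p.1).const_sub (circleMap 0 1 x.2)).inv ha
        have hcomp := hin.hasFDerivAt.comp p hasFDerivAt_fst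
        refine hcomp.congr_fderiv ?_
        refine ContinuousLinearMap.ext fun y => ?_
        simp [ContinuousLinearMap.smulRight_apply]
        ring
      have H2 : HasFDerivAt (fun q : ℂ × ℂ => (circleMap 0 1 x.1 - q.2)⁻¹)
          ((1/(circleMap 0 1 x.1 - p.2)^2) • ContinuousLinearMap.snd ℂ ℂ ℂ) p := by
        have hin := ((hasDerivAt_id p.2).const_sub (circleMap 0 1 x.1)).inv hb
        have hcomp := hin.hasFDerivAt.comp p hasFDerivAt_snd
        refine hcomp.congr_fderiv ?_
        refine ContinuousLinearMap.ext fun y => ?_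
        simp [ContinuousLinearMap.smulRight_apply]
        ring
      have Hm := (H1.mul H2).const_mul (C x)
      refine Hm.congr_fderiv ?_
      refine ContinuousLinearMap.ext fun y => ?_
      simp [hK', ContinuousLinearMap.smul_apply, ContinuousLinearMap.add_apply, smul_eq_mul]
      ring
    have hK'b : ∀ (x : ℝ × ℝ) (p : ℂ × ℂ), ‖p.1‖ < 1 - δ → ‖p.2‖ < 1 - δ →
        ‖K' p x‖ ≤ M * (δ⁻¹ * (δ⁻¹ * δ⁻¹)) + M * (δ⁻¹ * (δ⁻¹ * δ⁻¹)) := by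
      intro x p h1 h2
      have d1 : δ ≤ ‖circleMap 0 1 x.2 - p.1‖ :=
        le_trans (by linarith) (one_sub_abs_le_abs_circleMap_sub x.2 p.1)
      have d2 : δ ≤ ‖circleMap 0 1 x.1 - p.2‖ :=
        le_trans (by linarith) (one_sub_abs_le_abs_circleMap_sub x.1 p.2)
      have i1 : (‖circleMap 0 1 x.2 - p.1‖)⁻¹ ≤ δ⁻¹ := inv_anti₀ hδ d1
      have i2 : (‖circleMap 0 1 x.1 - p.2‖)⁻¹ ≤ δ⁻¹ := inv_anti₀ hδ d2
      have habs0 : ∀ z : ℂ, 0 ≤ (‖z‖)⁻¹ := fun z => inv_nonneg.2 (norm_nonneg z)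
      have hδ0 : (0:ℝ) ≤ δ⁻¹ := inv_nonneg.2 hδ.le
      have s1 : ‖1/(circleMap 0 1 x.2 - p.1)^2‖ ≤ δ⁻¹ * δ⁻¹ := by
        rw [one_div, norm_inv, norm_pow, sq, mul_inv]
        exact mul_le_mul i1 i1 (habs0 _) hδ0
      have s2 : ‖1/(circleMap 0 1 x.1 - p.2)^2‖ ≤ δ⁻¹ * δ⁻¹ := by
        rw [one_div, norm_inv, norm_pow, sq, mul_inv]
        exact mul_le_mul i2 i2 (habs0 _) hδ0
      have n1 : ‖(C x * ((circleMap 0 1 x.1 - p.2)⁻¹ * (1/(circleMap 0 1 x.2 - p.1)^2))) •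
          ContinuousLinearMap.fst ℂ ℂ ℂ‖ ≤ M * (δ⁻¹ * (δ⁻¹ * δ⁻¹)) := by
        calc ‖(C x * ((circleMap 0 1 x.1 - p.2)⁻¹ * (1/(circleMap 0 1 x.2 - p.1)^2))) •
              ContinuousLinearMap.fst ℂ ℂ ℂ‖
            ≤ ‖C x * ((circleMap 0 1 x.1 - p.2)⁻¹ * (1/(circleMap 0 1 x.2 - p.1)^2))‖ *
              ‖ContinuousLinearMap.fst ℂ ℂ ℂ‖ := norm_smul_le _ _
          _ ≤ ‖C x * ((circleMap 0 1 x.1 - p.2)⁻¹ * (1/(circleMap 0 1 x.2 - p.1)^2))‖ * 1 :=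
              mul_le_mul_of_nonneg_left (ContinuousLinearMap.norm_fst_le ℂ ℂ ℂ) (norm_nonneg _)
          _ = ‖C x‖ * ((‖circleMap 0 1 x.1 - p.2‖)⁻¹ *
                ‖1/(circleMap 0 1 x.2 - p.1)^2‖) := by
              simp only [mul_one, norm_mul, norm_inv, norm_pow, one_div]
          _ ≤ M * (δ⁻¹ * (δ⁻¹ * δ⁻¹)) :=
              mul_le_mul (hCb x) (mul_le_mul i2 s1 (norm_nonneg _) hδ0)
                (mul_nonneg (habs0 _) (norm_nonneg _)) hM0
      have n2 : ‖(C x * ((circleMap 0 1 x.2 - p.1)⁻¹ * (1/(circleMap 0 1 x.1 - p.2)^2))) •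
          ContinuousLinearMap.snd ℂ ℂ ℂ‖ ≤ M * (δ⁻¹ * (δ⁻¹ * δ⁻¹)) := by
        calc ‖(C x * ((circleMap 0 1 x.2 - p.1)⁻¹ * (1/(circleMap 0 1 x.1 - p.2)^2))) •
              ContinuousLinearMap.snd ℂ ℂ ℂ‖
            ≤ ‖C x * ((circleMap 0 1 x.2 - p.1)⁻¹ * (1/(circleMap 0 1 x.1 - p.2)^2))‖ *
              ‖ContinuousLinearMap.snd ℂ ℂ ℂ‖ := norm_smul_le _ _
          _ ≤ ‖C x * ((circleMap 0 1 x.2 - p.1)⁻¹ * (1/(circleMap 0 1 x.1 - p.2)^2))‖ * 1 :=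
              mul_le_mul_of_nonneg_left (ContinuousLinearMap.norm_snd_le ℂ ℂ ℂ) (norm_nonneg _)
          _ = ‖C x‖ * ((‖circleMap 0 1 x.2 - p.1‖)⁻¹ *
                ‖1/(circleMap 0 1 x.1 - p.2)^2‖) := by
              simp only [mul_one, norm_mul, norm_inv, norm_pow, one_div]
          _ ≤ M * (δ⁻¹ * (δ⁻¹ * δ⁻¹)) :=
              mul_le_mul (hCb x) (mul_le_mul i1 s2 (norm_nonneg _) hδ0)
                (mul_nonneg (habs0 _) (norm_nonneg _)) hM0
      calc ‖K' p x‖ ≤ _ + _ := by rw [hK']; exact norm_add_le _ _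
        _ ≤ M * (δ⁻¹ * (δ⁻¹ * δ⁻¹)) + M * (δ⁻¹ * (δ⁻¹ * δ⁻¹)) := add_le_add n1 n2
    have key : HasFDerivAt (fun p => ∫ x, K p x ∂ν) (∫ x, K' p₀ x ∂ν) p₀ := by
      refine hasFDerivAt_integral_of_dominated_of_fderiv_le (𝕜 := ℂ)
        (bound := fun _ => M * (δ⁻¹ * (δ⁻¹ * δ⁻¹)) + M * (δ⁻¹ * (δ⁻¹ * δ⁻¹))) (ball_mem_nhds p₀ hδ) ?_ ?_ ?_ ?_ ?_ ?_
      · exact eventually_of_mem (ball_mem_nhds p₀ hδ) fun p hp =>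
          (hKc p ((hball p hp).1.trans hδ1) ((hball p hp).2.trans hδ1)).aestronglyMeasurable
      · exact hKint p₀ h01 h02
      · refine Continuous.aestronglyMeasurable (Continuous.add ?_ ?_)
        · refine Continuous.smul (hCc.mul (Continuous.mul ?_ ?_)) continuous_const
          · exact (((continuous_circleMap 0 1).comp continuous_fst).sub continuous_const).inv₀
              (fun x => circleMap_sub_ne h02)
          · exact continuous_const.div
              ((((continuous_circleMap 0 1).comp continuous_snd).sub continuous_const).pow 2)
              (fun x => pow_ne_zero 2 (circleMap_sub_ne h01))
        · refine Continuous.smul (hCc.mul (Continuous.mul ?_ ?_)) continuous_const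
          · exact (((continuous_circleMap 0 1).comp continuous_snd).sub continuous_const).inv₀
              (fun x => circleMap_sub_ne h01)
          · exact continuous_const.div
              ((((continuous_circleMap 0 1).comp continuous_fst).sub continuous_const).pow 2)
              (fun x => pow_ne_zero 2 (circleMap_sub_ne h02))
      · exact ae_of_all _ fun x p hp => hK'b x p (hball p hp).1 (hball p hp).2
      · exact integrable_const _
      · exact ae_of_all _ fun x p hp =>
          hKd x p ((hball p hp).1.trans hδ1) ((hball p hp).2.trans hδ1)
    have hdiff : DifferentiableAt ℂ
        (fun p => (2*(Real.pi:ℂ)*I)⁻¹ * ((2*(Real.pi:ℂ)*I)⁻¹ * ∫ x, K p x ∂ν)) p₀ :=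
      (key.differentiableAt.const_mul _).const_mul _
    have hev : F =ᶠ[𝓝 p₀]
        fun p => (2*(Real.pi:ℂ)*I)⁻¹ * ((2*(Real.pi:ℂ)*I)⁻¹ * ∫ x, K p x ∂ν) :=
      eventually_of_mem ((isOpen_bidisc 1).mem_nhds ⟨h01, h02⟩) fun p hp => hrep p hp
    exact (hev.differentiableAt_iff.mpr hdiff).differentiableWithinAt
  refine ⟨part1, part2, ?_⟩
  -- identity theorem on slices : F = f on (bidisc 1) ∩ U
  have hFf : ∀ p ∈ bidisc 1, p ∉ closure (bidisc (1 - ε)) → F p = f p := by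
    intro p hp hpc
    rcases lt_or_ge (1 - ε) (‖p.1‖) with hcase | hcase
    · exact part2 p hcase hp.1 hp.2
    -- slice in the first variable
    have hslice : ∀ w : ℂ, ‖w‖ < 1 + ε → (w, p.2) ∈ U := by
      intro w hw
      rcases le_or_gt (1 - ε) 0 with h0 | h0
      · have hbe : bidisc (1 - ε) = ∅ := by
          ext q
          simp only [bidisc, Set.mem_setOf_eq, Set.mem_empty_iff_false, iff_false, not_and]
          intro hq
          exact absurd ((norm_nonneg _).trans_lt hq) (not_lt.2 h0)
        exact ⟨⟨hw, hp.2.trans (by linarith)⟩, by simp [hbe]⟩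
      · have h2 : 1 - ε < ‖p.2‖ := by
          by_contra hle
          push_neg at hle
          exact hpc (mem_closure_bidisc h0 hcase hle)
        exact hmemU hw (hp.2.trans (by linarith)) (Or.inr h2)
    have hF1 : DifferentiableOn ℂ (fun w => F (w, p.2)) (ball (0:ℂ) 1) :=
      part1.comp ((differentiable_id.prodMk (differentiable_const _)).differentiableOn)
        (fun w hw => ⟨by simpa [Complex.dist_eq] using hw, hp.2⟩)
    have hf1 : DifferentiableOn ℂ (fun w => f (w, p.2)) (ball (0:ℂ) 1) :=
      hf.comp ((differentiable_id.prodMk (differentiable_const _)).differentiableOn)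
        (fun w hw => hslice w ((show ‖w‖ < 1 by
          simpa [Complex.dist_eq] using hw).trans (by linarith)))
    set m : ℝ := max (1 - ε) 0 with hm
    have hm0 : 0 ≤ m := le_max_right _ _
    have hmε : 1 - ε ≤ m := le_max_left _ _
    have hm1 : m < 1 := max_lt (by linarith) one_pos
    set w₀ : ℂ := (((m + 1) / 2 : ℝ) : ℂ) with hw₀
    have habs : ‖w₀‖ = (m + 1) / 2 := by
      rw [hw₀, Complex.norm_real, Real.norm_eq_abs, _root_.abs_of_nonneg (by linarith : (0:ℝ) ≤ (m + 1) / 2)]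
    have hev : (fun w => F (w, p.2)) =ᶠ[𝓝 w₀] (fun w => f (w, p.2)) := by
      have hopen : IsOpen {w : ℂ | 1 - ε < ‖w‖ ∧ ‖w‖ < 1} :=
        (isOpen_lt continuous_const continuous_norm).and
          (isOpen_lt continuous_norm continuous_const)
      refine eventually_of_mem (hopen.mem_nhds ⟨?_, ?_⟩)
        fun w (hw : 1 - ε < ‖w‖ ∧ ‖w‖ < 1) =>
          part2 (w, p.2) hw.1 hw.2 hp.2
      · rw [habs]; linarith
      · rw [habs]; linarith
    have heq := (hF1.analyticOnNhd isOpen_ball).eqOn_of_preconnected_of_eventuallyEq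
      (hf1.analyticOnNhd isOpen_ball) (convex_ball (0:ℂ) 1).isPreconnected
      (show w₀ ∈ ball (0:ℂ) 1 by
        simp only [mem_ball, Complex.dist_eq, sub_zero]; rw [habs]; linarith) hev
    exact heq (show p.1 ∈ ball (0:ℂ) 1 by
      simp only [mem_ball, Complex.dist_eq, sub_zero]; exact hp.1)
  classical
  have hGf : ∀ q ∈ U, (if q ∈ bidisc 1 then F q else f q) = f q := by
    intro q hq
    by_cases h2 : q ∈ bidisc 1
    · simpa [if_pos h2] using hFf q h2 hq.2
    · exact if_neg h2
  refine ⟨fun p => if p ∈ bidisc 1 then F p else f p, ?_, fun q hq => hGf q hq⟩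
  intro p hp
  by_cases h : p ∈ bidisc 1
  · have hev : (fun q => if q ∈ bidisc 1 then F q else f q) =ᶠ[𝓝 p] F :=
      eventually_of_mem ((isOpen_bidisc 1).mem_nhds h) fun q hq => if_pos hq
    exact (hev.differentiableAt_iff.mpr
      (part1.differentiableAt ((isOpen_bidisc 1).mem_nhds h))).differentiableWithinAt
  · have hpU : p ∈ U := by
      refine ⟨hp, not_mem_closure_bidisc ?_⟩
      rcases not_and_or.1 h with h1 | h1
      · push_neg at h1; left; linarith
      · push_neg at h1; right; linarith
    have hev : (fun q => if q ∈ bidisc 1 then F q else f q) =ᶠ[𝓝 p] f :=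
      eventually_of_mem (hUopen.mem_nhds hpU) fun q hq => hGf q hq
    exact (hev.differentiableAt_iff.mpr
      (hf.differentiableAt (hUopen.mem_nhds hpU))).differentiableWithinAt
end

section
/- Let n ≥ 2, let Ω ⊆ ℂⁿ be a domain and let a ∈ Ω. Then every holomorphic function f on Ω \ {a} has a (unique) holomorphic extension F to Ω, i.e. F is holomorphic on Ω and F = f on Ω \ {a}. In particular, holomorphic functions of n ≥ 2 variables have no isolated singularities. -/
open Metric Set Function intervalIntegral
open scoped Real Topology

lemma single_norm_le {n : ℕ} (i : Fin n) : ‖(Pi.single i (1:ℂ) : Fin n → ℂ)‖ ≤ 1 := by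
  rw [pi_norm_le_iff_of_nonneg zero_le_one]
  intro j
  rcases eq_or_ne i j with rfl | h
  · simp
  · simp [Pi.single_eq_of_ne (Ne.symm h)]

lemma slice_hasDerivAt {n : ℕ} {f : (Fin n → ℂ) → ℂ} {p : Fin n → ℂ} {D : (Fin n → ℂ) →L[ℂ] ℂ}
    (hD : HasFDerivAt f D p) (i : Fin n) :
    HasDerivAt (fun t : ℂ => f (p + t • (Pi.single i 1 : Fin n → ℂ))) (D (Pi.single i 1)) 0 := by
  have h2 : HasDerivAt (fun t : ℂ => p + t • (Pi.single i 1 : Fin n → ℂ))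
      (Pi.single i 1) 0 := by
    simpa using ((hasDerivAt_id (0:ℂ)).smul_const (Pi.single i (1:ℂ) : Fin n → ℂ)).const_add p
  have hp : p + (0:ℂ) • (Pi.single i 1 : Fin n → ℂ) = p := by simp
  have hD' : HasFDerivAt f D (p + (0:ℂ) • (Pi.single i 1 : Fin n → ℂ)) := by rw [hp]; exact hD
  exact hD'.comp_hasDerivAt 0 h2

lemma fderiv_bound {n : ℕ} {f : (Fin n → ℂ) → ℂ} {U : Set (Fin n → ℂ)} (hU : IsOpen U)
    (hf : DifferentiableOn ℂ f U) {p : Fin n → ℂ} {ρ M : ℝ} (hρ : 0 < ρ)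
    (hball : closedBall p ρ ⊆ U) (hM : ∀ q ∈ closedBall p ρ, ‖f q‖ ≤ M) :
    ‖fderiv ℂ f p‖ ≤ n * (M / ρ) := by
  have hpU : p ∈ U := hball (mem_closedBall_self hρ.le)
  have hdiff : DifferentiableAt ℂ f p := hf.differentiableAt (hU.mem_nhds hpU)
  have hD := hdiff.hasFDerivAt
  set D := fderiv ℂ f p with hDdef
  have hmaps : ∀ i : Fin n, ∀ t : ℂ, t ∈ closedBall (0:ℂ) ρ →
      p + t • (Pi.single i 1 : Fin n → ℂ) ∈ closedBall p ρ := by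
    intro i t ht
    rw [mem_closedBall, dist_eq_norm, add_sub_cancel_left]
    calc ‖t • (Pi.single i (1:ℂ) : Fin n → ℂ)‖ ≤ ‖t‖ * 1 := by
          rw [norm_smul]; exact mul_le_mul_of_nonneg_left (single_norm_le i) (norm_nonneg t)
      _ ≤ ρ := by simpa [mem_closedBall, dist_eq_norm] using ht
  have key : ∀ i : Fin n, ‖D (Pi.single i 1)‖ ≤ M / ρ := by
    intro i
    set g : ℂ → ℂ := fun t => f (p + t • (Pi.single i 1 : Fin n → ℂ)) with hg
    have hgd : DiffContOnCl ℂ g (ball (0:ℂ) ρ) := by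
      have hdg : DifferentiableOn ℂ g (closedBall (0:ℂ) ρ) := by
        intro t ht
        exact ((hf.differentiableAt (hU.mem_nhds (hball (hmaps i t ht)))).comp t
          (by fun_prop)).differentiableWithinAt
      exact DiffContOnCl.mk (hdg.mono ball_subset_closedBall)
        ((hdg.continuousOn).mono (by rw [closure_ball _ hρ.ne']))
    have hsphere : ∀ t ∈ sphere (0:ℂ) ρ, ‖g t‖ ≤ M := fun t ht =>
      hM _ (hmaps i t (sphere_subset_closedBall ht))
    have := Complex.norm_deriv_le_of_forall_mem_sphere_norm_le hρ hgd hsphere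
    rwa [(slice_hasDerivAt hD i).deriv] at this
  have hv : ∀ v : Fin n → ℂ, ‖D v‖ ≤ n * (M / ρ) * ‖v‖ := by
    intro v
    have hvsum : (v : Fin n → ℂ) = ∑ i ∈ Finset.univ, Pi.single i (v i) :=
      (Finset.univ_sum_single v).symm
    have hsingle : ∀ i : Fin n, (Pi.single i (v i) : Fin n → ℂ)
        = v i • (Pi.single i 1 : Fin n → ℂ) := by
      intro i; ext j
      rcases eq_or_ne i j with rfl | h
      · simp
      · simp [Pi.single_eq_of_ne (Ne.symm h)]
    calc ‖D v‖ = ‖∑ i ∈ Finset.univ, v i • D (Pi.single i 1)‖ := by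
          conv_lhs => rw [hvsum, map_sum]
          congr 1
          refine Finset.sum_congr rfl fun i _ => ?_
          rw [hsingle i, map_smul]
      _ ≤ ∑ i ∈ Finset.univ, ‖v i • D (Pi.single i 1)‖ := norm_sum_le _ _
      _ ≤ ∑ i ∈ Finset.univ, ‖v‖ * (M / ρ) := by
          refine Finset.sum_le_sum fun i _ => ?_
          rw [norm_smul]
          exact mul_le_mul (norm_le_pi_norm v i) (key i) (norm_nonneg _) (norm_nonneg _)
      _ = n * (M / ρ) * ‖v‖ := by
          rw [Finset.sum_const, Finset.card_univ, Fintype.card_fin, nsmul_eq_mul]; ring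
  have hnonneg : 0 ≤ (n : ℝ) * (M / ρ) := by
    have : 0 ≤ M := le_trans (norm_nonneg _) (hM p (mem_closedBall_self hρ.le))
    positivity
  exact D.opNorm_le_bound hnonneg hv

-- local extension lemma
set_option maxHeartbeats 2000000 in
lemma local_ext {n : ℕ} (hn : 2 ≤ n) {Ω : Set (Fin n → ℂ)} (hΩopen : IsOpen Ω)
    {a : Fin n → ℂ} {f : (Fin n → ℂ) → ℂ} (hf : DifferentiableOn ℂ f (Ω \ {a}))
    {R : ℝ} (hR : 0 < R) (hRΩ : closedBall a (2*R) ⊆ Ω) :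
    ∃ g : (Fin n → ℂ) → ℂ,
      (∀ x ∈ ball a (R/4), DifferentiableAt ℂ g x) ∧ EqOn g f (ball a (R/4) \ {a}) := by
  classical
  have hopen : IsOpen (Ω \ {a}) := hΩopen.sdiff isClosed_singleton
  set i0 : Fin n := ⟨0, by omega⟩ with hi0
  set i1 : Fin n := ⟨1, by omega⟩ with hi1
  have hi01 : i1 ≠ i0 := by simp [hi0, hi1, Fin.ext_iff]
  set w : ℝ → ℂ := fun θ => circleMap (a i0) R θ with hw
  set u : (Fin n → ℂ) → ℝ → (Fin n → ℂ) := fun z θ => Function.update z i0 (w θ) with hu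
  -- membership facts
  have hwdist : ∀ θ, dist (w θ) (a i0) = R := by
    intro θ; have := circleMap_mem_sphere (a i0) hR.le θ; rwa [mem_sphere] at this
  -- compact set and bound M
  set K : Set (Fin n → ℂ) := closedBall a (2*R) ∩ {q | R/2 ≤ dist (q i0) (a i0)} with hK
  have hKcompact : IsCompact K :=
    (isCompact_closedBall a (2*R)).inter_right
      (isClosed_le continuous_const (by fun_prop))
  have hKsub : K ⊆ Ω \ {a} := by
    rintro q ⟨h1, h2⟩
    refine ⟨hRΩ h1, ?_⟩
    simp only [mem_singleton_iff]
    intro h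
    rw [h] at h2
    simp only [mem_setOf_eq, dist_self] at h2
    linarith
  obtain ⟨M0, hM0⟩ := hKcompact.exists_bound_of_continuousOn (hf.continuousOn.mono hKsub)
  set M : ℝ := max M0 0 with hM
  have hMnonneg : 0 ≤ M := le_max_right _ _
  have hMbound : ∀ q ∈ K, ‖f q‖ ≤ M := fun q hq => le_trans (hM0 q hq) (le_max_left _ _)
  have humem : ∀ z : Fin n → ℂ, dist z a < R/2 → ∀ θ,
      closedBall (u z θ) (R/4) ⊆ K := by
    intro z hz θ q hq
    rw [mem_closedBall] at hq
    have hqi0 : dist (q i0) ((u z θ) i0) ≤ R/4 := le_trans (dist_le_pi_dist q (u z θ) i0) hq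
    have h2 : (u z θ) i0 = w θ := by simp [hu]
    rw [h2] at hqi0
    have h1 : dist (u z θ) a ≤ R := by
      rw [dist_pi_le_iff hR.le]
      intro j
      rcases eq_or_ne j i0 with rfl | hj
      · simp only [hu, Function.update_self]; rw [hwdist θ]
      · simp only [hu, Function.update_of_ne hj]
        exact le_trans (dist_le_pi_dist z a j) (by linarith)
    constructor
    · rw [mem_closedBall]
      calc dist q a ≤ dist q (u z θ) + dist (u z θ) a := dist_triangle _ _ _
        _ ≤ R/4 + R := by linarith
        _ ≤ 2*R := by linarith
    · simp only [mem_setOf_eq]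
      have := hwdist θ
      have h3 : dist (w θ) (a i0) ≤ dist (w θ) (q i0) + dist (q i0) (a i0) := dist_triangle _ _ _
      rw [dist_comm (w θ) (q i0)] at h3
      linarith
  have humem' : ∀ z : Fin n → ℂ, dist z a < R/2 → ∀ θ,
      closedBall (u z θ) (R/4) ⊆ Ω \ {a} := fun z hz θ => (humem z hz θ).trans hKsub
  -- fderiv bound
  set C : ℝ := n * (M / (R/4)) with hCdef
  have hfd_bound : ∀ z : Fin n → ℂ, dist z a < R/2 → ∀ θ, ‖fderiv ℂ f (u z θ)‖ ≤ C := by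
    intro z hz θ
    exact fderiv_bound hopen hf (by linarith) (humem' z hz θ)
      (fun q hq => hMbound q (humem z hz θ hq))
  have hCnonneg : 0 ≤ C := by positivity
  -- the linear map L (derivative of x ↦ u x θ)
  set L : (Fin n → ℂ) →L[ℂ] (Fin n → ℂ) :=
    ContinuousLinearMap.pi (fun j => if j = i0 then 0 else ContinuousLinearMap.proj j) with hLdef
  have hLapply : ∀ (v : Fin n → ℂ) j, L v j = if j = i0 then 0 else v j := by
    intro v j
    simp only [hLdef, ContinuousLinearMap.pi_apply]
    by_cases h : j = i0 <;> simp [h]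
  have hLnorm : ‖L‖ ≤ 1 := by
    refine L.opNorm_le_bound zero_le_one fun v => ?_
    rw [one_mul]
    refine (pi_norm_le_iff_of_nonneg (norm_nonneg v)).2 fun j => ?_
    rw [hLapply]
    by_cases h : j = i0
    · simp [h]
    · simp only [if_neg h]
      exact norm_le_pi_norm v j
  have hLu : ∀ θ (x : Fin n → ℂ), HasFDerivAt (fun x => u x θ) L x := by
    intro θ x
    have heq : (fun x : Fin n → ℂ => u x θ) = fun x => L x + Pi.single i0 (w θ) := by
      funext x
      ext j
      rcases eq_or_ne j i0 with rfl | hj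
      · simp [hu, hLapply]
      · simp [hu, hLapply, hj, Function.update_of_ne hj, Pi.single_eq_of_ne hj]
    rw [heq]
    exact L.hasFDerivAt.add_const _
  have hproj_norm : ‖(ContinuousLinearMap.proj i0 : (Fin n → ℂ) →L[ℂ] ℂ)‖ ≤ 1 := by
    refine ContinuousLinearMap.opNorm_le_bound _ zero_le_one fun v => ?_
    rw [one_mul]
    exact norm_le_pi_norm v i0
  -- the integrand and its derivative
  set Fi : (Fin n → ℂ) → ℝ → ℂ :=
    fun z θ => deriv (circleMap (a i0) R) θ * ((w θ - z i0)⁻¹ * f (u z θ)) with hFi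
  set Fi' : (Fin n → ℂ) → ℝ → ((Fin n → ℂ) →L[ℂ] ℂ) := fun z θ =>
    deriv (circleMap (a i0) R) θ • ((w θ - z i0)⁻¹ • ((fderiv ℂ f (u z θ)).comp L)
      + f (u z θ) • (((w θ - z i0)^2)⁻¹ • (ContinuousLinearMap.proj i0))) with hFi'
  have hker : ∀ (z : Fin n → ℂ), dist z a < R/2 → ∀ θ, R/2 ≤ ‖w θ - z i0‖ := by
    intro z hz θ
    have h1 : dist (z i0) (a i0) ≤ dist z a := dist_le_pi_dist z a i0
    have h2 := hwdist θ
    have h3 : dist (w θ) (a i0) ≤ dist (w θ) (z i0) + dist (z i0) (a i0) := dist_triangle _ _ _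
    rw [← dist_eq_norm]
    linarith
  have hker0 : ∀ (z : Fin n → ℂ), dist z a < R/2 → ∀ θ, w θ - z i0 ≠ 0 := by
    intro z hz θ h
    have := hker z hz θ
    rw [h, norm_zero] at this
    linarith
  have hudiff : ∀ (z : Fin n → ℂ), dist z a < R/2 → ∀ θ, DifferentiableAt ℂ f (u z θ) := by
    intro z hz θ
    exact hf.differentiableAt (hopen.mem_nhds (humem' z hz θ (mem_closedBall_self (by linarith))))
  have hasF : ∀ θ (z : Fin n → ℂ), dist z a < R/2 → HasFDerivAt (fun x => Fi x θ) (Fi' z θ) z := by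
    intro θ z hz
    have hne := hker0 z hz θ
    have hinner : HasFDerivAt (fun x : Fin n → ℂ => w θ - x i0)
        (-(ContinuousLinearMap.proj i0 : (Fin n → ℂ) →L[ℂ] ℂ)) z := by
      simpa using ((ContinuousLinearMap.proj i0 : (Fin n → ℂ) →L[ℂ] ℂ).hasFDerivAt
        (x := z)).const_sub (w θ)
    have hkinv : HasFDerivAt (fun x : Fin n → ℂ => (w θ - x i0)⁻¹)
        (((w θ - z i0)^2)⁻¹ • (ContinuousLinearMap.proj i0 : (Fin n → ℂ) →L[ℂ] ℂ)) z := by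
      have h := (hasFDerivAt_inv hne).comp z hinner
      refine h.congr_fderiv ?_
      ext v
      simp only [ContinuousLinearMap.smul_apply, ContinuousLinearMap.proj_apply,
        ContinuousLinearMap.coe_comp', Function.comp_apply, ContinuousLinearMap.neg_apply,
        ContinuousLinearMap.smulRight_apply, ContinuousLinearMap.one_apply, smul_eq_mul,
        ContinuousLinearMap.toSpanSingleton_apply]
      ring
    have hfz : HasFDerivAt (fun x => f (u x θ)) ((fderiv ℂ f (u z θ)).comp L) z :=
      (hudiff z hz θ).hasFDerivAt.comp z (hLu θ z)
    have hmul := hkinv.mul hfz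
    exact hmul.const_mul (deriv (circleMap (a i0) R) θ)
  have hFbound : ∀ θ (z : Fin n → ℂ), dist z a < R/2 →
      ‖Fi' z θ‖ ≤ R * ((R/2)⁻¹ * C + M * ((R/2)^2)⁻¹) := by
    intro θ z hz
    have hk := hker z hz θ
    have hR2 : (0:ℝ) < R/2 := by linarith
    have hdcm : ‖deriv (circleMap (a i0) R) θ‖ = R := by
      rw [deriv_circleMap, norm_mul, norm_circleMap_zero,
        Complex.norm_I, mul_one, abs_of_pos hR]
    have hBnn : (0:ℝ) ≤ R * ((R/2)⁻¹ * C + M * ((R/2)^2)⁻¹) := by positivity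
    refine ContinuousLinearMap.opNorm_le_bound _ hBnn fun v => ?_
    have hb1 : ‖fderiv ℂ f (u z θ) (L v)‖ ≤ C * ‖v‖ := by
      calc ‖fderiv ℂ f (u z θ) (L v)‖ ≤ ‖fderiv ℂ f (u z θ)‖ * ‖L v‖ :=
            ContinuousLinearMap.le_opNorm _ _
        _ ≤ C * ‖v‖ := by
            refine mul_le_mul (hfd_bound z hz θ) ?_ (norm_nonneg _) hCnonneg
            calc ‖L v‖ ≤ ‖L‖ * ‖v‖ := ContinuousLinearMap.le_opNorm _ _
              _ ≤ 1 * ‖v‖ := mul_le_mul_of_nonneg_right hLnorm (norm_nonneg _)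
              _ = ‖v‖ := one_mul _
    have hb2 : ‖(w θ - z i0)⁻¹‖ ≤ (R/2)⁻¹ := by
      rw [norm_inv]
      exact inv_anti₀ hR2 hk
    have hb3 : ‖((w θ - z i0)^2)⁻¹‖ ≤ ((R/2)^2)⁻¹ := by
      rw [norm_inv]
      refine inv_anti₀ (by positivity) ?_
      rw [norm_pow]
      exact pow_le_pow_left₀ hR2.le hk 2
    have hb4 : ‖f (u z θ)‖ ≤ M :=
      hMbound _ (humem z hz θ (mem_closedBall_self (by linarith)))
    have hb5 : ‖v i0‖ ≤ ‖v‖ := norm_le_pi_norm v i0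
    have expand : Fi' z θ v = deriv (circleMap (a i0) R) θ *
        ((w θ - z i0)⁻¹ * (fderiv ℂ f (u z θ) (L v))
          + f (u z θ) * (((w θ - z i0)^2)⁻¹ * v i0)) := by
      simp only [hFi', ContinuousLinearMap.smul_apply, ContinuousLinearMap.add_apply,
        ContinuousLinearMap.coe_comp', Function.comp_apply, ContinuousLinearMap.proj_apply,
        smul_eq_mul]
    rw [expand, norm_mul, hdcm]
    have step : ‖(w θ - z i0)⁻¹ * (fderiv ℂ f (u z θ) (L v))
          + f (u z θ) * (((w θ - z i0)^2)⁻¹ * v i0)‖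
        ≤ (R/2)⁻¹ * (C * ‖v‖) + M * (((R/2)^2)⁻¹ * ‖v‖) := by
      refine le_trans (norm_add_le _ _) (add_le_add ?_ ?_)
      · rw [norm_mul]
        exact mul_le_mul hb2 hb1 (norm_nonneg _) (by positivity)
      · rw [norm_mul, norm_mul]
        refine mul_le_mul hb4 ?_ (by positivity) hMnonneg
        exact mul_le_mul hb3 hb5 (norm_nonneg _) (by positivity)
    calc R * ‖(w θ - z i0)⁻¹ * (fderiv ℂ f (u z θ) (L v))
          + f (u z θ) * (((w θ - z i0)^2)⁻¹ * v i0)‖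
        ≤ R * ((R/2)⁻¹ * (C * ‖v‖) + M * (((R/2)^2)⁻¹ * ‖v‖)) :=
          mul_le_mul_of_nonneg_left step hR.le
      _ = R * ((R/2)⁻¹ * C + M * ((R/2)^2)⁻¹) * ‖v‖ := by ring
  -- continuity in θ
  have hucont : ∀ x : Fin n → ℂ, Continuous (fun θ => u x θ) :=
    fun x => continuous_const.update i0 (continuous_circleMap _ _)
  have hFcont : ∀ x : Fin n → ℂ, dist x a < R/2 → Continuous (fun θ => Fi x θ) := by
    intro x hx
    have h1 : Continuous (fun θ => deriv (circleMap (a i0) R) θ) := by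
      have he : (fun θ => deriv (circleMap (a i0) R) θ) = fun θ => circleMap 0 R θ * Complex.I :=
        funext fun θ => deriv_circleMap _ _ _
      rw [he]; exact (continuous_circleMap 0 R).mul continuous_const
    have h2 : Continuous (fun θ => (w θ - x i0)⁻¹) :=
      Continuous.inv₀ (by fun_prop) (fun θ => hker0 x hx θ)
    have h3 : Continuous (fun θ => f (u x θ)) := by
      refine (hf.continuousOn).comp_continuous (hucont x) (fun θ => ?_)
      exact humem' x hx θ (mem_closedBall_self (by linarith))
    exact h1.mul (h2.mul h3)
  -- the candidate extension
  set g : (Fin n → ℂ) → ℂ :=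
    fun z => (2 * Real.pi * Complex.I)⁻¹ * ∫ θ in (0:ℝ)..2*Real.pi, Fi z θ with hg
  have hgdiff : ∀ x₀ ∈ ball a (R/4), DifferentiableAt ℂ g x₀ := by
    intro x₀ hx₀
    rw [mem_ball] at hx₀
    have hx₀' : dist x₀ a < R/2 := by linarith
    have hballmem : ∀ x ∈ ball x₀ (R/4), dist x a < R/2 := by
      intro x hx
      rw [mem_ball] at hx
      calc dist x a ≤ dist x x₀ + dist x₀ a := dist_triangle _ _ _
        _ < R/4 + R/4 := by linarith
        _ = R/2 := by ring
    have hmeas' : MeasureTheory.AEStronglyMeasurable (fun θ => Fi' x₀ θ)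
        (MeasureTheory.volume.restrict (Set.uIoc (0:ℝ) (2*Real.pi))) := by
      have m0 : Measurable (fun θ => u x₀ θ) := (hucont x₀).measurable
      have m1 : Measurable (fun θ => fderiv ℂ f (u x₀ θ)) := (measurable_fderiv ℂ f).comp m0
      have m2 : Measurable (fun θ => (fderiv ℂ f (u x₀ θ)).comp L) :=
        (((ContinuousLinearMap.compL ℂ (Fin n → ℂ) (Fin n → ℂ)
          ℂ).flip L).continuous.measurable).comp m1
      have s1 : Measurable (fun θ => deriv (circleMap (a i0) R) θ) := by
        have he : (fun θ => deriv (circleMap (a i0) R) θ)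
            = fun θ => circleMap 0 R θ * Complex.I := funext fun θ => deriv_circleMap _ _ _
        rw [he]; exact ((continuous_circleMap 0 R).mul continuous_const).measurable
      have s2 : Measurable (fun θ => (w θ - x₀ i0)⁻¹) :=
        (Continuous.inv₀ (by fun_prop) (fun θ => hker0 x₀ hx₀' θ)).measurable
      have s3 : Measurable (fun θ => f (u x₀ θ)) := by
        refine ((hf.continuousOn).comp_continuous (hucont x₀) (fun θ => ?_)).measurable
        exact humem' x₀ hx₀' θ (mem_closedBall_self (by linarith))
      have s4 : Measurable (fun θ => ((w θ - x₀ i0)^2)⁻¹) :=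
        (Continuous.inv₀ (by fun_prop) (fun θ => pow_ne_zero 2 (hker0 x₀ hx₀' θ))).measurable
      have hm : MeasureTheory.StronglyMeasurable (fun θ => Fi' x₀ θ) := by
        simp only [hFi']
        exact (s1.stronglyMeasurable).smul
          (((s2.stronglyMeasurable).smul m2.stronglyMeasurable).add
            ((s3.stronglyMeasurable).smul
              ((s4.stronglyMeasurable).smul MeasureTheory.stronglyMeasurable_const)))
      exact hm.aestronglyMeasurable
    have key := intervalIntegral.hasFDerivAt_integral_of_dominated_of_fderiv_le
      (𝕜 := ℂ) (F := Fi) (F' := Fi') (x₀ := x₀) (a := 0) (b := 2*Real.pi)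
      (bound := fun _ => R * ((R/2)⁻¹ * C + M * ((R/2)^2)⁻¹)) (μ := MeasureTheory.volume)
      (s := ball x₀ (R/4)) (ball_mem_nhds x₀ (by linarith))
      (Filter.eventually_of_mem (isOpen_ball.mem_nhds (mem_ball.2 hx₀'))
        (fun x hx => ((hFcont x (mem_ball.1 hx)).aestronglyMeasurable)))
      ((hFcont x₀ hx₀').intervalIntegrable _ _)
      hmeas'
      (MeasureTheory.ae_of_all _ (fun θ _ x hx => hFbound θ x (hballmem x hx)))
      intervalIntegrable_const
      (MeasureTheory.ae_of_all _ (fun θ _ x hx => hasF θ x (hballmem x hx)))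
    exact ((key.const_mul ((2 * Real.pi * Complex.I)⁻¹ : ℂ)).differentiableAt :
      DifferentiableAt ℂ g x₀)
  -- Cauchy formula: g = f where some coordinate other than i0 differs from a
  have hcauchy : ∀ z ∈ ball a (R/4), (∃ j, j ≠ i0 ∧ z j ≠ a j) → g z = f z := by
    rintro z hz ⟨j, hj, hzj⟩
    rw [mem_ball] at hz
    set h : ℂ → ℂ := fun ζ => f (Function.update z i0 ζ) with hh
    have hsub : ∀ ζ ∈ closedBall (a i0) R, Function.update z i0 ζ ∈ Ω \ {a} := by
      intro ζ hζ
      rw [mem_closedBall] at hζ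
      constructor
      · refine hRΩ ?_
        rw [mem_closedBall, dist_pi_le_iff (by linarith)]
        intro k
        rcases eq_or_ne k i0 with rfl | hk
        · rw [Function.update_self]; linarith
        · rw [Function.update_of_ne hk]
          exact le_trans (dist_le_pi_dist z a k) (by linarith)
      · simp only [mem_singleton_iff]
        intro hcon
        apply hzj
        have : Function.update z i0 ζ j = a j := by rw [hcon]
        rwa [Function.update_of_ne hj] at this
    have hudiffζ : Differentiable ℂ (fun ζ : ℂ => Function.update z i0 ζ) := by
      rw [differentiable_pi]
      intro k
      rcases eq_or_ne k i0 with rfl | hk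
      · simpa [Function.update_self] using differentiable_id
      · simpa [Function.update_of_ne hk] using differentiable_const (z k)
    have hd : DifferentiableOn ℂ h (closedBall (a i0) R) := by
      intro ζ hζ
      exact ((hf.differentiableAt (hopen.mem_nhds (hsub ζ hζ))).comp ζ
        (hudiffζ ζ)).differentiableWithinAt
    have hdc : DiffContOnCl ℂ h (ball (a i0) R) :=
      ⟨hd.mono ball_subset_closedBall,
        (hd.continuousOn).mono (by rw [closure_ball _ hR.ne'])⟩
    have hz0mem : z i0 ∈ ball (a i0) R := by
      rw [mem_ball]
      exact lt_of_le_of_lt (dist_le_pi_dist z a i0) (by linarith)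
    have hcirc := hdc.circleIntegral_sub_inv_smul hz0mem
    have hcirc' : (∮ ζ in C(a i0, R), (ζ - z i0)⁻¹ • h ζ)
        = ∫ θ in (0:ℝ)..2*Real.pi, Fi z θ := by
      rw [circleIntegral]
      refine intervalIntegral.integral_congr fun θ _ => ?_
      simp only [hFi, hh, smul_eq_mul, hu, hw]
    rw [hcirc'] at hcirc
    have hne : (2 * Real.pi * Complex.I : ℂ) ≠ 0 := by
      simp [Real.pi_ne_zero, Complex.I_ne_zero]
    calc g z = (2 * Real.pi * Complex.I)⁻¹ * ∫ θ in (0:ℝ)..2*Real.pi, Fi z θ := rfl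
      _ = (2 * Real.pi * Complex.I)⁻¹ * ((2 * Real.pi * Complex.I) • h (z i0)) := by rw [hcirc]
      _ = h (z i0) := by
          rw [smul_eq_mul, ← mul_assoc, inv_mul_cancel₀ hne, one_mul]
      _ = f z := by simp only [hh, Function.update_eq_self]
  -- extension to the punctured slice by continuity
  have heq : EqOn g f (ball a (R/4) \ {a}) := by
    rintro z ⟨hzb, hza⟩
    simp only [mem_singleton_iff] at hza
    by_cases hcase : ∃ j, j ≠ i0 ∧ z j ≠ a j
    · exact hcauchy z hzb hcase
    · push_neg at hcase
      have hzi1 : z i1 = a i1 := hcase i1 hi01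
      set zt : ℂ → (Fin n → ℂ) := fun t => Function.update z i1 (a i1 + t) with hzt
      have hlim : Filter.Tendsto zt (𝓝[≠] (0:ℂ)) (𝓝 z) := by
        have hcont : Continuous zt := continuous_const.update i1 (by fun_prop)
        have h0 : zt 0 = z := by
          rw [hzt]
          simp only [add_zero, ← hzi1]
          exact Function.update_eq_self i1 z
        have := hcont.tendsto 0
        rw [h0] at this
        exact this.mono_left nhdsWithin_le_nhds
      have hev : ∀ᶠ t in 𝓝[≠] (0:ℂ), g (zt t) = f (zt t) := by
        have hmem : ∀ᶠ t in 𝓝[≠] (0:ℂ), zt t ∈ ball a (R/4) := by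
          have : Filter.Tendsto zt (𝓝[≠] (0:ℂ)) (𝓝 z) := hlim
          exact this (isOpen_ball.mem_nhds hzb)
        filter_upwards [hmem, self_mem_nhdsWithin] with t hmem ht
        refine hcauchy _ hmem ⟨i1, hi01, ?_⟩
        rw [hzt]
        simp only [Function.update_self]
        intro hcon
        exact ht (by simpa using hcon)
      have hgz : ContinuousAt g z := (hgdiff z hzb).continuousAt
      have hfz : ContinuousAt f z := by
        refine (hf.differentiableAt (hopen.mem_nhds ⟨?_, hza⟩)).continuousAt
        refine hRΩ (ball_subset_closedBall ?_)
        rw [mem_ball] at hzb ⊢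
        linarith [hzb]
      have t1 : Filter.Tendsto (fun t => g (zt t)) (𝓝[≠] (0:ℂ)) (𝓝 (g z)) :=
        hgz.tendsto.comp hlim
      have t2 : Filter.Tendsto (fun t => g (zt t)) (𝓝[≠] (0:ℂ)) (𝓝 (f z)) := by
        refine Filter.Tendsto.congr' (hev.mono fun t ht => ht.symm) ?_
        exact hfz.tendsto.comp hlim
      exact tendsto_nhds_unique t1 t2
  exact ⟨g, hgdiff, heq⟩

/-- **No isolated singularities in several variables.** Let `n ≥ 2`, `Ω ⊆ ℂⁿ` a domain
and `a ∈ Ω`. Every holomorphic function on `Ω \ {a}` extends (uniquely) to a holomorphic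
function on `Ω`. -/
theorem no_isolated_singularity (n : ℕ) (hn : 2 ≤ n) (Ω : Set (Fin n → ℂ))
    (hΩopen : IsOpen Ω) (hΩconn : IsConnected Ω)
    (a : Fin n → ℂ) (ha : a ∈ Ω)
    (f : (Fin n → ℂ) → ℂ) (hf : DifferentiableOn ℂ f (Ω \ {a})) :
    ∃ F : (Fin n → ℂ) → ℂ,
      (DifferentiableOn ℂ F Ω ∧ Set.EqOn F f (Ω \ {a})) ∧
      ∀ G : (Fin n → ℂ) → ℂ,
        DifferentiableOn ℂ G Ω → Set.EqOn G f (Ω \ {a}) → Set.EqOn G F Ω := by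
  classical
  have hopen : IsOpen (Ω \ {a}) := hΩopen.sdiff isClosed_singleton
  obtain ⟨ε, hε, hball⟩ := Metric.isOpen_iff.1 hΩopen a ha
  set R : ℝ := ε/4 with hRdef
  have hR0 : (0:ℝ) < R := by positivity
  have hRΩ : Metric.closedBall a (2*R) ⊆ Ω := by
    intro q hq
    refine hball ?_
    rw [Metric.mem_closedBall] at hq
    rw [Metric.mem_ball]
    calc dist q a ≤ 2*R := hq
      _ < ε := by rw [hRdef]; linarith
  obtain ⟨g, hgdiff, hgeq⟩ := local_ext hn hΩopen hf hR0 hRΩ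
  set F : (Fin n → ℂ) → ℂ := fun z => if z = a then g a else f z with hFdef
  have hFeq : Set.EqOn F f (Ω \ {a}) := by
    intro z hz
    have hza : z ≠ a := by
      intro h; exact hz.2 (by simp [h])
    simp only [hFdef, if_neg hza]
  have hFg : Set.EqOn F g (Metric.ball a (R/4)) := by
    intro z hz
    by_cases h : z = a
    · simp [hFdef, h]
    · simp only [hFdef, if_neg h]
      exact (hgeq ⟨hz, by simp [h]⟩).symm
  have hFdiff : DifferentiableOn ℂ F Ω := by
    intro z hz
    by_cases h : z = a
    · subst h
      have hd : DifferentiableAt ℂ g z := hgdiff z (Metric.mem_ball_self (by positivity))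
      have hev : F =ᶠ[nhds z] g :=
        Filter.eventuallyEq_of_mem
          (Metric.isOpen_ball.mem_nhds (Metric.mem_ball_self (by positivity))) hFg
      exact (hev.differentiableAt_iff.2 hd).differentiableWithinAt
    · have hz' : z ∈ Ω \ {a} := ⟨hz, by simp [h]⟩
      have hd : DifferentiableAt ℂ f z := hf.differentiableAt (hopen.mem_nhds hz')
      have hev : F =ᶠ[nhds z] f := Filter.eventuallyEq_of_mem (hopen.mem_nhds hz') hFeq
      exact (hev.differentiableAt_iff.2 hd).differentiableWithinAt
  refine ⟨F, ⟨hFdiff, hFeq⟩, ?_⟩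
  intro G hGdiff hGeq z hz
  by_cases h : z = a
  · subst h
    haveI : Nonempty (Fin n) := ⟨⟨0, by omega⟩⟩
    haveI : Nontrivial (Fin n → ℂ) := Function.nontrivial
    have hneBot : Filter.NeBot (nhdsWithin z (Ω \ {z})) := by
      have h1 : Ω ∈ nhdsWithin z {z}ᶜ :=
        mem_nhdsWithin_of_mem_nhds (hΩopen.mem_nhds hz)
      have h2 : nhdsWithin z (Ω ∩ {z}ᶜ) = nhdsWithin z {z}ᶜ := nhdsWithin_inter_of_mem h1
      rw [Set.diff_eq, h2]
      exact Module.punctured_nhds_neBot ℂ _ z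
    have hGt : Filter.Tendsto G (nhdsWithin z (Ω \ {z})) (nhds (G z)) :=
      ((hGdiff z hz).continuousWithinAt).tendsto.mono_left
        (nhdsWithin_mono z Set.diff_subset)
    have hFt : Filter.Tendsto G (nhdsWithin z (Ω \ {z})) (nhds (F z)) := by
      have hFt0 : Filter.Tendsto F (nhdsWithin z (Ω \ {z})) (nhds (F z)) :=
        ((hFdiff z hz).continuousWithinAt).tendsto.mono_left
          (nhdsWithin_mono z Set.diff_subset)
      refine hFt0.congr' ?_
      filter_upwards [self_mem_nhdsWithin] with q hq
      rw [hFeq hq, hGeq hq]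
    exact tendsto_nhds_unique hGt hFt
  · have hz' : z ∈ Ω \ {a} := ⟨hz, by simp [h]⟩
    rw [hGeq hz', hFeq hz']
end

section
/- Let n ≥ 2, let Ω ⊆ ℂⁿ be a domain, and let f be holomorphic on Ω with f(a) = 0 for some a ∈ Ω. Then a is not an isolated zero of f: every neighborhood of a contains a point z ≠ a with f(z) = 0. -/
open Metric

/-- **No isolated zeros in several variables.** Let `n ≥ 2`, `Ω ⊆ ℂⁿ` a domain, `f`
holomorphic on `Ω` with `f a = 0` for some `a ∈ Ω`. Then `a` is not an isolated zero:
every neighbourhood of `a` contains a point `z ≠ a` with `f z = 0`. -/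
theorem no_isolated_zero (n : ℕ) (hn : 2 ≤ n) (Ω : Set (Fin n → ℂ))
    (hΩopen : IsOpen Ω) (hΩconn : IsConnected Ω)
    (f : (Fin n → ℂ) → ℂ) (hf : DifferentiableOn ℂ f Ω)
    (a : Fin n → ℂ) (ha : a ∈ Ω) (hfa : f a = 0) :
    ∀ V ∈ nhds a, ∃ z ∈ V, z ≠ a ∧ f z = 0 := by
  intro V hV
  by_contra hcon
  push_neg at hcon
  obtain ⟨ε, hε, hball⟩ := Metric.mem_nhds_iff.1 (Filter.inter_mem (hΩopen.mem_nhds ha) hV)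
  have hballΩ : Metric.ball a ε ⊆ Ω := fun z hz => (hball hz).1
  have hballV : Metric.ball a ε ⊆ V := fun z hz => (hball hz).2
  have hnz : ∀ z ∈ Metric.ball a ε, z ≠ a → f z ≠ 0 := fun z hz => hcon z (hballV hz)
  set i0 : Fin n := ⟨0, by omega⟩ with hi0
  set i1 : Fin n := ⟨1, by omega⟩ with hi1
  have hi01 : i1 ≠ i0 := by simp [hi0, hi1, Fin.ext_iff]
  set e0 : Fin n → ℂ := Pi.single i0 1 with he0
  set e1 : Fin n → ℂ := Pi.single i1 1 with he1
  have hne0 : ‖e0‖ ≤ 1 := by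
    rw [pi_norm_le_iff_of_nonneg zero_le_one]
    intro i
    rcases eq_or_ne i i0 with h | h <;>
      simp [he0, h, Pi.single_eq_same, Pi.single_eq_of_ne]
  have hne1 : ‖e1‖ ≤ 1 := by
    rw [pi_norm_le_iff_of_nonneg zero_le_one]
    intro i
    rcases eq_or_ne i i1 with h | h <;>
      simp [he1, h, Pi.single_eq_same, Pi.single_eq_of_ne]
  set r : ℝ := ε / 4 with hr
  have hrpos : 0 < r := by positivity
  set A : ℂ → ℂ → (Fin n → ℂ) := fun μ w => a + w • e0 + μ • e1 with hA
  have hdist : ∀ μ w : ℂ, dist (A μ w) a ≤ ‖w‖ + ‖μ‖ := by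
    intro μ w
    rw [dist_eq_norm]
    have hsub : A μ w - a = w • e0 + μ • e1 := by
      simp only [hA]; abel
    rw [hsub]
    calc ‖w • e0 + μ • e1‖ ≤ ‖w • e0‖ + ‖μ • e1‖ := norm_add_le _ _
      _ ≤ ‖w‖ + ‖μ‖ := by
          rw [norm_smul, norm_smul]
          nlinarith [norm_nonneg w, norm_nonneg μ]
  have hAi1 : ∀ μ w : ℂ, A μ w i1 = a i1 + w * (0 : ℂ) + μ := by
    intro μ w
    simp [hA, he0, he1, Pi.single_eq_same, Pi.single_eq_of_ne hi01]
  have hAi0 : ∀ μ w : ℂ, A μ w i0 = a i0 + w + μ * (0 : ℂ) := by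
    intro μ w
    simp [hA, he0, he1, Pi.single_eq_same, Pi.single_eq_of_ne hi01.symm]
  have hAne : ∀ μ w : ℂ, μ ≠ 0 → A μ w ≠ a := by
    intro μ w hμ h
    have h1 := congrFun h i1
    rw [hAi1] at h1
    apply hμ
    simpa using h1
  have hAne0 : ∀ w : ℂ, w ≠ 0 → A 0 w ≠ a := by
    intro w hw h
    have h1 := congrFun h i0
    rw [hAi0] at h1
    apply hw
    simpa using h1
  have hmem : ∀ μ w : ℂ, ‖w‖ ≤ r → ‖μ‖ ≤ r → A μ w ∈ Metric.ball a ε := by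
    intro μ w h1 h2
    rw [Metric.mem_ball]
    calc dist (A μ w) a ≤ ‖w‖ + ‖μ‖ := hdist μ w
      _ ≤ r + r := by gcongr
      _ < ε := by rw [hr]; linarith
  have hdiffA : ∀ μ w : ℂ, A μ w ∈ Ω → DifferentiableAt ℂ (fun z => f (A μ z)) w := by
    intro μ w hw
    have h1 : DifferentiableAt ℂ (A μ) w := by
      apply DifferentiableAt.add_const
      exact (differentiableAt_id.smul_const e0).const_add a
    exact (hf.differentiableAt (hΩopen.mem_nhds hw)).comp w h1
  -- minimum of ‖f‖ on the circle in direction e0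
  have hsc : IsCompact (Metric.sphere (0 : ℂ) r) := isCompact_sphere 0 r
  have hsne : (Metric.sphere (0 : ℂ) r).Nonempty := NormedSpace.sphere_nonempty.2 hrpos.le
  have hcont0 : ContinuousOn (fun w => ‖f (A 0 w)‖) (Metric.sphere (0 : ℂ) r) := by
    intro w hw
    have hwr : ‖w‖ ≤ r := le_of_eq (mem_sphere_zero_iff_norm.1 hw)
    have hwΩ : A 0 w ∈ Ω := hballΩ (hmem 0 w hwr (by simp [hrpos.le]))
    exact ((hdiffA 0 w hwΩ).continuousAt.norm).continuousWithinAt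
  obtain ⟨w₀, hw₀, hmin⟩ := hsc.exists_isMinOn hsne hcont0
  set m : ℝ := ‖f (A 0 w₀)‖ with hm
  have hw₀r : ‖w₀‖ = r := mem_sphere_zero_iff_norm.1 hw₀
  have hw₀ne : w₀ ≠ 0 := by
    intro h; rw [h, norm_zero] at hw₀r; exact hrpos.ne hw₀r
  have hmpos : 0 < m := by
    rw [hm, norm_pos_iff]
    exact hnz _ (hmem 0 w₀ hw₀r.le (by simp [hrpos.le])) (hAne0 w₀ hw₀ne)
  -- uniform continuity on a compact neighbourhood
  have hKΩ : Metric.closedBall a (ε / 2) ⊆ Metric.ball a ε :=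
    Metric.closedBall_subset_ball (by linarith)
  have huc : UniformContinuousOn f (Metric.closedBall a (ε / 2)) :=
    (isCompact_closedBall a (ε / 2)).uniformContinuousOn_of_continuous
      (hf.continuousOn.mono fun z hz => hballΩ (hKΩ hz))
  rw [Metric.uniformContinuousOn_iff] at huc
  obtain ⟨δ, hδ, hδf⟩ := huc (m / 2) (by positivity)
  -- continuity at a
  have hca : ContinuousAt f a := (hf.differentiableAt (hΩopen.mem_nhds ha)).continuousAt
  obtain ⟨δ₂, hδ₂, hδ₂f⟩ := Metric.continuousAt_iff.1 hca (m / 2) (by positivity)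
  -- choice of μ
  set t : ℝ := min r (min δ δ₂) / 2 with ht
  have htpos : 0 < t := by
    rw [ht]; positivity
  have htr : t ≤ r := by
    have := min_le_left r (min δ δ₂); rw [ht]; linarith
  have htδ : t < δ := by
    have h1 := min_le_right r (min δ δ₂)
    have h2 := min_le_left δ δ₂
    rw [ht]; linarith
  have htδ₂ : t < δ₂ := by
    have h1 := min_le_right r (min δ δ₂)
    have h2 := min_le_right δ δ₂
    rw [ht]; linarith
  set μ : ℂ := (t : ℂ) with hμdef
  have hμnorm : ‖μ‖ = t := by
    rw [hμdef, Complex.norm_real, Real.norm_of_nonneg htpos.le]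
  have hμne : μ ≠ 0 := by
    rw [hμdef]
    exact_mod_cast htpos.ne'
  set g : ℂ → ℂ := fun w => f (A μ w) with hg
  have hgne : ∀ w ∈ Metric.closedBall (0 : ℂ) r, g w ≠ 0 := by
    intro w hw
    have hwr : ‖w‖ ≤ r := mem_closedBall_zero_iff.1 hw
    exact hnz _ (hmem μ w hwr (by rw [hμnorm]; exact htr)) (hAne μ w hμne)
  have hgΩ : ∀ w ∈ Metric.closedBall (0 : ℂ) r, A μ w ∈ Ω := by
    intro w hw
    exact hballΩ (hmem μ w (mem_closedBall_zero_iff.1 hw) (by rw [hμnorm]; exact htr))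
  set h : ℂ → ℂ := fun w => (g w)⁻¹ with hh
  have hhd : DifferentiableOn ℂ h (Metric.closedBall (0 : ℂ) r) := by
    intro w hw
    exact ((hdiffA μ w (hgΩ w hw)).inv (hgne w hw)).differentiableWithinAt
  have hdc : DiffContOnCl ℂ h (Metric.ball (0 : ℂ) r) := by
    apply DifferentiableOn.diffContOnCl
    rwa [closure_ball (0 : ℂ) hrpos.ne']
  have hbd : ∀ w ∈ frontier (Metric.ball (0 : ℂ) r), ‖h w‖ ≤ (m / 2)⁻¹ := by
    rw [frontier_ball (0 : ℂ) hrpos.ne']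
    intro w hw
    have hwr : ‖w‖ = r := mem_sphere_zero_iff_norm.1 hw
    have hx : A μ w ∈ Metric.closedBall a (ε / 2) := by
      rw [Metric.mem_closedBall]
      calc dist (A μ w) a ≤ ‖w‖ + ‖μ‖ := hdist μ w
        _ ≤ r + r := by rw [hwr, hμnorm]; linarith
        _ = ε / 2 := by rw [hr]; ring
    have hy : A 0 w ∈ Metric.closedBall a (ε / 2) := by
      rw [Metric.mem_closedBall]
      calc dist (A 0 w) a ≤ ‖w‖ + ‖(0 : ℂ)‖ := hdist 0 w
        _ ≤ r + r := by rw [hwr, norm_zero]; linarith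
        _ = ε / 2 := by rw [hr]; ring
    have hd2 : dist (A μ w) (A 0 w) < δ := by
      rw [dist_eq_norm]
      have hsub : A μ w - A 0 w = μ • e1 := by
        simp only [hA]; abel_nf; simp
      rw [hsub, norm_smul]
      calc ‖μ‖ * ‖e1‖ ≤ t * 1 := by rw [hμnorm]; exact mul_le_mul_of_nonneg_left hne1 htpos.le
        _ < δ := by linarith
    have hcl := hδf _ hx _ hy hd2
    have hfy : m ≤ ‖f (A 0 w)‖ := hmin hw
    have h2 : ‖f (A 0 w)‖ - ‖g w‖ ≤ ‖f (A 0 w) - g w‖ := norm_sub_norm_le _ _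
    have h3 : ‖f (A 0 w) - g w‖ = dist (f (A μ w)) (f (A 0 w)) := by
      rw [dist_eq_norm, ← norm_neg]; congr 1; simp [hg]
    have h1 : m / 2 ≤ ‖g w‖ := by
      rw [h3] at h2; linarith
    have : ‖h w‖ = ‖g w‖⁻¹ := by rw [hh]; exact norm_inv _
    rw [this]
    exact inv_anti₀ (by positivity) h1
  have h0mem : (0 : ℂ) ∈ closure (Metric.ball (0 : ℂ) r) := by
    rw [closure_ball (0 : ℂ) hrpos.ne']
    exact Metric.mem_closedBall_self hrpos.le
  have hc := Complex.norm_le_of_forall_mem_frontier_norm_le (Metric.isBounded_ball) hdc hbd h0mem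
  have hg0ne : g 0 ≠ 0 := hgne 0 (Metric.mem_closedBall_self hrpos.le)
  have hg0pos : 0 < ‖g 0‖ := norm_pos_iff.2 hg0ne
  have hc2 : m / 2 ≤ ‖g 0‖ := by
    rw [hh, norm_inv] at hc
    exact (inv_le_inv₀ hg0pos (by positivity)).1 hc
  -- but g 0 = f(a + μ e1) is small
  have hsmall : ‖g 0‖ < m / 2 := by
    have hd3 : dist (A μ 0) a < δ₂ := by
      calc dist (A μ 0) a ≤ ‖(0 : ℂ)‖ + ‖μ‖ := hdist μ 0
        _ = t := by rw [norm_zero, hμnorm]; ring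
        _ < δ₂ := htδ₂
    have := hδ₂f hd3
    rwa [hfa, dist_zero_right] at this
  linarith
end

section
/- Let n ≥ 2, let Ω ⊆ ℂⁿ be a domain, and let f be holomorphic on Ω with f not identically zero. Then the zero set N(f) = {z ∈ Ω : f(z) = 0}, if nonempty, is not compact. -/
open Metric Set Filter

lemma line_vanish {n : ℕ} {Ω : Set (Fin n → ℂ)}
    {f : (Fin n → ℂ) → ℂ} (hf : DifferentiableOn ℂ f Ω)
    (x v : Fin n → ℂ) {ρ : ℝ} (hρ : 1 < ρ)
    (hmem : ∀ ζ : ℂ, ‖ζ‖ < ρ → x + ζ • v ∈ Ω)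
    (h0 : ∀ᶠ ζ in nhds (0 : ℂ), f (x + ζ • v) = 0) :
    f (x + v) = 0 := by
  have hφ : Differentiable ℂ (fun ζ : ℂ => x + ζ • v) :=
    (differentiable_const x).add (differentiable_id.smul_const v)
  have hH : DifferentiableOn ℂ (fun ζ : ℂ => f (x + ζ • v)) (ball (0:ℂ) ρ) := by
    apply hf.comp hφ.differentiableOn
    intro ζ hζ
    exact hmem ζ (by simpa [dist_eq_norm] using hζ)
  have hA : AnalyticOnNhd ℂ (fun ζ : ℂ => f (x + ζ • v)) (ball (0:ℂ) ρ) :=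
    hH.analyticOnNhd isOpen_ball
  have hzero := hA.eqOn_zero_of_preconnected_of_eventuallyEq_zero
    (convex_ball (0:ℂ) ρ).isPreconnected
    (mem_ball_self (by linarith)) (by exact h0)
  have h1 : (1:ℂ) ∈ ball (0:ℂ) ρ := by simpa using hρ
  simpa using hzero h1


lemma case1 {n : ℕ} {Ω : Set (Fin n → ℂ)} (hΩ : IsOpen Ω) (i0 : Fin n)
    {f : (Fin n → ℂ) → ℂ} (hf : DifferentiableOn ℂ f Ω)
    {a : Fin n → ℂ} (haΩ : a ∈ Ω) (hfa : f a = 0)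
    (hmax : ∀ z ∈ Ω, f z = 0 → (z i0).re ≤ (a i0).re)
    {v : Fin n → ℂ} (hv0 : v i0 = 0) (hvn : ‖v‖ = 1)
    (hline : ¬ ∀ᶠ ζ in nhds (0:ℂ), f (a + ζ • v) = 0) : False := by
  obtain ⟨R, hR, hRΩ⟩ := Metric.isOpen_iff.1 hΩ a haΩ
  have hmem : ∀ ζ : ℂ, ‖ζ‖ < R → a + ζ • v ∈ Ω := by
    intro ζ hζ
    apply hRΩ
    simp only [mem_ball, dist_eq_norm, add_sub_cancel_left, norm_smul, hvn, mul_one]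
    exact hζ
  have hH : DifferentiableOn ℂ (fun ζ : ℂ => f (a + ζ • v)) (ball (0:ℂ) R) := by
    apply hf.comp ((differentiable_const a).add (differentiable_id.smul_const v)).differentiableOn
    intro ζ hζ
    exact hmem ζ (by simpa [dist_eq_norm] using hζ)
  have hA : AnalyticAt ℂ (fun ζ : ℂ => f (a + ζ • v)) 0 :=
    (hH.analyticOnNhd isOpen_ball) 0 (mem_ball_self hR)
  have hiso : ∀ᶠ ζ in nhdsWithin (0:ℂ) {(0:ℂ)}ᶜ, f (a + ζ • v) ≠ 0 :=
    (hA.eventually_eq_zero_or_eventually_ne_zero).resolve_left hline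
  rw [eventually_nhdsWithin_iff, Metric.eventually_nhds_iff] at hiso
  obtain ⟨r', hr', hiso⟩ := hiso
  -- choose the radius r
  set r : ℝ := min (r'/2) (R/4) with hrdef
  have hrpos : 0 < r := lt_min (by linarith) (by linarith)
  have hrR : r ≤ R/4 := min_le_right _ _
  have hrne : ∀ ζ : ℂ, ‖ζ‖ = r → f (a + ζ • v) ≠ 0 := by
    intro ζ hζ
    apply hiso
    · rw [dist_zero_right, hζ]; exact lt_of_le_of_lt (min_le_left _ _) (by linarith)
    · simp only [mem_compl_iff, mem_singleton_iff]
      intro h; rw [h] at hζ; simp at hζ; linarith [hζ ▸ hrpos]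
  -- minimum of ‖f∘line‖ on the sphere
  have hsph : (sphere (0:ℂ) r).Nonempty := NormedSpace.sphere_nonempty.2 hrpos.le
  have hcont : ContinuousOn (fun ζ : ℂ => ‖f (a + ζ • v)‖) (sphere (0:ℂ) r) := by
    apply ContinuousOn.norm
    apply (hH.continuousOn).mono
    intro ζ hζ
    simp only [mem_sphere_iff_norm, sub_zero] at hζ
    simp only [mem_ball, dist_zero_right, hζ]
    linarith
  obtain ⟨ζ₀, hζ₀s, hζ₀min⟩ := (isCompact_sphere (0:ℂ) r).exists_isMinOn hsph hcont
  set δ : ℝ := ‖f (a + ζ₀ • v)‖ with hδdef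
  have hδpos : 0 < δ := by
    apply norm_pos_iff.2
    apply hrne
    simpa [mem_sphere_iff_norm] using hζ₀s
  -- uniform continuity on closedBall a (3R/4)
  have hsubΩ : closedBall a (3*R/4) ⊆ Ω := fun z hz =>
    hRΩ (lt_of_le_of_lt (mem_closedBall.1 hz) (by linarith))
  have huc : UniformContinuousOn f (closedBall a (3*R/4)) :=
    (isCompact_closedBall a (3*R/4)).uniformContinuousOn_of_continuous
      (hf.continuousOn.mono hsubΩ)
  rw [Metric.uniformContinuousOn_iff] at huc
  obtain ⟨s₀, hs₀, hucs⟩ := huc (δ/2) (by linarith)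
  set s : ℝ := min (s₀/2) (R/4) with hsdef
  have hspos : 0 < s := lt_min (by linarith) (by linarith)
  have hsR : s ≤ R/4 := min_le_right _ _
  set e0 : Fin n → ℂ := Pi.single i0 1 with he0
  have he0n : ‖e0‖ ≤ 1 := by
    rw [pi_norm_le_iff_of_nonneg (by norm_num)]
    intro i
    by_cases h : i = i0 <;> simp [he0, Pi.single_apply, h]
  -- key estimate: for all ‖ζ‖ ≤ r, ‖f (a + s•e0 + ζ•v) - f (a + ζ•v)‖ < δ/2
  have hse0 : ‖(s:ℂ) • e0‖ ≤ s := by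
    rw [norm_smul]
    calc ‖(s:ℂ)‖ * ‖e0‖ ≤ ‖(s:ℂ)‖ * 1 := by gcongr
      _ = s := by rw [mul_one, Complex.norm_real, Real.norm_eq_abs, abs_of_pos hspos]
  have hdist : ∀ ζ : ℂ, ‖ζ‖ ≤ r →
      dist (f (a + (s:ℂ) • e0 + ζ • v)) (f (a + ζ • v)) < δ/2 := by
    intro ζ hζ
    apply hucs
    · rw [mem_closedBall, dist_eq_norm]
      have : a + (s:ℂ) • e0 + ζ • v - a = (s:ℂ) • e0 + ζ • v := by ring_nf
      rw [this]
      calc ‖(s:ℂ) • e0 + ζ • v‖ ≤ ‖(s:ℂ) • e0‖ + ‖ζ • v‖ := norm_add_le _ _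
        _ ≤ s + r := by
            have h2 : ‖ζ • v‖ ≤ r := by rw [norm_smul, hvn, mul_one]; exact hζ
            exact add_le_add hse0 h2
        _ ≤ 3*R/4 := by linarith
    · rw [mem_closedBall, dist_eq_norm, add_sub_cancel_left, norm_smul, hvn, mul_one]
      linarith
    · rw [dist_eq_norm]
      have : a + (s:ℂ) • e0 + ζ • v - (a + ζ • v) = (s:ℂ) • e0 := by ring_nf
      rw [this]
      calc ‖(s:ℂ) • e0‖ ≤ s := hse0
        _ < s₀ := lt_of_le_of_lt (min_le_left _ _) (by linarith)
  set G : ℂ → ℂ := fun ζ => f (a + (s:ℂ) • e0 + ζ • v) with hGdef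
  have hGmem : ∀ ζ : ℂ, ‖ζ‖ < 2*r → a + (s:ℂ) • e0 + ζ • v ∈ Ω := by
    intro ζ hζ
    apply hsubΩ
    rw [mem_closedBall, dist_eq_norm]
    have h1 : a + (s:ℂ) • e0 + ζ • v - a = (s:ℂ) • e0 + ζ • v := by ring_nf
    rw [h1]
    have h2 : ‖ζ • v‖ ≤ 2*r := by rw [norm_smul, hvn, mul_one]; exact hζ.le
    calc ‖(s:ℂ) • e0 + ζ • v‖ ≤ ‖(s:ℂ) • e0‖ + ‖ζ • v‖ := norm_add_le _ _
      _ ≤ s + 2*r := add_le_add hse0 h2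
      _ ≤ 3*R/4 := by linarith
  have hGdiff : DifferentiableOn ℂ G (ball (0:ℂ) (2*r)) := by
    apply hf.comp ((differentiable_const (a + (s:ℂ) • e0)).add
      (differentiable_id.smul_const v)).differentiableOn
    intro ζ hζ
    exact hGmem ζ (by simpa [dist_eq_norm] using hζ)
  have hzero : ∃ ζ : ℂ, ‖ζ‖ ≤ r ∧ G ζ = 0 := by
    by_contra hno
    push_neg at hno
    have hGne : ∀ ζ ∈ closedBall (0:ℂ) r, G ζ ≠ 0 := by
      intro ζ hζ
      exact hno ζ (by simpa [mem_closedBall, dist_zero_right] using hζ)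
    have hsub : closedBall (0:ℂ) r ⊆ ball (0:ℂ) (2*r) :=
      closedBall_subset_ball (by linarith)
    have hd : DiffContOnCl ℂ (fun ζ => (G ζ)⁻¹) (ball (0:ℂ) r) := by
      constructor
      · apply DifferentiableOn.inv
        · exact hGdiff.mono (ball_subset_ball (by linarith))
        · intro ζ hζ; exact hGne ζ (ball_subset_closedBall hζ)
      · rw [closure_ball (0:ℂ) hrpos.ne']
        exact ((hGdiff.continuousOn).mono hsub).inv₀ hGne
    have hbound : ∀ ζ ∈ frontier (ball (0:ℂ) r), ‖(G ζ)⁻¹‖ ≤ (δ/2)⁻¹ := by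
      intro ζ hζ
      rw [frontier_ball (0:ℂ) hrpos.ne'] at hζ
      rw [mem_sphere_iff_norm, sub_zero] at hζ
      have h1 : δ ≤ ‖f (a + ζ • v)‖ := hζ₀min (by simpa [mem_sphere_iff_norm] using hζ)
      have h2 : dist (G ζ) (f (a + ζ • v)) < δ/2 := hdist ζ hζ.le
      have h3 : δ/2 ≤ ‖G ζ‖ := by
        have := norm_sub_norm_le (f (a + ζ • v)) (G ζ)
        rw [dist_comm, dist_eq_norm] at h2
        linarith
      rw [norm_inv]
      exact inv_anti₀ (by linarith) h3
    have h0cl : (0:ℂ) ∈ closure (ball (0:ℂ) r) := by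
      rw [closure_ball (0:ℂ) hrpos.ne']
      exact mem_closedBall_self hrpos.le
    have hfin := Complex.norm_le_of_forall_mem_frontier_norm_le isBounded_ball hd hbound h0cl
    -- ‖(G 0)⁻¹‖ ≤ (δ/2)⁻¹ gives δ/2 ≤ ‖G 0‖
    have hG0ne : G 0 ≠ 0 := hGne 0 (mem_closedBall_self hrpos.le)
    rw [norm_inv] at hfin
    have h4 : δ/2 ≤ ‖G 0‖ := by
      have hpos : 0 < ‖G 0‖ := norm_pos_iff.2 hG0ne
      have := (inv_le_inv₀ hpos (by linarith : (0:ℝ) < δ/2)).1 hfin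
      linarith
    have h5 : ‖G 0‖ < δ/2 := by
      have := hdist 0 (by simp [hrpos.le])
      simp only [zero_smul, add_zero] at this
      rw [dist_eq_norm, hfa] at this
      simpa [hGdef] using this
    linarith
  obtain ⟨ζs, hζs, hGz⟩ := hzero
  have hzΩ : a + (s:ℂ) • e0 + ζs • v ∈ Ω := hGmem ζs (lt_of_le_of_lt hζs (by linarith))
  have hle := hmax _ hzΩ hGz
  have hcoord : (a + (s:ℂ) • e0 + ζs • v) i0 = a i0 + s := by
    simp [he0, Pi.single_eq_same, hv0]
  rw [hcoord] at hle
  simp only [Complex.add_re, Complex.ofReal_re] at hle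
  linarith


lemma case2 {n : ℕ} {Ω : Set (Fin n → ℂ)} (hΩ : IsOpen Ω) (i0 i1 : Fin n) (hi : i1 ≠ i0)
    {f : (Fin n → ℂ) → ℂ} (hf : DifferentiableOn ℂ f Ω)
    (hKc : IsCompact {z ∈ Ω | f z = 0})
    {a : Fin n → ℂ} (haΩ : a ∈ Ω) (hfa : f a = 0)
    (hdeg : ∀ v : Fin n → ℂ, v i0 = 0 → ∀ᶠ ζ in nhds (0:ℂ), f (a + ζ • v) = 0) : False := by
  classical
  set K := {z ∈ Ω | f z = 0} with hKdef
  -- the parametrizing space of the hyperplane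
  set L : ({i : Fin n // i ≠ i0} → ℂ) → (Fin n → ℂ) :=
    fun w => fun i => if h : i = i0 then 0 else w ⟨i, h⟩ with hLdef
  have hL0 : ∀ w, (L w) i0 = 0 := fun w => by simp [hLdef]
  have hLsub : ∀ w q, L w - L q = L (w - q) := by
    intro w q; funext i
    by_cases h : i = i0 <;> simp [hLdef, h]
  have hLadd : ∀ w q, L w + L q = L (w + q) := by
    intro w q; funext i
    by_cases h : i = i0 <;> simp [hLdef, h]
  have hLsmul : ∀ (ζ : ℂ) w, ζ • L w = L (ζ • w) := by
    intro ζ w; funext i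
    by_cases h : i = i0 <;> simp [hLdef, h]
  have hLnorm : ∀ w, ‖L w‖ = ‖w‖ := by
    intro w
    apply le_antisymm
    · rw [pi_norm_le_iff_of_nonneg (norm_nonneg w)]
      intro i
      by_cases h : i = i0
      · simp [hLdef, h]
      · simp only [hLdef, dif_neg h]
        exact norm_le_pi_norm w ⟨i, h⟩
    · rw [pi_norm_le_iff_of_nonneg (norm_nonneg (L w))]
      intro j
      have : w j = (L w) j.1 := by simp [hLdef, j.2]
      rw [this]
      exact norm_le_pi_norm (L w) j.1
  have hLcont : Continuous L := by
    apply continuous_pi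
    intro i
    by_cases h : i = i0
    · simpa [hLdef, h] using continuous_const
    · simpa [hLdef, h] using continuous_apply (⟨i, h⟩ : {i : Fin n // i ≠ i0})
  have hιcont : Continuous (fun w => a + L w) := continuous_const.add hLcont
  obtain ⟨R, hR, hRΩ⟩ := Metric.isOpen_iff.1 hΩ a haΩ
  -- vanishing on the hyperplane slice of the ball
  have hballv : ∀ w : {i : Fin n // i ≠ i0} → ℂ, ‖w‖ < R → f (a + L w) = 0 := by
    intro w hw
    rcases eq_or_ne w 0 with rfl | hw0
    · have : L 0 = 0 := by funext i; by_cases h : i = i0 <;> simp [hLdef, h]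
      rw [this, add_zero]; exact hfa
    · have hnw : 0 < ‖w‖ := norm_pos_iff.2 hw0
      apply line_vanish hf a (L w) (ρ := R / ‖w‖)
      · rw [lt_div_iff₀ hnw, one_mul]; exact hw
      · intro ζ hζ
        apply hRΩ
        rw [mem_ball, dist_eq_norm, add_sub_cancel_left, norm_smul, hLnorm]
        rw [lt_div_iff₀ hnw] at hζ
        exact hζ
      · exact hdeg (L w) (hL0 w)
  set O : Set ({i : Fin n // i ≠ i0} → ℂ) := {w | ∀ᶠ u in nhds w, f (a + L u) = 0} with hOdef
  have hOopen : IsOpen O := isOpen_setOf_eventually_nhds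
  have hOzero : ∀ w ∈ O, f (a + L w) = 0 := fun w hw => hw.self_of_nhds
  set V : Set ({i : Fin n // i ≠ i0} → ℂ) := (fun w => a + L w) ⁻¹' Ω with hVdef
  have hVopen : IsOpen V := hΩ.preimage hιcont
  have h0V : (0 : {i : Fin n // i ≠ i0} → ℂ) ∈ V := by
    have hL00 : L 0 = 0 := by funext i; by_cases h : i = i0 <;> simp [hLdef, h]
    simp only [hVdef, mem_preimage, hL00, add_zero]
    exact haΩ
  have h0O : (0 : {i : Fin n // i ≠ i0} → ℂ) ∈ O := by
    rw [hOdef, mem_setOf_eq, Metric.eventually_nhds_iff]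
    exact ⟨R, hR, fun w hw => hballv w (by simpa [dist_zero_right] using hw)⟩
  set C := connectedComponentIn V 0 with hCdef
  have hCopen : IsOpen C := hVopen.connectedComponentIn
  have hCV : C ⊆ V := connectedComponentIn_subset V 0
  have h0C : (0 : {i : Fin n // i ≠ i0} → ℂ) ∈ C := mem_connectedComponentIn h0V
  -- propagation of vanishing
  have hprop : ∀ p ∈ C, p ∈ closure O → p ∈ O := by
    intro p hpC hpcl
    have hpΩ : a + L p ∈ Ω := hCV hpC
    obtain ⟨ρ, hρ, hρΩ⟩ := Metric.isOpen_iff.1 hΩ _ hpΩ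
    obtain ⟨q, hqO, hqd⟩ := Metric.mem_closure_iff.1 hpcl (ρ/3) (by linarith)
    have hball : ∀ w, dist w q < ρ/2 → f (a + L w) = 0 := by
      intro w hw
      rcases eq_or_ne w q with rfl | hwq
      · exact hOzero w hqO
      · have hnwq : 0 < ‖w - q‖ := by
          rw [norm_pos_iff]; exact sub_ne_zero_of_ne hwq
        have key : f ((a + L q) + L (w - q)) = 0 := by
          apply line_vanish hf (a + L q) (L (w - q)) (ρ := (2*ρ/3) / ‖w - q‖)
          · rw [lt_div_iff₀ hnwq, one_mul]
            rw [dist_eq_norm] at hw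
            linarith
          · intro ζ hζ
            apply hρΩ
            rw [mem_ball, dist_eq_norm]
            have heq : a + L q + ζ • L (w - q) - (a + L p) = (L q - L p) + ζ • L (w - q) := by
              ring_nf
            rw [heq]
            have h1 : ‖L q - L p‖ < ρ/3 := by
              rw [hLsub, hLnorm, ← dist_eq_norm, dist_comm]
              exact hqd
            have h2 : ‖ζ • L (w - q)‖ < 2*ρ/3 := by
              rw [norm_smul, hLnorm]
              rw [lt_div_iff₀ hnwq] at hζ
              exact hζ
            calc ‖(L q - L p) + ζ • L (w - q)‖ ≤ ‖L q - L p‖ + ‖ζ • L (w - q)‖ := norm_add_le _ _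
              _ < ρ := by linarith
          · -- eventual vanishing near 0 along the line, pulled back from q ∈ O
            have htend : Tendsto (fun ζ : ℂ => q + ζ • (w - q)) (nhds 0) (nhds q) := by
              have : Continuous (fun ζ : ℂ => q + ζ • (w - q)) :=
                continuous_const.add (continuous_id.smul continuous_const)
              have h := this.tendsto 0
              simpa using h
            have hev := htend.eventually hqO
            apply hev.mono
            intro ζ hζ
            have heq2 : a + L q + ζ • L (w - q) = a + L (q + ζ • (w - q)) := by
              rw [hLsmul, add_assoc, hLadd]
            rw [heq2]
            exact hζ
        have heq3 : a + L q + L (w - q) = a + L w := by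
          rw [add_assoc, hLadd]
          have hqw : q + (w - q) = w := by abel
          rw [hqw]
        rwa [heq3] at key
      -- end hball
    rw [hOdef, mem_setOf_eq, Metric.eventually_nhds_iff]
    refine ⟨ρ/2 - dist p q, by linarith, fun w hw => hball w ?_⟩
    calc dist w q ≤ dist w p + dist p q := dist_triangle _ _ _
      _ < (ρ/2 - dist p q) + dist p q := by linarith
      _ = ρ/2 := by ring
  -- C ⊆ O by connectedness
  have hCO : C ⊆ O := by
    apply IsPreconnected.subset_left_of_subset_union hOopen
      (isClosed_closure (s := O)).isOpen_compl
      (disjoint_compl_right.mono_left subset_closure)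
      (fun w hw => ?_) ⟨0, h0C, h0O⟩ isPreconnected_connectedComponentIn
    by_cases hcl : w ∈ closure O
    · exact Or.inl (hprop w hw hcl)
    · exact Or.inr hcl
  -- C is contained in the (closed) preimage of K
  set T : Set ({i : Fin n // i ≠ i0} → ℂ) := (fun w => a + L w) ⁻¹' K with hTdef
  have hTclosed : IsClosed T := hKc.isClosed.preimage hιcont
  have hCT : C ⊆ T := fun w hw => ⟨hCV hw, hOzero w (hCO hw)⟩
  have hTV : T ⊆ V := fun w hw => hw.1
  -- C is closed
  have hCclosed : IsClosed C := by
    have h1 : closure C ⊆ T := hTclosed.closure_subset_iff.2 hCT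
    have h2 : closure C ⊆ C :=
      (isPreconnected_connectedComponentIn.closure).subset_connectedComponentIn
        (subset_closure h0C) (h1.trans hTV)
    exact isClosed_of_closure_subset h2
  -- hence C = univ, contradicting boundedness
  have hCuniv : C = univ :=
    IsClopen.eq_univ ⟨hCclosed, hCopen⟩ ⟨0, h0C⟩
  obtain ⟨M, hM⟩ := hKc.isBounded.subset_closedBall a
  have hbig : ∀ w : {i : Fin n // i ≠ i0} → ℂ, ‖w‖ ≤ M := by
    intro w
    have hwC : w ∈ C := hCuniv ▸ mem_univ w
    have := hM (hCT hwC)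
    rw [mem_closedBall, dist_eq_norm, add_sub_cancel_left, hLnorm] at this
    exact this
  have := hbig (fun _ => ((M+1 : ℝ) : ℂ))
  have hj := norm_le_pi_norm (fun _ : {i : Fin n // i ≠ i0} => ((M+1 : ℝ) : ℂ)) ⟨i1, hi⟩
  rw [Complex.norm_real, Real.norm_eq_abs] at hj
  have : |M+1| ≤ M := le_trans hj this
  have := le_abs_self (M+1)
  linarith [abs_nonneg (M+1)]


/-- **Zero sets are not compact.** Let `n ≥ 2`, `Ω ⊆ ℂⁿ` a domain and `f` holomorphic on
`Ω`, not identically zero. Then the zero set `N(f) = {z ∈ Ω : f z = 0}`, if nonempty,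
is not compact. -/
theorem zero_set_not_compact (n : ℕ) (hn : 2 ≤ n) (Ω : Set (Fin n → ℂ))
    (hΩopen : IsOpen Ω) (hΩconn : IsConnected Ω)
    (f : (Fin n → ℂ) → ℂ) (hf : DifferentiableOn ℂ f Ω)
    (hfne : ∃ z ∈ Ω, f z ≠ 0)
    (hne : {z ∈ Ω | f z = 0}.Nonempty) :
    ¬ IsCompact {z ∈ Ω | f z = 0} := by
  intro hKc
  have h0n : 0 < n := by omega
  have h1n : 1 < n := by omega
  set i0 : Fin n := ⟨0, h0n⟩ with hi0
  set i1 : Fin n := ⟨1, h1n⟩ with hi1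
  have hi : i1 ≠ i0 := by
    intro h
    have := congrArg Fin.val h
    simp [hi0, hi1] at this
  obtain ⟨a, haK, hamax⟩ := hKc.exists_isMaxOn hne
    ((Complex.continuous_re.comp (continuous_apply i0)).continuousOn)
  obtain ⟨haΩ, hfa⟩ := haK
  by_cases Hdeg : ∀ v : Fin n → ℂ, v i0 = 0 → ∀ᶠ ζ in nhds (0:ℂ), f (a + ζ • v) = 0
  · exact case2 hΩopen i0 i1 hi hf hKc haΩ hfa Hdeg
  · push_neg at Hdeg
    obtain ⟨v, hv0, hline⟩ := Hdeg
    have hvne : v ≠ 0 := by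
      rintro rfl
      apply hline
      filter_upwards with ζ
      simp [hfa]
    have hvnorm : (0:ℝ) < ‖v‖ := norm_pos_iff.2 hvne
    set v' : Fin n → ℂ := ((‖v‖ : ℂ))⁻¹ • v with hv'
    have hv'0 : v' i0 = 0 := by simp [hv', hv0]
    have hv'norm : ‖v'‖ = 1 := by
      rw [hv', norm_smul, norm_inv, Complex.norm_real, Real.norm_eq_abs,
        abs_of_pos hvnorm, inv_mul_cancel₀ hvnorm.ne']
    have hline' : ¬ ∀ᶠ ζ in nhds (0:ℂ), f (a + ζ • v') = 0 := by
      intro hev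
      apply hline
      have htend : Filter.Tendsto (fun ζ : ℂ => ζ * (‖v‖ : ℂ)) (nhds 0) (nhds 0) := by
        have : Continuous (fun ζ : ℂ => ζ * (‖v‖ : ℂ)) := continuous_id.mul continuous_const
        simpa using this.tendsto 0
      have := htend.eventually hev
      apply this.mono
      intro ζ hζ
      have : (ζ * (‖v‖ : ℂ)) • v' = ζ • v := by
        rw [hv', smul_smul, mul_assoc, mul_inv_cancel₀ (by
          simpa using hvnorm.ne' : ((‖v‖ : ℂ)) ≠ 0), mul_one]
      rw [this] at hζ; exact fun h => h hζ
    apply case1 hΩopen i0 hf haΩ hfa ?_ hv'0 hv'norm hline'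
    intro z hz hz0
    exact hamax ⟨hz, hz0⟩
end

section
/- Let n ≥ 2, let Ω ⊆ ℂⁿ be a domain, and let f be holomorphic on Ω with f not identically zero. Then the complement Ω \ N(f) of the zero set N(f) = {z ∈ Ω : f(z) = 0} is a nonempty connected open set. -/
open Set Metric Filter Topology Convex


lemma countable_zeros_1d {D : Set ℂ} (hDc : IsPreconnected D)
    {g : ℂ → ℂ} (hg : AnalyticOnNhd ℂ g D) {z0 : ℂ} (hz0 : z0 ∈ D) (h0 : g z0 ≠ 0) :
    {z ∈ D | g z = 0}.Countable := by
  set Z := {z ∈ D | g z = 0} with hZdef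
  have hdisc : ∀ z ∈ Z, 𝓝[≠] z ⊓ Filter.principal Z = ⊥ := by
    intro z hz
    rcases (hg z hz.1).eventually_eq_zero_or_eventually_ne_zero with h | h
    · exact absurd (hg.eqOn_zero_of_preconnected_of_eventuallyEq_zero hDc hz.1 h hz0) h0
    · apply Filter.eventually_false_iff_eq_bot.mp
      have h1 : ∀ᶠ w in 𝓝[≠] z ⊓ Filter.principal Z, g w ≠ 0 := Filter.Eventually.filter_mono inf_le_left h
      have h2 : ∀ᶠ w in 𝓝[≠] z ⊓ Filter.principal Z, w ∈ Z :=
        Filter.Eventually.filter_mono inf_le_right (Filter.eventually_principal.mpr fun _ h => h)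
      filter_upwards [h1, h2] with w hw1 hw2
      exact hw1 hw2.2
  haveI : DiscreteTopology ↥Z := discreteTopology_subtype_iff.mpr hdisc
  haveI : TopologicalSpace.SeparableSpace ↥Z := TopologicalSpace.SecondCountableTopology.to_separableSpace
  exact Set.countable_coe_iff.mp (TopologicalSpace.separableSpace_iff_countable.mp inferInstance)


lemma joinedIn_convex_diff_countable {D : Set ℂ} (hD : Convex ℝ D) (hDo : IsOpen D)
    {Z : Set ℂ} (hZ : Z.Countable) {a b : ℂ} (ha : a ∈ D \ Z) (hb : b ∈ D \ Z) :
    JoinedIn (D \ Z) a b := by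
  rcases eq_or_ne a b with rfl | hab
  · exact JoinedIn.refl ha
  set c : ℂ := (2 : ℝ)⁻¹ • (a + b) with hc
  set x : ℂ := (2 : ℝ)⁻¹ • (b - a) with hx
  have Ia : c - x = a := by simp only [hc, hx]; module
  have Ib : c + x = b := by simp only [hc, hx]; module
  have x_ne_zero : x ≠ 0 := by
    simp only [hx]
    simpa using sub_ne_zero.2 hab.symm
  have hcD : c ∈ D := by
    apply hD.segment_subset ha.1 hb.1
    exact ⟨2⁻¹, 2⁻¹, by norm_num, by norm_num, by norm_num, by module⟩
  obtain ⟨ε, εpos, hball⟩ := Metric.isOpen_iff.mp hDo c hcD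
  have hrank : 1 < Module.rank ℝ ℂ := by
    rw [Complex.rank_real_complex]; norm_num
  obtain ⟨y, hy⟩ : ∃ y, LinearIndependent ℝ ![x, y] :=
    exists_linearIndependent_pair_of_one_lt_rank hrank x_ne_zero
  have y_ne : y ≠ 0 := by simpa using hy.ne_zero 1
  have hpos : 0 < ε / ‖y‖ := div_pos εpos (norm_pos_iff.mpr y_ne)
  have A : Set.Countable {t : ℝ | ([c + x -[ℝ] c + t • y] ∩ Z).Nonempty} := by
    apply countable_setOf_nonempty_of_disjoint _ (fun t ↦ inter_subset_right) hZ
    intro t t' htt'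
    apply disjoint_iff_inter_eq_empty.2
    have N : {c + x} ∩ Z = ∅ := by
      simpa only [singleton_inter_eq_empty, Ib] using hb.2
    rw [inter_assoc, inter_comm Z, inter_assoc, inter_self, ← inter_assoc, ← subset_empty_iff, ← N]
    apply inter_subset_inter_left
    apply Eq.subset
    apply segment_inter_eq_endpoint_of_linearIndependent_of_ne hy htt'.symm
  have B : Set.Countable {t : ℝ | ([c - x -[ℝ] c + t • y] ∩ Z).Nonempty} := by
    apply countable_setOf_nonempty_of_disjoint _ (fun t ↦ inter_subset_right) hZ
    intro t t' htt'
    apply disjoint_iff_inter_eq_empty.2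
    have N : {c - x} ∩ Z = ∅ := by
      simpa only [singleton_inter_eq_empty, Ia] using ha.2
    rw [inter_assoc, inter_comm Z, inter_assoc, inter_self, ← inter_assoc, ← subset_empty_iff, ← N]
    apply inter_subset_inter_left
    rw [sub_eq_add_neg _ x]
    apply Eq.subset
    apply segment_inter_eq_endpoint_of_linearIndependent_of_ne _ htt'.symm
    convert hy.units_smul ![-1, 1]
    simp [← List.ofFn_inj]
    all_goals rfl
  obtain ⟨t, htmem, htball⟩ :
      ∃ t, t ∈ ({t : ℝ | ([c + x -[ℝ] c + t • y] ∩ Z).Nonempty}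
        ∪ {t : ℝ | ([c - x -[ℝ] c + t • y] ∩ Z).Nonempty})ᶜ ∧ t ∈ Metric.ball (0:ℝ) (ε / ‖y‖) :=
    ((A.union B).dense_compl ℝ).exists_mem_open Metric.isOpen_ball ⟨0, Metric.mem_ball_self hpos⟩
  set z := c + t • y with hz
  have hzD : z ∈ D := by
    apply hball
    simp only [hz, mem_ball, dist_self_add_left]
    rw [norm_smul]
    calc ‖t‖ * ‖y‖ < (ε / ‖y‖) * ‖y‖ := by
          apply mul_lt_mul_of_pos_right _ (norm_pos_iff.mpr y_ne)
          simpa [Real.norm_eq_abs, abs_sub_comm] using Metric.mem_ball.mp htball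
      _ = ε := div_mul_cancel₀ _ (norm_ne_zero_iff.mpr y_ne)
  simp only [compl_union, mem_inter_iff, mem_compl_iff, mem_setOf_eq,
    not_nonempty_iff_eq_empty] at htmem
  have JA : JoinedIn (D \ Z) a z := by
    apply JoinedIn.of_segment_subset
    rw [subset_diff]
    constructor
    · exact hD.segment_subset ha.1 hzD
    · rw [disjoint_iff_inter_eq_empty]
      convert htmem.2
      exacts [rfl, rfl, Ia.symm]
  have JB : JoinedIn (D \ Z) b z := by
    apply JoinedIn.of_segment_subset
    rw [subset_diff]
    constructor
    · exact hD.segment_subset hb.1 hzD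
    · rw [disjoint_iff_inter_eq_empty]
      convert htmem.1
      exacts [rfl, rfl, Ib.symm]
  exact JA.trans JB.symm


section Slice
variable {E : Type*} [NormedAddCommGroup E] [NormedSpace ℂ E]

/-- The affine line through `a` with direction `v`, as a map `ℂ → E`. -/
noncomputable def lineMap' (a v : E) : ℂ → E := fun t => a + t • v

lemma lineMap'_diff (a v : E) : Differentiable ℂ (lineMap' a v) :=
  (differentiable_id.smul_const v).const_add a

lemma lineMap'_convex_preimage {B : Set E} (hB : Convex ℝ B) (a v : E) :
    Convex ℝ (lineMap' a v ⁻¹' B) := by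
  let L : ℂ →ₗ[ℝ] E := (LinearMap.toSpanSingleton ℂ E v).restrictScalars ℝ
  let A : ℂ →ᵃ[ℝ] E :=
    { toFun := lineMap' a v
      linear := L
      map_vadd' := by
        intro p q
        simp only [lineMap', L, LinearMap.coe_restrictScalars, LinearMap.toSpanSingleton_apply,
          vadd_eq_add, _root_.add_smul]
        abel }
  exact hB.affine_preimage A

lemma slice_joinedIn {B : Set E} (hB : Convex ℝ B) (hBo : IsOpen B)
    {f : E → ℂ} (hf : DifferentiableOn ℂ f B) {a b : E}
    (ha : a ∈ B) (hb : b ∈ B) (hfa : f a ≠ 0) (hfb : f b ≠ 0) :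
    JoinedIn {z ∈ B | f z ≠ 0} a b := by
  set φ : ℂ → E := lineMap' a (b - a) with hφ
  have hφc : Continuous φ := (lineMap'_diff a (b - a)).continuous
  set D : Set ℂ := φ ⁻¹' B with hD
  have hDo : IsOpen D := hBo.preimage hφc
  have hDconv : Convex ℝ D := lineMap'_convex_preimage hB a (b - a)
  have hφ0 : φ 0 = a := by simp [hφ, lineMap']
  have hφ1 : φ 1 = b := by simp [hφ, lineMap']
  have h0D : (0 : ℂ) ∈ D := by simp only [hD, mem_preimage, hφ0]; exact ha
  have h1D : (1 : ℂ) ∈ D := by simp only [hD, mem_preimage, hφ1]; exact hb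
  set g : ℂ → ℂ := f ∘ φ with hg
  have hgd : DifferentiableOn ℂ g D :=
    hf.comp ((lineMap'_diff a (b - a)).differentiableOn) (fun t ht => ht)
  have hga : AnalyticOnNhd ℂ g D := hgd.analyticOnNhd hDo
  have hg0 : g 0 ≠ 0 := by simp only [hg, Function.comp_apply, hφ0]; exact hfa
  have hg1 : g 1 ≠ 0 := by simp only [hg, Function.comp_apply, hφ1]; exact hfb
  have hZc : {t ∈ D | g t = 0}.Countable :=
    countable_zeros_1d hDconv.isPreconnected hga h0D hg0
  have hj : JoinedIn (D \ {t ∈ D | g t = 0}) 0 1 := by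
    apply joinedIn_convex_diff_countable hDconv hDo hZc
    · exact ⟨h0D, fun h => hg0 h.2⟩
    · exact ⟨h1D, fun h => hg1 h.2⟩
  have := (hj.map hφc)
  rw [hφ0, hφ1] at this
  apply this.mono
  rintro _ ⟨t, ⟨htD, htZ⟩, rfl⟩
  exact ⟨htD, fun h => htZ ⟨htD, h⟩⟩

end Slice
section NoBall
variable {E : Type*} [NormedAddCommGroup E] [NormedSpace ℂ E]

lemma exists_ne_zero_in_ball {Ω : Set E} (hΩo : IsOpen Ω) (hΩc : IsPreconnected Ω)
    {f : E → ℂ} (hf : DifferentiableOn ℂ f Ω) {z0 : E} (hz0 : z0 ∈ Ω) (hfz0 : f z0 ≠ 0)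
    {z : E} (hz : z ∈ Ω) {r : ℝ} (hr : 0 < r) (hball : ball z r ⊆ Ω) :
    ∃ w ∈ ball z r, f w ≠ 0 := by
  by_contra hcon
  push_neg at hcon
  set W : Set E := {p | ∃ ρ > 0, ball p ρ ⊆ Ω ∧ ∀ w ∈ ball p ρ, f w = 0} with hW
  have hWo : IsOpen W := by
    rw [Metric.isOpen_iff]
    rintro p ⟨ρ, hρ, hsub, hzero⟩
    refine ⟨ρ, hρ, fun q hq => ?_⟩
    have hsub' : ball q (ρ - dist q p) ⊆ ball p ρ :=
      ball_subset_ball' (by linarith)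
    exact ⟨ρ - dist q p, by simp [mem_ball] at hq; linarith, hsub'.trans hsub,
      fun w hw => hzero w (hsub' hw)⟩
  have hclosure : ∀ p ∈ Ω, p ∈ closure W → p ∈ W := by
    intro p hp hpc
    obtain ⟨r₀, hr₀, hsub₀⟩ := Metric.isOpen_iff.mp hΩo p hp
    obtain ⟨w, hwball, hwW⟩ := mem_closure_iff.mp hpc (ball p (r₀/4)) isOpen_ball
      (mem_ball_self (by positivity))
    obtain ⟨δ, hδ, hδsub, hδzero⟩ := hwW
    refine ⟨r₀/2, by positivity, (ball_subset_ball (by linarith)).trans hsub₀, ?_⟩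
    intro q hq
    rcases eq_or_ne q w with rfl | hqw
    · exact hδzero q (mem_ball_self hδ)
    set φ : ℂ → E := lineMap' w (q - w) with hφ
    have hφc : Continuous φ := (lineMap'_diff w (q - w)).continuous
    set D : Set ℂ := φ ⁻¹' (ball p r₀) with hD
    have hDo : IsOpen D := isOpen_ball.preimage hφc
    have hDconv : Convex ℝ D := lineMap'_convex_preimage (convex_ball p r₀) w (q - w)
    have hφ0 : φ 0 = w := by simp [hφ, lineMap']
    have hφ1 : φ 1 = q := by simp [hφ, lineMap']
    have h0D : (0 : ℂ) ∈ D := by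
      simp only [hD, Set.mem_preimage, hφ0]
      exact ball_subset_ball (by linarith) hwball
    have h1D : (1 : ℂ) ∈ D := by
      simp only [hD, Set.mem_preimage, hφ1]
      exact ball_subset_ball (by linarith) hq
    have hgd : DifferentiableOn ℂ (f ∘ φ) D :=
      hf.comp ((lineMap'_diff w (q - w)).differentiableOn) (fun t ht => hsub₀ ht)
    have hev : (f ∘ φ) =ᶠ[𝓝 (0 : ℂ)] 0 := by
      rw [Filter.EventuallyEq, Metric.eventually_nhds_iff]
      have hqwn : (0:ℝ) < ‖q - w‖ := norm_pos_iff.mpr (sub_ne_zero.mpr hqw)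
      refine ⟨δ / ‖q - w‖, by positivity, fun t ht => ?_⟩
      apply hδzero
      simp only [hφ, lineMap', mem_ball, dist_self_add_left]
      rw [norm_smul]
      calc ‖t‖ * ‖q - w‖ < (δ / ‖q - w‖) * ‖q - w‖ := by
            apply mul_lt_mul_of_pos_right _ hqwn
            simpa [dist_eq_norm] using ht
        _ = δ := div_mul_cancel₀ _ (ne_of_gt hqwn)
    have := (hgd.analyticOnNhd hDo).eqOn_zero_of_preconnected_of_eventuallyEq_zero
      hDconv.isPreconnected h0D hev h1D
    simpa [hφ1] using this
  have hzW : z ∈ W := ⟨r, hr, hball, hcon⟩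
  have hcover : Ω ⊆ W ∪ (closure W)ᶜ := fun p hp =>
    (em (p ∈ closure W)).elim (fun h => Or.inl (hclosure p hp h)) Or.inr
  have h2 : (Ω ∩ (closure W)ᶜ).Nonempty := by
    refine ⟨z0, hz0, fun h => hfz0 ?_⟩
    obtain ⟨ρ, hρ, _, hzero⟩ := hclosure z0 hz0 h
    exact hzero z0 (mem_ball_self hρ)
  obtain ⟨q, hqΩ, hqW, hqc⟩ :=
    hΩc W (closure W)ᶜ hWo isClosed_closure.isOpen_compl hcover ⟨z, hz, hzW⟩ h2
  exact hqc (subset_closure hqW)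

end NoBall
/-- **Complement of the zero set is a domain.** Let `n ≥ 2`, `Ω ⊆ ℂⁿ` a domain and `f`
holomorphic on `Ω`, not identically zero. Then `Ω \ N(f)` is a nonempty connected open
set, where `N(f) = {z ∈ Ω : f z = 0}`. -/
theorem complement_zero_set_domain (n : ℕ) (hn : 2 ≤ n) (Ω : Set (Fin n → ℂ))
    (hΩopen : IsOpen Ω) (hΩconn : IsConnected Ω)
    (f : (Fin n → ℂ) → ℂ) (hf : DifferentiableOn ℂ f Ω)
    (hfne : ∃ z ∈ Ω, f z ≠ 0) :
    IsOpen (Ω \ {z ∈ Ω | f z = 0}) ∧ IsConnected (Ω \ {z ∈ Ω | f z = 0}) := by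
  obtain ⟨z0, hz0, hfz0⟩ := hfne
  set S := Ω \ {z ∈ Ω | f z = 0} with hS
  have hSmem : ∀ w, w ∈ S ↔ w ∈ Ω ∧ f w ≠ 0 := by
    intro w
    simp only [hS, Set.mem_diff, Set.mem_setOf_eq]
    tauto
  have hSeq : S = Ω ∩ f ⁻¹' ({0}ᶜ) := by
    ext w
    rw [hSmem]
    simp
  have hSopen : IsOpen S := by
    rw [hSeq]
    exact hf.continuousOn.isOpen_inter_preimage hΩopen isOpen_compl_singleton
  have hSsubΩ : S ⊆ Ω := Set.diff_subset
  refine ⟨hSopen, ⟨⟨z0, (hSmem z0).mpr ⟨hz0, hfz0⟩⟩, ?_⟩⟩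
  intro u v hu hv hsub hSu hSv
  by_contra hemp
  rw [Set.not_nonempty_iff_eq_empty] at hemp
  -- the local sets
  have hkey : ∀ u0 : Set (Fin n → ℂ),
      IsOpen {p | ∃ ρ > 0, ball p ρ ⊆ Ω ∧ {w ∈ ball p ρ | f w ≠ 0} ⊆ u0} := by
    intro u0
    rw [Metric.isOpen_iff]
    rintro p ⟨ρ, hρ, hsubΩ, hsubu⟩
    refine ⟨ρ, hρ, fun q hq => ?_⟩
    have hsub' : ball q (ρ - dist q p) ⊆ ball p ρ := ball_subset_ball' (by linarith)
    refine ⟨ρ - dist q p, by simp [mem_ball] at hq; linarith, hsub'.trans hsubΩ, ?_⟩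
    exact fun w hw => hsubu ⟨hsub' hw.1, hw.2⟩
  set U' : Set (Fin n → ℂ) :=
    {p | ∃ ρ > 0, ball p ρ ⊆ Ω ∧ {w ∈ ball p ρ | f w ≠ 0} ⊆ u} with hU'
  set V' : Set (Fin n → ℂ) :=
    {p | ∃ ρ > 0, ball p ρ ⊆ Ω ∧ {w ∈ ball p ρ | f w ≠ 0} ⊆ v} with hV'
  have hcover : Ω ⊆ U' ∪ V' := by
    intro p hp
    obtain ⟨ρ, hρ, hsubΩ⟩ := Metric.isOpen_iff.mp hΩopen p hp
    set P := {w ∈ ball p ρ | f w ≠ 0} with hP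
    obtain ⟨w0, hw0b, hw0f⟩ := exists_ne_zero_in_ball hΩopen hΩconn.isPreconnected hf
      hz0 hfz0 hp hρ hsubΩ
    have hPpc : IsPathConnected P := by
      refine ⟨w0, ⟨hw0b, hw0f⟩, ?_⟩
      intro y hy
      exact slice_joinedIn (convex_ball p ρ) isOpen_ball (hf.mono hsubΩ) hw0b hy.1 hw0f hy.2
    have hPS : P ⊆ S := fun w hw => (hSmem w).mpr ⟨hsubΩ hw.1, hw.2⟩
    have hPuv : P ⊆ u ∪ v := hPS.trans hsub
    have : P ⊆ u ∨ P ⊆ v := by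
      by_contra hcon
      push_neg at hcon
      have h1 : (P ∩ u).Nonempty := by
        rcases Set.not_subset.mp hcon.2 with ⟨w, hwP, hwv⟩
        rcases hPuv hwP with h | h
        · exact ⟨w, hwP, h⟩
        · exact absurd h hwv
      have h2 : (P ∩ v).Nonempty := by
        rcases Set.not_subset.mp hcon.1 with ⟨w, hwP, hwu⟩
        rcases hPuv hwP with h | h
        · exact absurd h hwu
        · exact ⟨w, hwP, h⟩
      obtain ⟨w, hwP, hwuv⟩ :=
        hPpc.isConnected.isPreconnected u v hu hv hPuv h1 h2
      have : w ∈ S ∩ (u ∩ v) := ⟨hPS hwP, hwuv⟩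
      rw [hemp] at this
      exact this
    rcases this with h | h
    · exact Or.inl ⟨ρ, hρ, hsubΩ, h⟩
    · exact Or.inr ⟨ρ, hρ, hsubΩ, h⟩
  have hU'nonempty : (Ω ∩ U').Nonempty := by
    obtain ⟨s, hsS, hsu⟩ := hSu
    obtain ⟨ρ, hρ, hsubSu⟩ := Metric.isOpen_iff.mp (hSopen.inter hu) s ⟨hsS, hsu⟩
    refine ⟨s, hSsubΩ hsS, ρ, hρ, fun w hw => hSsubΩ (hsubSu hw).1, ?_⟩
    exact fun w hw => (hsubSu hw.1).2
  have hV'nonempty : (Ω ∩ V').Nonempty := by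
    obtain ⟨s, hsS, hsv⟩ := hSv
    obtain ⟨ρ, hρ, hsubSv⟩ := Metric.isOpen_iff.mp (hSopen.inter hv) s ⟨hsS, hsv⟩
    refine ⟨s, hSsubΩ hsS, ρ, hρ, fun w hw => hSsubΩ (hsubSv hw).1, ?_⟩
    exact fun w hw => (hsubSv hw.1).2
  obtain ⟨p, hpΩ, ⟨ρ1, hρ1, hsub1, hu1⟩, ⟨ρ2, hρ2, hsub2, hv1⟩⟩ :=
    hΩconn.isPreconnected U' V' (hkey u) (hkey v) hcover hU'nonempty hV'nonempty
  have hρ : (0:ℝ) < min ρ1 ρ2 := lt_min hρ1 hρ2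
  have hsubm : ball p (min ρ1 ρ2) ⊆ Ω := (ball_subset_ball (min_le_left _ _)).trans hsub1
  obtain ⟨w, hwb, hwf⟩ := exists_ne_zero_in_ball hΩopen hΩconn.isPreconnected hf
    hz0 hfz0 hpΩ hρ hsubm
  have hwu : w ∈ u := hu1 ⟨ball_subset_ball (min_le_left _ _) hwb, hwf⟩
  have hwv : w ∈ v := hv1 ⟨ball_subset_ball (min_le_right _ _) hwb, hwf⟩
  have : w ∈ S ∩ (u ∩ v) := ⟨(hSmem w).mpr ⟨hsubm hwb, hwf⟩, hwu, hwv⟩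
  rw [hemp] at this
  exact this
end

section
/- The power series f(z) = Σ_{n=0}^{∞} z^{2ⁿ} converges and defines a holomorphic function on the open unit disc Δ ⊆ ℂ, and f admits no holomorphic extension beyond Δ: for every connected open set U ⊆ ℂ with Δ ⊆ U and U ≠ Δ, there is no holomorphic function g on U with g = f on Δ. In other words, every boundary point of Δ is a singular point of f. -/
open Complex Metric Finset Real

noncomputable def Flac (z : ℂ) : ℂ := ∑' k : ℕ, z ^ (2 ^ k)

lemma lac_summable {z : ℂ} (hz : ‖z‖ < 1) : Summable fun k : ℕ => z ^ (2 ^ k) := by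
  apply Summable.of_norm_bounded (g := fun k => ‖z‖ ^ k)
    (summable_geometric_of_lt_one (norm_nonneg z) hz)
  intro k
  rw [norm_pow]
  exact pow_le_pow_of_le_one (norm_nonneg z) hz.le (Nat.lt_two_pow_self (n := k)).le

lemma lac_summable_real {s : ℝ} (h0 : 0 ≤ s) (h1 : s < 1) :
    Summable fun k : ℕ => s ^ (2 ^ k) := by
  apply Summable.of_norm_bounded (g := fun k => s ^ k)
    (summable_geometric_of_lt_one h0 h1)
  intro k
  rw [Real.norm_eq_abs, _root_.abs_pow, _root_.abs_of_nonneg h0]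
  exact pow_le_pow_of_le_one h0 h1.le (Nat.lt_two_pow_self (n := k)).le

lemma lac_diffOn : DifferentiableOn ℂ Flac (ball (0 : ℂ) 1) := by
  intro z hz
  rw [mem_ball_zero_iff] at hz
  set r : ℝ := (1 + ‖z‖) / 2 with hr
  have h0r : 0 ≤ r := by positivity
  have hr1 : r < 1 := by rw [hr]; linarith
  have hzr : ‖z‖ < r := by rw [hr]; linarith
  have hd : DifferentiableOn ℂ Flac (ball (0 : ℂ) r) := by
    apply differentiableOn_tsum_of_summable_norm
      (u := fun k : ℕ => r ^ k) (summable_geometric_of_lt_one h0r hr1)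
      (fun k => (differentiable_pow _).differentiableOn) isOpen_ball
    intro k x hx
    rw [mem_ball_zero_iff] at hx
    rw [norm_pow]
    calc ‖x‖ ^ 2 ^ k ≤ r ^ 2 ^ k := pow_le_pow_left₀ (norm_nonneg x) hx.le _
      _ ≤ r ^ k := pow_le_pow_of_le_one h0r hr1.le (Nat.lt_two_pow_self (n := k)).le
  exact (hd.differentiableAt (isOpen_ball.mem_nhds (by rwa [mem_ball_zero_iff]))).differentiableWithinAt

lemma lac_funEq {z : ℂ} (hz : ‖z‖ < 1) (m : ℕ) :
    Flac z = (∑ k ∈ Finset.range m, z ^ (2 ^ k)) + Flac (z ^ (2 ^ m)) := by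
  have h1 : Flac (z ^ 2 ^ m) = ∑' k : ℕ, z ^ 2 ^ (k + m) := by
    unfold Flac
    congr 1
    ext k
    rw [← pow_mul, ← pow_add, add_comm m k]
  rw [h1]
  show (∑' k : ℕ, z ^ 2 ^ k) = _
  rw [← Summable.sum_add_tsum_nat_add m (lac_summable hz)]

lemma lac_blowup (M : ℝ) : ∃ r₁ : ℝ, 0 ≤ r₁ ∧ r₁ < 1 ∧
    ∀ s : ℝ, r₁ ≤ s → 0 ≤ s → s < 1 → M ≤ (Flac (s : ℂ)).re := by
  obtain ⟨N, hN⟩ : ∃ N : ℕ, 2 * M ≤ N := ⟨⌈2 * M⌉₊, Nat.le_ceil _⟩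
  refine ⟨(1/2 : ℝ) ^ (((2 ^ N : ℕ) : ℝ)⁻¹), Real.rpow_nonneg (by norm_num) _,
    Real.rpow_lt_one (by norm_num) (by norm_num) (by positivity), ?_⟩
  intro s hs1 hs0 hs2
  have hpow : ((1/2 : ℝ) ^ (((2 ^ N : ℕ) : ℝ)⁻¹)) ^ (2 ^ N : ℕ) = 1/2 :=
    Real.rpow_inv_natCast_pow (by norm_num) (by positivity)
  have hhalf : (1/2 : ℝ) ≤ s ^ (2 ^ N) := by
    rw [← hpow]
    exact pow_le_pow_left₀ (Real.rpow_nonneg (by norm_num) _) hs1 _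
  have hre : (Flac (s : ℂ)).re = ∑' k : ℕ, s ^ (2 ^ k) := by
    unfold Flac
    have : ∀ k : ℕ, ((s : ℂ)) ^ (2 ^ k) = ((s ^ (2 ^ k) : ℝ) : ℂ) := by
      intro k; push_cast; ring
    simp_rw [this, ← Complex.ofReal_tsum, Complex.ofReal_re]
  rw [hre]
  have hsum := lac_summable_real hs0 hs2
  calc M ≤ (N + 1 : ℝ) * (1 / 2) := by push_cast; linarith
    _ ≤ (N + 1 : ℝ) * s ^ (2 ^ N) := by
        apply mul_le_mul_of_nonneg_left hhalf (by positivity)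
    _ ≤ ∑ k ∈ Finset.range (N + 1), s ^ (2 ^ k) := by
        have : ∀ k ∈ Finset.range (N + 1), s ^ (2 ^ N) ≤ s ^ (2 ^ k) := by
          intro k hk
          exact pow_le_pow_of_le_one hs0 hs2.le
            (Nat.pow_le_pow_right (by norm_num) (Nat.lt_succ_iff.mp (Finset.mem_range.mp hk)))
        calc (N + 1 : ℝ) * s ^ (2 ^ N)
            = ∑ _k ∈ Finset.range (N + 1), s ^ (2 ^ N) := by
              rw [Finset.sum_const, Finset.card_range, nsmul_eq_mul]; push_cast; ring
          _ ≤ _ := Finset.sum_le_sum this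
    _ ≤ ∑' k : ℕ, s ^ (2 ^ k) :=
        Summable.sum_le_tsum _ (fun k _ => by positivity) hsum

lemma lac_boundary_pt {U : Set ℂ} (hUc : IsConnected U)
    (hsub : ball (0:ℂ) 1 ⊆ U) (hne : U ≠ ball (0:ℂ) 1) : ∃ w ∈ U, ‖w‖ = 1 := by
  by_contra hcon
  push_neg at hcon
  have h1 : U ⊆ ball (0:ℂ) 1 ∪ {z : ℂ | 1 < ‖z‖} := by
    intro x hx
    rcases lt_trichotomy ‖x‖ 1 with h | h | h
    · left; rwa [mem_ball_zero_iff]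
    · exact absurd h (hcon x hx)
    · right; exact h
  have h2 : (U ∩ {z : ℂ | 1 < ‖z‖}).Nonempty := by
    obtain ⟨x, hxU, hxn⟩ : ∃ x, x ∈ U ∧ x ∉ ball (0:ℂ) 1 := by
      by_contra h
      push_neg at h
      exact hne (Set.Subset.antisymm h hsub)
    refine ⟨x, hxU, ?_⟩
    rw [mem_ball_zero_iff, not_lt] at hxn
    exact lt_of_le_of_ne hxn (Ne.symm (hcon x hxU))
  have h3 := hUc.isPreconnected _ _ isOpen_ball
    (isOpen_lt continuous_const continuous_norm) h1
    ⟨0, hsub (mem_ball_self one_pos), mem_ball_self one_pos⟩ h2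
  obtain ⟨z, _, hz1, hz2⟩ := h3
  rw [mem_ball_zero_iff] at hz1
  exact absurd hz2 (not_lt.mpr hz1.le)

lemma lac_near_root {w : ℂ} (hw : ‖w‖ = 1) (m : ℕ) (hm : Real.pi ≤ 2 ^ m) :
    ∃ ζ : ℂ, ζ ^ (2 ^ m) = 1 ∧ ‖ζ‖ = 1 ∧ ‖ζ - w‖ ≤ 2 * Real.pi / 2 ^ m := by
  have hpi := Real.pi_pos
  have h2m : (0:ℝ) < 2 ^ m := by positivity
  set θ := w.arg with hθ
  have habs : ‖w‖ = 1 := hw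
  have hwexp : Complex.exp (θ * Complex.I) = w := by
    conv_rhs => rw [← Complex.norm_mul_exp_arg_mul_I w]
    rw [habs]
    simp [hθ]
  set j : ℤ := round (θ * 2 ^ m / (2 * π)) with hj
  set φ : ℝ := 2 * π * j / 2 ^ m with hφ
  refine ⟨Complex.exp (φ * Complex.I), ?_, ?_, ?_⟩
  · rw [← Complex.exp_nat_mul]
    rw [← Complex.exp_int_mul_two_pi_mul_I j]
    congr 1
    have h2mc : ((2:ℂ) ^ m) ≠ 0 := pow_ne_zero _ two_ne_zero
    rw [hφ]
    push_cast
    field_simp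
  · simp [Complex.norm_exp]
  · have hjb : |(j : ℝ) - θ * 2 ^ m / (2 * π)| ≤ 1 / 2 := by
      rw [abs_sub_comm]; exact abs_sub_round _
    have hφθ : |φ - θ| ≤ π / 2 ^ m := by
      have heq : φ - θ = (2 * π / 2 ^ m) * ((j : ℝ) - θ * 2 ^ m / (2 * π)) := by
        rw [hφ]; field_simp
      rw [heq, abs_mul, abs_of_pos (by positivity)]
      calc 2 * π / 2 ^ m * |(j : ℝ) - θ * 2 ^ m / (2 * π)|
          ≤ 2 * π / 2 ^ m * (1 / 2) := by
            exact mul_le_mul_of_nonneg_left hjb (by positivity)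
        _ = π / 2 ^ m := by ring
    have hsmall : ‖(↑(φ - θ) : ℂ) * Complex.I‖ ≤ 1 := by
      rw [norm_mul, Complex.norm_I, Complex.norm_real, Real.norm_eq_abs, mul_one]
      calc |φ - θ| ≤ π / 2 ^ m := hφθ
        _ ≤ 1 := by rw [div_le_one h2m]; exact hm
    have hfac : Complex.exp (φ * Complex.I) - w
        = Complex.exp (θ * Complex.I) * (Complex.exp ((↑(φ - θ) : ℂ) * Complex.I) - 1) := by
      rw [mul_sub, mul_one, ← Complex.exp_add, ← hwexp]
      congr 2
      push_cast
      ring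
    rw [hfac, norm_mul, hwexp, hw, one_mul]
    calc ‖Complex.exp ((↑(φ - θ) : ℂ) * Complex.I) - 1‖
        ≤ 2 * ‖(↑(φ - θ) : ℂ) * Complex.I‖ := Complex.norm_exp_sub_one_le hsmall
      _ = 2 * |φ - θ| := by rw [norm_mul, Complex.norm_I, Complex.norm_real, Real.norm_eq_abs, mul_one]
      _ ≤ 2 * (π / 2 ^ m) := by linarith
      _ = 2 * π / 2 ^ m := by ring

/-- **The lacunary series `Σ z^(2ⁿ)` is singular at every boundary point.** The series
converges and defines a holomorphic function on the open unit disc, which admits no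
holomorphic extension to any strictly larger connected open set. -/
theorem lacunary_series_no_extension :
    (∀ z ∈ Metric.ball (0 : ℂ) 1, Summable fun k : ℕ => z ^ (2 ^ k)) ∧
    DifferentiableOn ℂ (fun z : ℂ => ∑' k : ℕ, z ^ (2 ^ k)) (Metric.ball (0 : ℂ) 1) ∧
    ∀ U : Set ℂ, IsOpen U → IsConnected U → Metric.ball (0 : ℂ) 1 ⊆ U →
      U ≠ Metric.ball (0 : ℂ) 1 →
      ¬ ∃ g : ℂ → ℂ, DifferentiableOn ℂ g U ∧
        Set.EqOn g (fun z : ℂ => ∑' k : ℕ, z ^ (2 ^ k)) (Metric.ball (0 : ℂ) 1) := by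
  refine ⟨fun z hz => lac_summable (mem_ball_zero_iff.mp hz), lac_diffOn, ?_⟩
  rintro U hUo hUc hsub hne ⟨g, hg, heq⟩
  have hpi := Real.pi_pos
  obtain ⟨w, hwU, hw1⟩ := lac_boundary_pt hUc hsub hne
  have hcont : ContinuousAt g w := hg.continuousOn.continuousAt (hUo.mem_nhds hwU)
  set M : ℝ := ‖g w‖ + 1 with hM
  obtain ⟨δ, hδ, hball⟩ : ∃ δ > 0, ∀ x : ℂ, dist x w < δ → x ∈ U ∧ ‖g x‖ < M := by
    have h1 : ∀ᶠ x in nhds w, ‖g x‖ < M :=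
      hcont.norm.eventually_lt_const (by rw [hM]; linarith)
    have h2 : ∀ᶠ x in nhds w, x ∈ U := hUo.mem_nhds hwU
    exact Metric.eventually_nhds_iff.mp (h1.and h2) |>.imp
      (fun δ hδ => ⟨hδ.1, fun x hx => ⟨(hδ.2 hx).2, (hδ.2 hx).1⟩⟩)
  obtain ⟨m, hm⟩ : ∃ m : ℕ, max (8 * π / δ) π < 2 ^ m :=
    pow_unbounded_of_one_lt _ one_lt_two
  have h2m : (0:ℝ) < 2 ^ m := by positivity
  have hmπ : π ≤ 2 ^ m := ((le_max_right _ _).trans hm.le)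
  have hmδ : 2 * π / 2 ^ m < δ / 4 := by
    have h8 : 8 * π / δ < 2 ^ m := (le_max_left _ _).trans_lt hm
    rw [div_lt_iff₀ hδ] at h8
    rw [div_lt_div_iff₀ h2m (by norm_num)]
    nlinarith
  obtain ⟨r₁, hr₁0, hr₁1, hblow⟩ := lac_blowup (M + m)
  set t : ℝ := max r₁ (max (1 - δ / 4) (1 / 2)) with ht
  have ht0 : (0:ℝ) < t := lt_of_lt_of_le (by norm_num)
    ((le_max_right _ _).trans (le_max_right _ _))
  have ht1 : t < 1 := by
    rw [ht]
    apply max_lt hr₁1 (max_lt (by linarith) (by norm_num))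
  have htδ : 1 - δ / 4 ≤ t := (le_max_left _ _).trans (le_max_right _ _)
  have htr₁ : r₁ ≤ t := le_max_left _ _
  set r : ℝ := t ^ (((2 ^ m : ℕ) : ℝ)⁻¹) with hr
  have hr0 : 0 < r := Real.rpow_pos_of_pos ht0 _
  have hr1 : r < 1 := Real.rpow_lt_one ht0.le ht1 (by positivity)
  have htler : t ≤ r := by
    calc t = t ^ (1:ℝ) := (Real.rpow_one t).symm
      _ ≤ r := Real.rpow_le_rpow_of_exponent_ge ht0 ht1.le
          (inv_le_one_of_one_le₀ (by exact_mod_cast Nat.one_le_two_pow))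
  have hrpow : r ^ (2 ^ m : ℕ) = t :=
    Real.rpow_inv_natCast_pow ht0.le (by positivity)
  obtain ⟨ζ, hζpow, hζ1, hζw⟩ := lac_near_root hw1 m hmπ
  set z : ℂ := (r : ℂ) * ζ with hz
  have hzn : ‖z‖ = r := by
    rw [hz, norm_mul, hζ1, mul_one, Complex.norm_real, Real.norm_eq_abs, abs_of_pos hr0]
  have hzlt : ‖z‖ < 1 := by rw [hzn]; exact hr1
  have hzball : z ∈ ball (0:ℂ) 1 := mem_ball_zero_iff.mpr hzlt
  have hzw : dist z w < δ := by
    have h1 : ‖z - ζ‖ = 1 - r := by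
      have : z - ζ = ((r : ℂ) - 1) * ζ := by rw [hz]; ring
      rw [this, norm_mul, hζ1, mul_one]
      rw [show ((r:ℂ) - 1) = ((r - 1 : ℝ) : ℂ) by push_cast; ring]
      rw [Complex.norm_real, Real.norm_eq_abs, abs_of_nonpos (by linarith)]
      ring
    calc dist z w = ‖z - w‖ := dist_eq_norm _ _
      _ ≤ ‖z - ζ‖ + ‖ζ - w‖ := by
          rw [show z - w = (z - ζ) + (ζ - w) by ring]; exact norm_add_le _ _
      _ ≤ (1 - r) + 2 * π / 2 ^ m := by rw [h1]; linarith
      _ < δ / 4 + δ / 4 := by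
          have : 1 - r ≤ δ / 4 := by linarith
          linarith
      _ < δ := by linarith
  have hgz : ‖g z‖ < M := (hball z hzw).2
  have hgF : g z = Flac z := heq hzball
  have hzpm : z ^ (2 ^ m) = ((t : ℝ) : ℂ) := by
    rw [hz, mul_pow, hζpow, mul_one, ← Complex.ofReal_pow, hrpow]
  have hfe := lac_funEq hzlt m
  rw [hzpm] at hfe
  have hFt : M + m ≤ (Flac ((t : ℝ) : ℂ)).re := hblow t htr₁ ht0.le ht1
  have hS : ‖∑ k ∈ Finset.range m, z ^ (2 ^ k)‖ ≤ m := by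
    calc ‖∑ k ∈ Finset.range m, z ^ (2 ^ k)‖
        ≤ ∑ k ∈ Finset.range m, ‖z ^ (2 ^ k)‖ := norm_sum_le _ _
      _ ≤ ∑ _k ∈ Finset.range m, (1:ℝ) := by
          apply Finset.sum_le_sum
          intro k _
          rw [norm_pow]
          exact pow_le_one₀ (norm_nonneg _) hzlt.le
      _ = m := by simp
  have hchain : M + m ≤ ‖g z‖ + m := by
    calc M + m ≤ (Flac ((t : ℝ) : ℂ)).re := hFt
      _ ≤ ‖Flac ((t : ℝ) : ℂ)‖ := Complex.re_le_norm _
      _ = ‖Flac z - ∑ k ∈ Finset.range m, z ^ (2 ^ k)‖ := by rw [hfe]; congr 1; ring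
      _ ≤ ‖Flac z‖ + ‖∑ k ∈ Finset.range m, z ^ (2 ^ k)‖ := norm_sub_le _ _
      _ ≤ ‖Flac z‖ + m := by linarith
      _ = ‖g z‖ + m := by rw [hgF]
  linarith
end

section
/- Let Ω ⊊ ℂ be a domain. Then there exists a set E ⊆ Ω which has no accumulation point in Ω (i.e., E is discrete and closed in Ω) and whose closure in ℂ contains the boundary ∂Ω of Ω. -/
open Metric Set


/-- **A discrete set accumulating exactly at the boundary.** Let `Ω ⊊ ℂ` be a domain.
Then there exists a set `E ⊆ Ω` with no accumulation point in `Ω` whose closure in `ℂ`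
contains the boundary `∂Ω`. -/
theorem discrete_set_accumulating_at_boundary (Ω : Set ℂ)
    (hΩopen : IsOpen Ω) (hΩconn : IsConnected Ω) (hΩne : Ω ≠ Set.univ) :
    ∃ E : Set ℂ, E ⊆ Ω ∧ (∀ p ∈ Ω, ¬ AccPt p (Filter.principal E)) ∧
      frontier Ω ⊆ closure E := by
  obtain ⟨t, hts, htc, hst⟩ :=
    (TopologicalSpace.IsSeparable.of_separableSpace (frontier Ω)).exists_countable_dense_subset
  rcases t.eq_empty_or_nonempty with rfl | htne
  · refine ⟨∅, empty_subset _, ?_, ?_⟩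
    · intro p _ h
      rw [Filter.principal_empty] at h
      simp [AccPt] at h
      exact h.ne rfl
    · simpa using hst
  obtain ⟨f, hf⟩ := htc.exists_eq_range htne
  set p : ℕ → ℂ := fun k => f (Nat.unpair k).1 with hp
  have hpf : ∀ k, p k ∈ frontier Ω := by
    intro k
    apply hts
    rw [hf]
    exact mem_range_self _
  -- choose points x k ∈ Ω close to p k
  have hex : ∀ k : ℕ, ∃ x ∈ Ω, dist x (p k) < 1 / (k + 1) := by
    intro k
    have h1 : p k ∈ closure Ω := (hpf k).1
    rcases Metric.mem_closure_iff.1 h1 (1 / (k + 1)) (by positivity) with ⟨x, hx, hd⟩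
    exact ⟨x, hx, by rwa [dist_comm]⟩
  choose x hxΩ hxd using hex
  refine ⟨Set.range x, range_subset_iff.2 hxΩ, ?_, ?_⟩
  · -- no accumulation point in Ω
    intro z hz hacc
    have hcne : Ωᶜ.Nonempty := Set.nonempty_compl.2 hΩne
    set r := Metric.infDist z Ωᶜ with hrdef
    have hr : 0 < r := by
      rw [← (hΩopen.isClosed_compl.notMem_iff_infDist_pos hcne)]
      simp [hz]
    -- points of range x near z have small index
    obtain ⟨N, hN⟩ := exists_nat_ge (2 / r)
    have key : ∀ k : ℕ, dist (x k) z < r / 2 → k < N := by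
      intro k hk
      by_contra hkN
      push_neg at hkN
      have hpk : p k ∈ Ωᶜ := by
        have := hpf k
        rw [hΩopen.frontier_eq] at this
        exact this.2
      have h1 : Metric.infDist (x k) Ωᶜ ≤ dist (x k) (p k) :=
        Metric.infDist_le_dist_of_mem hpk
      have h2 : r ≤ Metric.infDist (x k) Ωᶜ + dist z (x k) :=
        Metric.infDist_le_infDist_add_dist
      have h3 : r / 2 < Metric.infDist (x k) Ωᶜ := by
        rw [dist_comm] at hk
        linarith
      have h4 : Metric.infDist (x k) Ωᶜ < 1 / (k + 1) := lt_of_le_of_lt h1 (hxd k)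
      have h5 : (1 : ℝ) / (k + 1) ≤ 1 / (N + 1) := by
        apply one_div_le_one_div_of_le (by positivity)
        have : (N : ℝ) ≤ k := by exact_mod_cast hkN
        linarith
      have h6 : (1 : ℝ) / (N + 1) ≤ r / 2 := by
        rw [div_le_div_iff₀ (by positivity) (by norm_num)]
        have : 2 / r ≤ N := hN
        rw [div_le_iff₀ hr] at this
        linarith
      linarith
    set F : Set ℂ := x '' {k | k < N} with hF
    have hFfin : F.Finite := (Set.finite_Iio N).image x
    have hFz : (F \ {z}).Finite := hFfin.diff
    have hzF : z ∉ (F \ {z}) := fun h => h.2 rfl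
    obtain ⟨ε, hε, hball⟩ := Metric.isOpen_iff.1 hFz.isClosed.isOpen_compl z hzF
    set δ := min ε (r / 2) with hδ
    have hδ0 : 0 < δ := lt_min hε (by linarith)
    rw [accPt_iff_nhds] at hacc
    obtain ⟨y, ⟨hyb, hyE⟩, hyz⟩ := hacc (Metric.ball z δ) (Metric.ball_mem_nhds z hδ0)
    obtain ⟨k, rfl⟩ := hyE
    have hk1 : dist (x k) z < r / 2 := lt_of_lt_of_le (Metric.mem_ball.1 hyb) (min_le_right _ _)
    have hkF : x k ∈ F := ⟨k, key k hk1, rfl⟩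
    have : x k ∈ Metric.ball z ε := Metric.mem_ball.2 (lt_of_lt_of_le (Metric.mem_ball.1 hyb) (min_le_left _ _))
    exact hball this ⟨hkF, hyz⟩
  · -- frontier ⊆ closure of range x
    refine hst.trans (closure_minimal ?_ isClosed_closure)
    rw [hf]
    intro q hq
    rcases hq with ⟨m, rfl⟩
    rw [Metric.mem_closure_iff]
    intro ε hε
    obtain ⟨n, hn⟩ := exists_nat_one_div_lt hε
    set k := Nat.pair m n with hk
    refine ⟨x k, mem_range_self _, ?_⟩
    have h1 : dist (x k) (p k) < 1 / (k + 1) := hxd k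
    have h2 : p k = f m := by simp [hp, hk]
    have h3 : (1 : ℝ) / (k + 1) ≤ 1 / (n + 1) := by
      apply one_div_le_one_div_of_le (by positivity)
      have h := Nat.right_le_pair m n
      have : (n : ℝ) ≤ (k : ℝ) := by exact_mod_cast h
      linarith
    rw [dist_comm, ← h2]
    calc dist (x k) (p k) < 1 / (k+1) := h1
    _ ≤ 1 / (n+1) := h3
    _ < ε := hn
end
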